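/- arXiv:1210.6951 — 5 statements merged into one kernel-verified Lean document; each statement's English description precedes it below -/
import Mathlib

section
/- Let n ≥ 3 and let X be a set of 3-element subsets of Fin n such that every triangle of Fin n admits a ℤ/2-filling contained in X. Let λ ≥ 0 be such that ‖dβ‖²_X ≥ λ·‖β‖² for every coclosed 1-cochain β. Let φ be a map from Fin n to a real inner product space such that Area(φτ) ≥ Fill_X(τ) for every triangle τ of Fin n. Then Σ_{f ∈ X} Area(φf)² ≥ (λ / (3(n−2))) · Σ_τ Fill_X(τ)², where the second sum runs over all triangles τ of Fin n. -/
open Finset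

/-- `y` is a ℤ/2-filling of the triangle `τ`: `y` consists of 3-element subsets, and for
every edge `e` the number of members of `y` containing `e` has the same parity as the
indicator that `e ⊆ τ`. -/
def IsFilling {n : ℕ} (y : Finset (Finset (Fin n))) (τ : Finset (Fin n)) : Prop :=
  (∀ f ∈ y, f.card = 3) ∧
  ∀ e : Finset (Fin n), e.card = 2 →
    (y.filter (fun f => e ⊆ f)).card % 2 = (if e ⊆ τ then 1 else 0)

/-- `Fill_X(τ)`: the minimal cardinality of a ℤ/2-filling of `τ` contained in `X`. -/
noncomputable def fillIn {n : ℕ} (X : Finset (Finset (Fin n))) (τ : Finset (Fin n)) : ℕ :=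
  sInf {m | ∃ y ⊆ X, IsFilling y τ ∧ y.card = m}

/-- The coboundary of a 1-cochain evaluated on a triangle `{u,v,w}` with `u < v < w`. -/
def dOne {n : ℕ} (β : Fin n → Fin n → ℝ) (f : Finset (Fin n)) : ℝ :=
  match f.sort (· ≤ ·) with
  | [u, v, w] => β u v - β u w + β v w
  | _ => 0

/-- `‖β‖² = ∑_{u<v} β(u,v)²`. -/
def normSq {n : ℕ} (β : Fin n → Fin n → ℝ) : ℝ :=
  ∑ u : Fin n, ∑ v ∈ Finset.univ.filter (fun v => u < v), β u v ^ 2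

/-- The area of the affine image of a triangle `τ = {a,b,c}` (with `a < b < c`) under `φ`. -/
noncomputable def triArea {n : ℕ} {H : Type*} [NormedAddCommGroup H] [InnerProductSpace ℝ H]
    (φ : Fin n → H) (τ : Finset (Fin n)) : ℝ :=
  match τ.sort (· ≤ ·) with
  | [a, b, c] =>
      (1/2) * Real.sqrt (‖φ b - φ a‖ ^ 2 * ‖φ c - φ a‖ ^ 2 -
        (inner ℝ (φ b - φ a) (φ c - φ a) : ℝ) ^ 2)
  | _ => 0


lemma aux_count {n : ℕ} {a b : Fin n} (hab : a ≠ b) :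
    ((univ.filter (fun τ : Finset (Fin n) => τ.card = 3)).filter
      (fun τ => a ∈ τ ∧ b ∈ τ)).card = n - 2 := by
  have himg : ((univ.filter (fun τ : Finset (Fin n) => τ.card = 3)).filter
      (fun τ => a ∈ τ ∧ b ∈ τ)) =
      Finset.image (fun w => insert w ({a, b} : Finset (Fin n))) ({a, b}ᶜ : Finset (Fin n)) := by
    ext τ
    simp only [Finset.mem_filter, Finset.mem_univ, true_and, Finset.mem_image,
      Finset.mem_compl, Finset.mem_insert, Finset.mem_singleton]
    constructor
    · rintro ⟨h3, ha, hb⟩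
      have hsub : ({a, b} : Finset (Fin n)) ⊆ τ := by
        intro z hz; simp only [Finset.mem_insert, Finset.mem_singleton] at hz
        rcases hz with rfl | rfl <;> assumption
      have hcard : (τ \ {a, b}).card = 1 := by
        rw [Finset.card_sdiff_of_subset hsub, h3, Finset.card_pair hab]
      obtain ⟨w, hw⟩ := Finset.card_eq_one.mp hcard
      have hwmem : w ∈ τ \ ({a, b} : Finset (Fin n)) := by rw [hw]; simp
      rw [Finset.mem_sdiff] at hwmem
      refine ⟨w, ?_, ?_⟩
      · intro hc; apply hwmem.2; simp only [Finset.mem_insert, Finset.mem_singleton]; exact hc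
      · rw [Finset.insert_eq, ← hw, Finset.sdiff_union_of_subset hsub]
    · rintro ⟨w, hw, rfl⟩
      have hwa : w ≠ a := fun hc => hw (Or.inl hc)
      have hwb : w ≠ b := fun hc => hw (Or.inr hc)
      refine ⟨?_, ?_, ?_⟩
      · rw [Finset.card_insert_of_notMem (by simp [hwa, hwb]), Finset.card_pair hab]
      · simp
      · simp
  rw [himg]
  rw [Finset.card_image_of_injOn]
  · rw [Finset.card_compl, Fintype.card_fin, Finset.card_pair hab]
  · intro w hw w' hw' heq
    have hmem : w ∈ insert w' ({a, b} : Finset (Fin n)) := by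
      have : w ∈ insert w ({a, b} : Finset (Fin n)) := Finset.mem_insert_self _ _
      simpa only [heq] using this
    rcases Finset.mem_insert.mp hmem with h | h
    · exact h
    · simp only [Finset.coe_compl, Set.mem_compl_iff, Finset.mem_coe, Finset.mem_insert,
        Finset.mem_singleton] at hw
      exact absurd (by simpa using h) hw

lemma aux_normSq_prod {n : ℕ} (γ : Fin n → Fin n → ℝ) :
    normSq γ = ∑ p ∈ (univ ×ˢ univ).filter (fun p : Fin n × Fin n => p.1 < p.2),
      γ p.1 p.2 ^ 2 := by
  rw [normSq, Finset.sum_filter, Finset.sum_product]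
  simp_rw [Finset.sum_filter]


lemma aux_sort3 {n : ℕ} {f : Finset (Fin n)} (h : f.card = 3) :
    ∃ a b c : Fin n, a < b ∧ b < c ∧ f = {a, b, c} ∧ f.sort (· ≤ ·) = [a, b, c] := by
  have hlen : (f.sort (· ≤ ·)).length = 3 := by rw [Finset.length_sort]; exact h
  obtain ⟨a, b, c, habc⟩ : ∃ a b c, f.sort (· ≤ ·) = [a, b, c] := by
    rcases e : f.sort (· ≤ ·) with _ | ⟨a, t⟩
    · rw [e] at hlen; simp at hlen
    rcases t with _ | ⟨b, t⟩
    · rw [e] at hlen; simp at hlen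
    rcases t with _ | ⟨c, t⟩
    · rw [e] at hlen; simp at hlen
    rcases t with _ | ⟨d, t⟩
    · exact ⟨a, b, c, rfl⟩
    · rw [e] at hlen; simp at hlen
  have hsorted := Finset.pairwise_sort (s := f) (r := (· ≤ ·))
  rw [habc] at hsorted
  have hnodup := Finset.sort_nodup (s := f) (r := (· ≤ ·))
  rw [habc] at hnodup
  simp [List.pairwise_cons] at hsorted
  simp at hnodup
  have htf := Finset.sort_toFinset (s := f) (r := (· ≤ ·))
  rw [habc] at htf
  refine ⟨a, b, c, ?_, ?_, ?_, habc⟩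
  · exact lt_of_le_of_ne hsorted.1.1 hnodup.1.1
  · exact lt_of_le_of_ne hsorted.2 hnodup.2
  · rw [← htf]; simp

lemma aux_CS {n : ℕ} (γ : Fin n → Fin n → ℝ) :
    ∑ τ ∈ univ.filter (fun τ : Finset (Fin n) => τ.card = 3), dOne γ τ ^ 2 ≤
      3 * ((n : ℝ) - 2) * normSq γ := by
  by_cases hn : 2 ≤ n
  swap
  · have h1 : univ.filter (fun τ : Finset (Fin n) => τ.card = 3) = ∅ := by
      refine Finset.filter_eq_empty_iff.mpr fun τ _ => ?_
      intro hc
      have h2 := Finset.card_le_card (Finset.subset_univ τ)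
      rw [hc, Finset.card_univ, Fintype.card_fin] at h2
      omega
    have h2 : normSq γ = 0 := by
      rw [normSq]
      refine Finset.sum_eq_zero fun u _ => Finset.sum_eq_zero fun v hv => ?_
      rw [Finset.mem_filter] at hv
      exfalso
      have hlt : (u : ℕ) < v := hv.2
      have hvn : (v : ℕ) < n := v.isLt
      omega
    rw [h1, h2]
    simp
  set P := (univ ×ˢ univ).filter (fun p : Fin n × Fin n => p.1 < p.2) with hP
  have step1 : ∀ τ ∈ univ.filter (fun τ : Finset (Fin n) => τ.card = 3),
      dOne γ τ ^ 2 ≤ 3 * ∑ p ∈ P.filter (fun p => p.1 ∈ τ ∧ p.2 ∈ τ), γ p.1 p.2 ^ 2 := by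
    intro τ hτ
    rw [Finset.mem_filter] at hτ
    obtain ⟨a, b, c, hab, hbc, hfe, hsort⟩ := aux_sort3 hτ.2
    have hab' : (a : ℕ) < b := hab
    have hbc' : (b : ℕ) < c := hbc
    have hset : P.filter (fun p => p.1 ∈ τ ∧ p.2 ∈ τ) =
        ({(a, b), (a, c), (b, c)} : Finset (Fin n × Fin n)) := by
      ext p
      simp only [hP, Finset.mem_filter, Finset.mem_product, Finset.mem_univ, true_and,
        Finset.mem_insert, Finset.mem_singleton, hfe, Prod.ext_iff, Fin.ext_iff, Fin.lt_def]
      omega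
    have hd : dOne γ τ = γ a b - γ a c + γ b c := by
      simp only [dOne, hsort]
    have hne1 : ((a, b) : Fin n × Fin n) ∉ ({(a, c), (b, c)} : Finset (Fin n × Fin n)) := by
      simp only [Finset.mem_insert, Finset.mem_singleton, Prod.ext_iff, Fin.ext_iff]
      omega
    have hne2 : ((a, c) : Fin n × Fin n) ∉ ({(b, c)} : Finset (Fin n × Fin n)) := by
      simp only [Finset.mem_singleton, Prod.ext_iff, Fin.ext_iff]
      omega
    rw [hset, Finset.sum_insert hne1, Finset.sum_insert hne2, Finset.sum_singleton, hd]
    nlinarith [sq_nonneg (γ a b + γ a c), sq_nonneg (γ a c + γ b c), sq_nonneg (γ a b - γ b c)]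
  calc ∑ τ ∈ univ.filter (fun τ : Finset (Fin n) => τ.card = 3), dOne γ τ ^ 2
      ≤ ∑ τ ∈ univ.filter (fun τ : Finset (Fin n) => τ.card = 3),
          3 * ∑ p ∈ P.filter (fun p => p.1 ∈ τ ∧ p.2 ∈ τ), γ p.1 p.2 ^ 2 :=
        Finset.sum_le_sum step1
    _ = 3 * ∑ τ ∈ univ.filter (fun τ : Finset (Fin n) => τ.card = 3),
          ∑ p ∈ P, (if p.1 ∈ τ ∧ p.2 ∈ τ then γ p.1 p.2 ^ 2 else 0) := by
        rw [← Finset.mul_sum]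
        congr 1
        refine Finset.sum_congr rfl fun τ _ => ?_
        rw [Finset.sum_filter]
    _ = 3 * ∑ p ∈ P, ∑ τ ∈ univ.filter (fun τ : Finset (Fin n) => τ.card = 3),
          (if p.1 ∈ τ ∧ p.2 ∈ τ then γ p.1 p.2 ^ 2 else 0) := by
        rw [Finset.sum_comm]
    _ = 3 * ∑ p ∈ P, ((n : ℝ) - 2) * γ p.1 p.2 ^ 2 := by
        congr 1
        refine Finset.sum_congr rfl fun p hp => ?_
        rw [← Finset.sum_filter]
        have hpp : p.1 ≠ p.2 := by
          rw [hP, Finset.mem_filter] at hp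
          exact ne_of_lt hp.2
        rw [Finset.sum_const, aux_count hpp, nsmul_eq_mul]
        congr 1
        rw [Nat.cast_sub hn]
        norm_num
    _ = 3 * ((n : ℝ) - 2) * normSq γ := by
        rw [← Finset.mul_sum, aux_normSq_prod γ, mul_assoc, hP]

def auxB {n m : ℕ} (x : Fin m → Fin n → ℝ) (i j : Fin m) : Fin n → Fin n → ℝ :=
  fun u v => x i u * x j v - x j u * x i v

noncomputable def auxBeta {n m : ℕ} (x : Fin m → Fin n → ℝ) (i j : Fin m) :
    Fin n → Fin n → ℝ :=
  fun u v => auxB x i j u v - (∑ w, auxB x i j w v) / n + (∑ w, auxB x i j w u) / n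

lemma auxBeta_antisymm {n m : ℕ} (x : Fin m → Fin n → ℝ) (i j : Fin m) :
    ∀ u v, auxBeta x i j u v = - auxBeta x i j v u := by
  intro u v
  unfold auxBeta auxB
  ring

lemma auxB_sum_sum {n m : ℕ} (x : Fin m → Fin n → ℝ) (i j : Fin m) :
    (∑ v : Fin n, ∑ w : Fin n, auxB x i j w v) = 0 := by
  have h2 : ∀ v w : Fin n, auxB x i j w v = - auxB x i j v w := by
    intro v w; unfold auxB; ring
  have h3 : (∑ v : Fin n, ∑ w : Fin n, auxB x i j w v)
      = - ∑ v : Fin n, ∑ w : Fin n, auxB x i j v w := by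
    rw [← Finset.sum_neg_distrib]
    refine Finset.sum_congr rfl fun v _ => ?_
    rw [← Finset.sum_neg_distrib]
    exact Finset.sum_congr rfl fun w _ => h2 v w
  have h4 : (∑ v : Fin n, ∑ w : Fin n, auxB x i j v w)
      = ∑ v : Fin n, ∑ w : Fin n, auxB x i j w v := Finset.sum_comm
  linarith [h3, h4]

lemma auxBeta_coclosed {n m : ℕ} (hn : 0 < n) (x : Fin m → Fin n → ℝ) (i j : Fin m) :
    ∀ v : Fin n, ∑ u ∈ Finset.univ.erase v, auxBeta x i j u v = 0 := by
  intro v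
  have hnn : (n : ℝ) ≠ 0 := Nat.cast_ne_zero.mpr hn.ne'
  have hvv : auxBeta x i j v v = 0 := by unfold auxBeta auxB; ring
  rw [Finset.sum_erase_eq_sub (Finset.mem_univ v), hvv, sub_zero]
  unfold auxBeta
  rw [Finset.sum_add_distrib, Finset.sum_sub_distrib, Finset.sum_const, Finset.card_univ,
    Fintype.card_fin, nsmul_eq_mul, ← Finset.sum_div, auxB_sum_sum]
  field_simp
  ring

lemma auxBeta_dOne {n m : ℕ} (x : Fin m → Fin n → ℝ) (i j : Fin m)
    {f : Finset (Fin n)} (h3 : f.card = 3) :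
    dOne (auxBeta x i j) f = dOne (auxB x i j) f := by
  obtain ⟨a, b, c, _, _, _, hsort⟩ := aux_sort3 h3
  simp only [dOne, hsort]
  unfold auxBeta
  ring

lemma aux_face {n : ℕ} {H : Type*} [NormedAddCommGroup H] [InnerProductSpace ℝ H]
    (φ : Fin n → H) {m : ℕ} (x : Fin m → Fin n → ℝ)
    (hx : ∀ a b c : Fin n, (inner ℝ (φ b - φ a) (φ c - φ a) : ℝ) =
      ∑ i, (x i b - x i a) * (x i c - x i a))
    {f : Finset (Fin n)} (h3 : f.card = 3) :
    ∑ i, ∑ j, dOne (auxB x i j) f ^ 2 = 8 * triArea φ f ^ 2 := by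
  obtain ⟨a, b, c, hab, hbc, hfe, hsort⟩ := aux_sort3 h3
  set P : Fin m → ℝ := fun i => x i b - x i a with hPdef
  set Q : Fin m → ℝ := fun i => x i c - x i a with hQdef
  have hd : ∀ i j, dOne (auxB x i j) f = P i * Q j - P j * Q i := by
    intro i j
    simp only [dOne, hsort, auxB, hPdef, hQdef]
    ring
  have hPQ : ∑ i, P i * Q i = (inner ℝ (φ b - φ a) (φ c - φ a) : ℝ) := (hx a b c).symm
  have hPP : ∑ i, P i * P i = ‖φ b - φ a‖ ^ 2 := by
    rw [← real_inner_self_eq_norm_sq]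
    exact (hx a b b).symm
  have hQQ : ∑ i, Q i * Q i = ‖φ c - φ a‖ ^ 2 := by
    rw [← real_inner_self_eq_norm_sq]
    exact (hx a c c).symm
  have hL : ∑ i, ∑ j, (P i * Q j - P j * Q i) ^ 2 =
      2 * ((∑ i, P i * P i) * (∑ i, Q i * Q i) - (∑ i, P i * Q i) ^ 2) := by
    have e : ∀ i j : Fin m, (P i * Q j - P j * Q i) ^ 2 =
        P i * P i * (Q j * Q j) - 2 * (P i * Q i * (P j * Q j)) +
          Q i * Q i * (P j * P j) := fun i j => by ring
    rw [Finset.sum_congr rfl fun i _ => Finset.sum_congr rfl fun j _ => e i j]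
    simp only [Finset.sum_add_distrib, Finset.sum_sub_distrib, ← Finset.mul_sum,
      ← Finset.sum_mul]
    ring
  have htri : triArea φ f = 1 / 2 * Real.sqrt (‖φ b - φ a‖ ^ 2 * ‖φ c - φ a‖ ^ 2 -
      (inner ℝ (φ b - φ a) (φ c - φ a) : ℝ) ^ 2) := by
    simp only [triArea, hsort]
  have hnonneg : 0 ≤ ‖φ b - φ a‖ ^ 2 * ‖φ c - φ a‖ ^ 2 -
      (inner ℝ (φ b - φ a) (φ c - φ a) : ℝ) ^ 2 := by
    have h1 := abs_real_inner_le_norm (φ b - φ a) (φ c - φ a)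
    have h2 : |(inner ℝ (φ b - φ a) (φ c - φ a) : ℝ)| ^ 2 ≤ (‖φ b - φ a‖ * ‖φ c - φ a‖) ^ 2 :=
      pow_le_pow_left₀ (abs_nonneg _) h1 2
    rw [sq_abs] at h2
    nlinarith [h2]
  rw [htri, mul_pow, Real.sq_sqrt hnonneg]
  simp only [hd]
  rw [hL, hPP, hQQ, hPQ]
  ring

theorem stmt0 {n : ℕ} (hn : 3 ≤ n)
    {H : Type*} [NormedAddCommGroup H] [InnerProductSpace ℝ H]
    (X : Finset (Finset (Fin n))) (hX3 : ∀ f ∈ X, f.card = 3)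
    (hfill : ∀ τ : Finset (Fin n), τ.card = 3 → ∃ y ⊆ X, IsFilling y τ)
    (lam : ℝ) (hlam : 0 ≤ lam)
    (hspec : ∀ β : Fin n → Fin n → ℝ, (∀ u v, β u v = - β v u) →
      (∀ v : Fin n, ∑ u ∈ Finset.univ.erase v, β u v = 0) →
      ∑ f ∈ X, dOne β f ^ 2 ≥ lam * normSq β)
    (φ : Fin n → H)
    (hφ : ∀ τ : Finset (Fin n), τ.card = 3 → triArea φ τ ≥ (fillIn X τ : ℝ)) :
    ∑ f ∈ X, triArea φ f ^ 2 ≥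
      (lam / (3 * ((n : ℝ) - 2))) *
        ∑ τ ∈ Finset.univ.filter (fun τ : Finset (Fin n) => τ.card = 3),
          (fillIn X τ : ℝ) ^ 2 := by
  classical
  have hn3 : (3 : ℝ) ≤ (n : ℝ) := by exact_mod_cast hn
  have hn2 : (0 : ℝ) < 3 * ((n : ℝ) - 2) := by linarith
  -- coordinates for φ
  obtain ⟨m, x, hx⟩ : ∃ (m : ℕ) (x : Fin m → Fin n → ℝ), ∀ u v : Fin n,
      (inner ℝ (φ u) (φ v) : ℝ) = ∑ i, x i u * x i v := by
    set V := Submodule.span ℝ (Set.range φ) with hV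
    haveI : FiniteDimensional ℝ V := FiniteDimensional.span_of_finite ℝ (Set.finite_range φ)
    set ob := stdOrthonormalBasis ℝ V with hob
    refine ⟨Module.finrank ℝ V,
      fun i v => ob.repr ⟨φ v, Submodule.subset_span ⟨v, rfl⟩⟩ i, fun u v => ?_⟩
    have h1 : (inner ℝ (φ u) (φ v) : ℝ) =
        (inner ℝ (⟨φ u, Submodule.subset_span ⟨u, rfl⟩⟩ : V)
          (⟨φ v, Submodule.subset_span ⟨v, rfl⟩⟩ : V) : ℝ) := rfl
    rw [h1, ← ob.repr.inner_map_map]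
    rw [PiLp.inner_apply]
    simp [RCLike.inner_apply]
    exact Finset.sum_congr rfl fun i _ => mul_comm _ _
  have hxd : ∀ a b c : Fin n, (inner ℝ (φ b - φ a) (φ c - φ a) : ℝ) =
      ∑ i, (x i b - x i a) * (x i c - x i a) := by
    intro a b c
    rw [inner_sub_left, inner_sub_right, inner_sub_right, hx, hx, hx, hx,
      ← Finset.sum_sub_distrib, ← Finset.sum_sub_distrib, ← Finset.sum_sub_distrib]
    exact Finset.sum_congr rfl fun i _ => by ring
  set S3 := Finset.univ.filter (fun τ : Finset (Fin n) => τ.card = 3) with hS3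
  -- key spectral inequality for each (i,j)
  have hkey : ∀ i j : Fin m,
      lam * ∑ τ ∈ S3, dOne (auxB x i j) τ ^ 2 ≤
        3 * ((n : ℝ) - 2) * ∑ f ∈ X, dOne (auxB x i j) f ^ 2 := by
    intro i j
    have hsp := hspec (auxBeta x i j) (auxBeta_antisymm x i j)
      (auxBeta_coclosed (by omega) x i j)
    have hCS := aux_CS (auxBeta x i j)
    have hXr : ∑ f ∈ X, dOne (auxBeta x i j) f ^ 2 = ∑ f ∈ X, dOne (auxB x i j) f ^ 2 :=
      Finset.sum_congr rfl fun f hf => by rw [auxBeta_dOne x i j (hX3 f hf)]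
    have hSr : ∑ τ ∈ S3, dOne (auxBeta x i j) τ ^ 2 = ∑ τ ∈ S3, dOne (auxB x i j) τ ^ 2 :=
      Finset.sum_congr rfl fun τ hτ => by
        rw [auxBeta_dOne x i j (Finset.mem_filter.mp hτ).2]
    calc lam * ∑ τ ∈ S3, dOne (auxB x i j) τ ^ 2
        = lam * ∑ τ ∈ S3, dOne (auxBeta x i j) τ ^ 2 := by rw [hSr]
      _ ≤ lam * (3 * ((n : ℝ) - 2) * normSq (auxBeta x i j)) := by
          exact mul_le_mul_of_nonneg_left hCS hlam
      _ = 3 * ((n : ℝ) - 2) * (lam * normSq (auxBeta x i j)) := by ring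
      _ ≤ 3 * ((n : ℝ) - 2) * ∑ f ∈ X, dOne (auxBeta x i j) f ^ 2 :=
          mul_le_mul_of_nonneg_left hsp (le_of_lt hn2)
      _ = 3 * ((n : ℝ) - 2) * ∑ f ∈ X, dOne (auxB x i j) f ^ 2 := by rw [hXr]
  -- swap sums and use the area identities
  have hswapS : ∑ i, ∑ j, ∑ τ ∈ S3, dOne (auxB x i j) τ ^ 2
      = ∑ τ ∈ S3, (8 * triArea φ τ ^ 2) := by
    calc ∑ i, ∑ j, ∑ τ ∈ S3, dOne (auxB x i j) τ ^ 2
        = ∑ i, ∑ τ ∈ S3, ∑ j, dOne (auxB x i j) τ ^ 2 :=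
          Finset.sum_congr rfl fun i _ => Finset.sum_comm
      _ = ∑ τ ∈ S3, ∑ i, ∑ j, dOne (auxB x i j) τ ^ 2 := Finset.sum_comm
      _ = ∑ τ ∈ S3, (8 * triArea φ τ ^ 2) := Finset.sum_congr rfl fun τ hτ =>
          aux_face φ x hxd (Finset.mem_filter.mp hτ).2
  have hswapX : ∑ i, ∑ j, ∑ f ∈ X, dOne (auxB x i j) f ^ 2
      = ∑ f ∈ X, (8 * triArea φ f ^ 2) := by
    calc ∑ i, ∑ j, ∑ f ∈ X, dOne (auxB x i j) f ^ 2
        = ∑ i, ∑ f ∈ X, ∑ j, dOne (auxB x i j) f ^ 2 :=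
          Finset.sum_congr rfl fun i _ => Finset.sum_comm
      _ = ∑ f ∈ X, ∑ i, ∑ j, dOne (auxB x i j) f ^ 2 := Finset.sum_comm
      _ = ∑ f ∈ X, (8 * triArea φ f ^ 2) := Finset.sum_congr rfl fun f hf =>
          aux_face φ x hxd (hX3 f hf)
  have hsum : lam * ∑ τ ∈ S3, (8 * triArea φ τ ^ 2) ≤
      3 * ((n : ℝ) - 2) * ∑ f ∈ X, (8 * triArea φ f ^ 2) := by
    have h1 : ∑ i, ∑ j, (lam * ∑ τ ∈ S3, dOne (auxB x i j) τ ^ 2) ≤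
        ∑ i, ∑ j, (3 * ((n : ℝ) - 2) * ∑ f ∈ X, dOne (auxB x i j) f ^ 2) :=
      Finset.sum_le_sum fun i _ => Finset.sum_le_sum fun j _ => hkey i j
    have h2 : ∑ i, ∑ j, (lam * ∑ τ ∈ S3, dOne (auxB x i j) τ ^ 2) =
        lam * ∑ τ ∈ S3, (8 * triArea φ τ ^ 2) := by
      rw [← hswapS, Finset.mul_sum]
      refine Finset.sum_congr rfl fun i _ => ?_
      rw [Finset.mul_sum]
    have h3 : ∑ i, ∑ j, (3 * ((n : ℝ) - 2) * ∑ f ∈ X, dOne (auxB x i j) f ^ 2) =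
        3 * ((n : ℝ) - 2) * ∑ f ∈ X, (8 * triArea φ f ^ 2) := by
      rw [← hswapX, Finset.mul_sum]
      refine Finset.sum_congr rfl fun i _ => ?_
      rw [Finset.mul_sum]
    rw [h2, h3] at h1
    exact h1
  have hfill2 : ∑ τ ∈ S3, (fillIn X τ : ℝ) ^ 2 ≤ ∑ τ ∈ S3, triArea φ τ ^ 2 := by
    refine Finset.sum_le_sum fun τ hτ => ?_
    have h1 := hφ τ (Finset.mem_filter.mp hτ).2
    exact pow_le_pow_left₀ (Nat.cast_nonneg _) h1 2
  have h8S : ∑ τ ∈ S3, (8 * triArea φ τ ^ 2) = 8 * ∑ τ ∈ S3, triArea φ τ ^ 2 := by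
    rw [Finset.mul_sum]
  have h8X : ∑ f ∈ X, (8 * triArea φ f ^ 2) = 8 * ∑ f ∈ X, triArea φ f ^ 2 := by
    rw [Finset.mul_sum]
  rw [h8S, h8X] at hsum
  have hmain : lam * ∑ τ ∈ S3, (fillIn X τ : ℝ) ^ 2 ≤
      3 * ((n : ℝ) - 2) * ∑ f ∈ X, triArea φ f ^ 2 := by
    have h4 : lam * ∑ τ ∈ S3, (fillIn X τ : ℝ) ^ 2 ≤ lam * ∑ τ ∈ S3, triArea φ τ ^ 2 :=
      mul_le_mul_of_nonneg_left hfill2 hlam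
    nlinarith [hsum]
  rw [ge_iff_le, div_mul_eq_mul_div, div_le_iff₀ hn2]
  calc lam * ∑ τ ∈ Finset.univ.filter (fun τ : Finset (Fin n) => τ.card = 3),
        (fillIn X τ : ℝ) ^ 2
      = lam * ∑ τ ∈ S3, (fillIn X τ : ℝ) ^ 2 := by rw [hS3]
    _ ≤ 3 * ((n : ℝ) - 2) * ∑ f ∈ X, triArea φ f ^ 2 := hmain
    _ = (∑ f ∈ X, triArea φ f ^ 2) * (3 * ((n : ℝ) - 2)) := by ring
end

section
/- Let n ≥ 3, let g assign a nonnegative real number to each 2-element subset of Fin n, and let F assign a nonnegative real number to each 3-element subset of Fin n. Suppose that for every 3-element subset τ = {a,b,c} of Fin n one has g({a,b}) + g({a,c}) + g({b,c}) ≥ F(τ). Then (n−2)·Σ_e g(e)² ≥ (1/3)·Σ_τ F(τ)², where the first sum runs over all 2-element subsets e of Fin n and the second sum runs over all 3-element subsets τ of Fin n. -/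
open Finset

theorem stmt1 {n : ℕ} (hn : 3 ≤ n) (g F : Finset (Fin n) → ℝ)
    (hg : ∀ e : Finset (Fin n), e.card = 2 → 0 ≤ g e)
    (hF : ∀ τ : Finset (Fin n), τ.card = 3 → 0 ≤ F τ)
    (h : ∀ a b c : Fin n, a ≠ b → a ≠ c → b ≠ c →
      g {a, b} + g {a, c} + g {b, c} ≥ F {a, b, c}) :
    ((n : ℝ) - 2) * ∑ e ∈ Finset.univ.filter (fun e : Finset (Fin n) => e.card = 2), g e ^ 2 ≥
      (1/3) * ∑ τ ∈ Finset.univ.filter (fun τ : Finset (Fin n) => τ.card = 3), F τ ^ 2 := by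
  classical
  set S2 := Finset.univ.filter (fun e : Finset (Fin n) => e.card = 2) with hS2
  set S3 := Finset.univ.filter (fun τ : Finset (Fin n) => τ.card = 3) with hS3
  have hcount : ∀ e ∈ S2, (S3.filter (fun τ => e ⊆ τ)).card = n - 2 := by
    intro e he
    simp only [hS2, mem_filter, mem_univ, true_and] at he
    have himg : S3.filter (fun τ => e ⊆ τ) = (eᶜ).image (fun x => insert x e) := by
      ext τ
      simp only [mem_filter, mem_image, mem_compl, hS3, mem_univ, true_and]
      constructor
      · rintro ⟨hc, hsub⟩
        have hne : (τ \ e).Nonempty := by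
          rw [← card_pos, card_sdiff_of_subset hsub, hc, he]; norm_num
        obtain ⟨x, hx⟩ := hne
        rw [mem_sdiff] at hx
        refine ⟨x, hx.2, ?_⟩
        apply Finset.eq_of_subset_of_card_le
        · intro y hy
          rcases mem_insert.mp hy with rfl | hy
          · exact hx.1
          · exact hsub hy
        · rw [card_insert_of_notMem hx.2, he, hc]
      · rintro ⟨x, hx, rfl⟩
        exact ⟨by rw [card_insert_of_notMem hx, he], subset_insert _ _⟩
    rw [himg, card_image_of_injOn, card_compl, he, Fintype.card_fin]
    intro x hx y hy hxy
    simp only [coe_compl, Set.mem_compl_iff, mem_coe] at hx hy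
    have hxy' : insert x e = insert y e := hxy
    have hxm : x ∈ insert y e := hxy' ▸ mem_insert_self x e
    rcases mem_insert.mp hxm with hh | hh
    · exact hh
    · exact absurd hh hx
  have key : ∑ τ ∈ S3, F τ ^ 2 ≤ ∑ τ ∈ S3, 3 * ∑ e ∈ S2, (if e ⊆ τ then g e ^ 2 else 0) := by
    apply Finset.sum_le_sum
    intro τ hτ
    simp only [hS3, mem_filter, mem_univ, true_and] at hτ
    obtain ⟨a, b, c, hab, hac, hbc, rfl⟩ := Finset.card_eq_three.mp hτ
    have h1 : g {a,b} + g {a,c} + g {b,c} ≥ F {a,b,c} := h a b c hab hac hbc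
    have hga : 0 ≤ g {a,b} := hg _ (card_pair hab)
    have hgb : 0 ≤ g {a,c} := hg _ (card_pair hac)
    have hgc : 0 ≤ g {b,c} := hg _ (card_pair hbc)
    have hFnn : 0 ≤ F {a,b,c} := hF _ hτ
    have hsq : F {a,b,c} ^ 2 ≤ 3 * (g {a,b}^2 + g {a,c}^2 + g {b,c}^2) := by
      nlinarith [sq_nonneg (g {a,b} - g {a,c}), sq_nonneg (g {a,b} - g {b,c}),
        sq_nonneg (g {a,c} - g {b,c}), mul_self_le_mul_self hFnn h1]
    refine hsq.trans ?_
    have hc1 : c ∉ ({a, b} : Finset (Fin n)) := by simp [Ne.symm hac, Ne.symm hbc]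
    have hb1 : b ∉ ({a, c} : Finset (Fin n)) := by simp [Ne.symm hab, hbc]
    have ne12 : ({a, b} : Finset (Fin n)) ≠ {a, c} := fun hE => hc1 (hE ▸ by simp)
    have ne13 : ({a, b} : Finset (Fin n)) ≠ {b, c} := fun hE => hc1 (hE ▸ by simp)
    have ne23 : ({a, c} : Finset (Fin n)) ≠ {b, c} := by
      intro hE
      have : a ∈ ({b, c} : Finset (Fin n)) := hE ▸ by simp
      rcases mem_insert.mp this with hh | hh
      · exact hab hh
      · exact hac (mem_singleton.mp hh)
    have hsubE : ({{a,b},{a,c},{b,c}} : Finset (Finset (Fin n))) ⊆ S2 := by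
      intro e he
      simp only [mem_insert, mem_singleton] at he
      simp only [hS2, mem_filter, mem_univ, true_and]
      rcases he with rfl | rfl | rfl
      · exact card_pair hab
      · exact card_pair hac
      · exact card_pair hbc
    have hEsum : ∑ e ∈ ({{a,b},{a,c},{b,c}} : Finset (Finset (Fin n))),
        (if e ⊆ ({a,b,c} : Finset (Fin n)) then g e ^ 2 else 0)
        = g {a,b}^2 + g {a,c}^2 + g {b,c}^2 := by
      rw [Finset.sum_insert (by simp [ne12, ne13]),
        Finset.sum_insert (by simp [ne23]), Finset.sum_singleton]
      have s1 : ({a,b} : Finset (Fin n)) ⊆ {a,b,c} := by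
        intro x hx; simp only [mem_insert, mem_singleton] at hx ⊢; tauto
      have s2 : ({a,c} : Finset (Fin n)) ⊆ {a,b,c} := by
        intro x hx; simp only [mem_insert, mem_singleton] at hx ⊢; tauto
      have s3 : ({b,c} : Finset (Fin n)) ⊆ {a,b,c} := by
        intro x hx; simp only [mem_insert, mem_singleton] at hx ⊢; tauto
      rw [if_pos s1, if_pos s2, if_pos s3]; ring
    have hle : g {a,b}^2 + g {a,c}^2 + g {b,c}^2
        ≤ ∑ e ∈ S2, (if e ⊆ ({a,b,c} : Finset (Fin n)) then g e ^ 2 else 0) := by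
      rw [← hEsum]
      apply Finset.sum_le_sum_of_subset_of_nonneg hsubE
      intro e _ _
      positivity
    linarith
  have hswap : ∑ τ ∈ S3, 3 * ∑ e ∈ S2, (if e ⊆ τ then g e ^ 2 else 0)
      = 3 * ((n : ℝ) - 2) * ∑ e ∈ S2, g e ^ 2 := by
    rw [← Finset.mul_sum, Finset.sum_comm]
    have : ∀ e ∈ S2, ∑ τ ∈ S3, (if e ⊆ τ then g e ^ 2 else 0)
        = ((n : ℝ) - 2) * g e ^ 2 := by
      intro e he
      rw [← Finset.sum_filter, Finset.sum_const, hcount e he, nsmul_eq_mul]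
      congr 1
      have : (2 : ℕ) ≤ n := le_trans (by norm_num) hn
      push_cast [Nat.cast_sub this]
      ring
    rw [Finset.sum_congr rfl this, ← Finset.mul_sum]
    ring
  rw [hswap] at key
  have hnn : (0:ℝ) ≤ ∑ e ∈ S2, g e ^ 2 := Finset.sum_nonneg fun e _ => by positivity
  linarith
end

section
/- Let ε > 0 and α > 0 satisfy 2α + ε < 1/2, and set p(n) = n^{ε−1}. Then the probability under the Linial–Meshulam distribution Y_{n,p(n)} of the event that there exists a set y ⊆ Y with |y| < n^α which is a ℤ/2-filling of the triangle τ₀ = {0,1,2} tends to 0 as n → ∞. -/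
open Finset

/-- The set `T_n` of all 3-element subsets of `Fin n`. -/
def triangles (n : ℕ) : Finset (Finset (Fin n)) :=
  Finset.univ.filter fun s => s.card = 3

/-- The triangle `{0, 1, 2}` in `Fin n` (for `n ≥ 3`). -/
def tri0 (n : ℕ) : Finset (Fin n) :=
  Finset.univ.filter fun v => (v : ℕ) < 3

-- The probability of the event `A` under the Linial–Meshulam distribution `Y_{n,p}`.
open Classical in
noncomputable def LMprob (n : ℕ) (p : ℝ) (A : Set (Finset (Finset (Fin n)))) : ℝ :=
  ∑ Y ∈ (triangles n).powerset,
    if Y ∈ A then p ^ Y.card * (1 - p) ^ ((triangles n).card - Y.card) else 0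

namespace LMaux

lemma sum_powerset_weight {X : Type*} [DecidableEq X] (T : Finset X) (p : ℝ) :
    ∑ Z ∈ T.powerset, p ^ Z.card * (1 - p) ^ (T.card - Z.card) = 1 := by
  calc ∑ Z ∈ T.powerset, p ^ Z.card * (1-p) ^ (T.card - Z.card)
      = ∑ Z ∈ T.powerset, (∏ _i ∈ Z, p) * ∏ _i ∈ T \ Z, (1-p) := by
        apply Finset.sum_congr rfl; intro Z hZ
        rw [Finset.prod_const, Finset.prod_const, Finset.card_sdiff_of_subset (mem_powerset.mp hZ)]
    _ = ∏ _i ∈ T, (p + (1-p)) := (Finset.prod_add _ _ T).symm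
    _ = 1 := by simp

lemma weight_nonneg {X : Type*} (T : Finset X) (p : ℝ) (hp0 : 0 ≤ p) (hp1 : p ≤ 1)
    (Z : Finset X) : 0 ≤ p ^ Z.card * (1 - p) ^ (T.card - Z.card) :=
  mul_nonneg (pow_nonneg hp0 _) (pow_nonneg (by linarith) _)

/-- probability that a fixed set `y` is contained in the random complex. -/
lemma LMprob_superset_le (n : ℕ) (p : ℝ) (hp0 : 0 ≤ p) (hp1 : p ≤ 1)
    (y : Finset (Finset (Fin n))) :
    LMprob n p {Y | y ⊆ Y} ≤ p ^ y.card := by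
  classical
  unfold LMprob
  simp only [Set.mem_setOf_eq]
  by_cases hsub : y ⊆ triangles n
  · have key : ∑ Y ∈ (triangles n).powerset,
        (if y ⊆ Y then p ^ Y.card * (1 - p) ^ ((triangles n).card - Y.card) else 0)
        = p ^ y.card := by
      rw [Finset.sum_ite, Finset.sum_const_zero, add_zero]
      have hstep : ∑ Y ∈ (triangles n).powerset.filter (fun Y => y ⊆ Y),
            p ^ Y.card * (1 - p) ^ ((triangles n).card - Y.card)
          = ∑ Z ∈ ((triangles n) \ y).powerset,
            p ^ (Z ∪ y).card * (1 - p) ^ ((triangles n).card - (Z ∪ y).card) := by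
        refine Finset.sum_nbij' (fun Y => Y \ y) (fun Z => Z ∪ y) ?_ ?_ ?_ ?_ ?_
        · intro Y hY
          simp only [Finset.mem_filter, Finset.mem_powerset] at hY
          simp only [Finset.mem_powerset]
          exact fun x hx => Finset.mem_sdiff.mpr
            ⟨hY.1 (Finset.mem_sdiff.mp hx).1, (Finset.mem_sdiff.mp hx).2⟩
        · intro Z hZ
          simp only [Finset.mem_powerset] at hZ
          simp only [Finset.mem_filter, Finset.mem_powerset]
          exact ⟨Finset.union_subset (fun x hx => (Finset.mem_sdiff.mp (hZ hx)).1) hsub,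
            Finset.subset_union_right⟩
        · intro Y hY
          simp only [Finset.mem_filter, Finset.mem_powerset] at hY
          ext x; simp only [Finset.mem_union, Finset.mem_sdiff]
          constructor
          · rintro (⟨h1, _⟩ | h); exact h1; exact hY.2 h
          · intro hx; by_cases hxy : x ∈ y
            · right; exact hxy
            · left; exact ⟨hx, hxy⟩
        · intro Z hZ
          simp only [Finset.mem_powerset] at hZ
          ext x; simp only [Finset.mem_sdiff, Finset.mem_union]
          constructor
          · rintro ⟨(h | h), h2⟩; exact h; exact absurd h h2
          · intro hx; exact ⟨Or.inl hx, fun hxy => (Finset.mem_sdiff.mp (hZ hx)).2 hxy⟩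
        · intro Y hY
          simp only [Finset.mem_filter, Finset.mem_powerset] at hY
          have : Y \ y ∪ y = Y := by
            ext x; simp only [Finset.mem_union, Finset.mem_sdiff]
            constructor
            · rintro (⟨h1, _⟩ | h); exact h1; exact hY.2 h
            · intro hx; by_cases hxy : x ∈ y
              · right; exact hxy
              · left; exact ⟨hx, hxy⟩
          rw [this]
      rw [hstep]
      have hcards : ∀ Z ∈ ((triangles n) \ y).powerset,
          p ^ (Z ∪ y).card * (1 - p) ^ ((triangles n).card - (Z ∪ y).card)
          = p ^ y.card * (p ^ Z.card * (1 - p) ^ (((triangles n) \ y).card - Z.card)) := by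
        intro Z hZ
        have hdisj : Disjoint Z y :=
          Finset.disjoint_of_subset_left (Finset.mem_powerset.mp hZ) Finset.sdiff_disjoint
        rw [Finset.card_union_of_disjoint hdisj, pow_add, Finset.card_sdiff_of_subset hsub]
        have hZc : Z.card ≤ (triangles n).card - y.card := by
          have := Finset.card_le_card (Finset.mem_powerset.mp hZ)
          rwa [Finset.card_sdiff_of_subset hsub] at this
        have h3 : (triangles n).card - (Z.card + y.card)
            = (triangles n).card - y.card - Z.card := by omega
        rw [h3]; ring
      rw [Finset.sum_congr rfl hcards, ← Finset.mul_sum, sum_powerset_weight, mul_one]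
    exact le_of_eq (by convert key using 2 with Y hY)
  · have hz : ∀ Y ∈ (triangles n).powerset,
        (if y ⊆ Y then p ^ Y.card * (1 - p) ^ ((triangles n).card - Y.card) else 0) = 0 := by
      intro Y hY
      rw [if_neg]
      intro hYA
      exact hsub (hYA.trans (Finset.mem_powerset.mp hY))
    have : (∑ Y ∈ (triangles n).powerset,
        if y ⊆ Y then p ^ Y.card * (1 - p) ^ ((triangles n).card - Y.card) else 0) = 0 :=
      Finset.sum_eq_zero hz
    refine le_trans (le_of_eq ?_) (by positivity)
    convert this using 2 with Y hY
lemma LMprob_union_bound (n : ℕ) (p : ℝ) (hp0 : 0 ≤ p) (hp1 : p ≤ 1)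
    {σ : Type*} (S : Finset σ) (E : σ → Set (Finset (Finset (Fin n))))
    (A : Set (Finset (Finset (Fin n))))
    (hA : ∀ Y, Y ∈ A → ∃ s ∈ S, Y ∈ E s) :
    LMprob n p A ≤ ∑ s ∈ S, LMprob n p (E s) := by
  classical
  have hrhs : ∑ s ∈ S, LMprob n p (E s)
      = ∑ Y ∈ (triangles n).powerset, ∑ s ∈ S,
        (if Y ∈ E s then p ^ Y.card * (1 - p) ^ ((triangles n).card - Y.card) else 0) := by
    unfold LMprob; exact Finset.sum_comm
  rw [hrhs]
  unfold LMprob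
  apply Finset.sum_le_sum
  intro Y hY
  by_cases hYA : Y ∈ A
  · obtain ⟨s, hs, hYs⟩ := hA Y hYA
    rw [if_pos hYA]
    have hterm : (if Y ∈ E s then p ^ Y.card * (1 - p) ^ ((triangles n).card - Y.card) else 0)
        = p ^ Y.card * (1 - p) ^ ((triangles n).card - Y.card) := if_pos hYs
    calc p ^ Y.card * (1 - p) ^ ((triangles n).card - Y.card)
        = (if Y ∈ E s then p ^ Y.card * (1 - p) ^ ((triangles n).card - Y.card) else 0) :=
          hterm.symm
      _ ≤ ∑ s ∈ S, (if Y ∈ E s then p ^ Y.card * (1 - p) ^ ((triangles n).card - Y.card) else 0) := by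
          apply Finset.single_le_sum (f := fun s =>
            (if Y ∈ E s then p ^ Y.card * (1 - p) ^ ((triangles n).card - Y.card) else 0)) ?_ hs
          intro i _
          split
          · exact weight_nonneg (triangles n) p hp0 hp1 Y
          · exact le_refl 0
  · rw [if_neg hYA]
    apply Finset.sum_nonneg
    intro i _
    split
    · exact weight_nonneg (triangles n) p hp0 hp1 Y
    · exact le_refl 0
variable {n : ℕ}

/-- number of members of `y` containing `e`. -/
def deg (y : Finset (Finset (Fin n))) (e : Finset (Fin n)) : ℕ :=
  (y.filter fun f => e ⊆ f).card

/-- edges of the support of `y`. -/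
def edgesF (y : Finset (Finset (Fin n))) : Finset (Finset (Fin n)) :=
  y.biUnion fun t => Finset.powersetCard 2 t

/-- vertices of the support of `y`. -/
def vertsF (y : Finset (Finset (Fin n))) : Finset (Fin n) :=
  y.biUnion id

lemma tri0_mem_iff (v : Fin n) : v ∈ tri0 n ↔ (v : ℕ) < 3 := by
  simp [tri0]

lemma tri0_card (hn : 3 ≤ n) : (tri0 n).card = 3 := by
  have : tri0 n = Finset.image (fun i : Fin 3 => Fin.castLE hn i) Finset.univ := by
    ext v
    simp only [tri0_mem_iff, Finset.mem_image, Finset.mem_univ, true_and]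
    constructor
    · intro hv; exact ⟨⟨(v : ℕ), hv⟩, by ext; simp [Fin.castLE]⟩
    · rintro ⟨i, rfl⟩; exact i.2
  rw [this, Finset.card_image_of_injective _ (Fin.castLE_injective hn), Finset.card_univ,
    Fintype.card_fin]

/-- removing an "even" subcomplex preserves the filling condition. -/
lemma isFilling_sdiff {y z : Finset (Finset (Fin n))} {τ : Finset (Fin n)}
    (hy : IsFilling y τ) (hzy : z ⊆ y)
    (hz : ∀ e : Finset (Fin n), e.card = 2 → deg z e % 2 = 0) :
    IsFilling (y \ z) τ := by
  constructor
  · intro f hf; exact hy.1 f (Finset.mem_sdiff.mp hf).1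
  · intro e he
    have hfilt : (y \ z).filter (fun f => e ⊆ f) = (y.filter fun f => e ⊆ f) \ (z.filter fun f => e ⊆ f) := by
      ext t; simp only [Finset.mem_filter, Finset.mem_sdiff]; tauto
    have hsub : z.filter (fun f => e ⊆ f) ⊆ y.filter (fun f => e ⊆ f) :=
      Finset.filter_subset_filter _ hzy
    have hcard : ((y \ z).filter (fun f => e ⊆ f)).card
        = (y.filter (fun f => e ⊆ f)).card - (z.filter (fun f => e ⊆ f)).card := by
      rw [hfilt, Finset.card_sdiff_of_subset hsub]
    rw [hcard]
    have h1 := hy.2 e he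
    have h2 := hz e he
    have hle := Finset.card_le_card hsub
    unfold deg at h2
    by_cases hτ : e ⊆ τ <;> simp only [hτ, if_true, if_false] at h1 ⊢ <;> omega

/-- existence of a minimum-cardinality filling inside `Y`. -/
lemma exists_min_filling (Y : Finset (Finset (Fin n))) (y0 : Finset (Finset (Fin n)))
    (h0 : y0 ⊆ Y) (hf0 : IsFilling y0 (tri0 n)) :
    ∃ y, y ⊆ Y ∧ IsFilling y (tri0 n) ∧ y.card ≤ y0.card ∧
      ∀ z, z ⊆ Y → IsFilling z (tri0 n) → y.card ≤ z.card := by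
  classical
  have hne : (Y.powerset.filter fun z => IsFilling z (tri0 n)).Nonempty :=
    ⟨y0, by simp [Finset.mem_powerset, h0, hf0]⟩
  obtain ⟨y, hy, hmin⟩ := Finset.exists_min_image _ (fun z => z.card) hne
  simp only [Finset.mem_filter, Finset.mem_powerset] at hy
  refine ⟨y, hy.1, hy.2, ?_, ?_⟩
  · exact hmin y0 (by simp [Finset.mem_powerset, h0, hf0])
  · intro z hz hzf
    exact hmin z (by simp [Finset.mem_powerset, hz, hzf])

/-- In `Fin n` with `3 ≤ n`, the basic vertices. -/
def bv (hn : 3 ≤ n) (i : ℕ) (h : i < 3) : Fin n := ⟨i, lt_of_lt_of_le h hn⟩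

/-- `y` is a filling of `tri0 n` of minimum cardinality among its own subsets. -/
def MinFill (y : Finset (Finset (Fin n))) : Prop :=
  IsFilling y (tri0 n) ∧ ∀ z ⊆ y, IsFilling z (tri0 n) → y.card ≤ z.card

lemma closed_empty {y : Finset (Finset (Fin n))} (hy : MinFill y)
    {z : Finset (Finset (Fin n))} (hzy : z ⊆ y)
    (hz : ∀ e : Finset (Fin n), e.card = 2 → deg z e % 2 = 0) : z = ∅ := by
  have hf := isFilling_sdiff hy.1 hzy hz
  have hle := hy.2 (y \ z) Finset.sdiff_subset hf
  rw [Finset.card_sdiff_of_subset hzy] at hle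
  have := Finset.card_le_card hzy
  have : z.card = 0 := by omega
  exact Finset.card_eq_zero.mp this

lemma bv_mem_tri0 (hn : 3 ≤ n) (i : ℕ) (h : i < 3) : bv hn i h ∈ tri0 n := by
  rw [tri0_mem_iff]; exact h

lemma bv_ne (hn : 3 ≤ n) {i j : ℕ} (hi : i < 3) (hj : j < 3) (hij : i ≠ j) :
    bv hn i hi ≠ bv hn j hj := by
  intro h
  have := congrArg (fun v : Fin n => (v : ℕ)) h
  exact hij this

lemma pair_card2 {a b : Fin n} (h : a ≠ b) : ({a, b} : Finset (Fin n)).card = 2 :=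
  Finset.card_pair h

lemma deg_odd_nonempty {y : Finset (Finset (Fin n))} {e : Finset (Fin n)}
    (h : deg y e % 2 = 1) : ∃ t ∈ y, e ⊆ t := by
  have : (y.filter fun f => e ⊆ f).Nonempty := by
    rw [Finset.nonempty_iff_ne_empty]
    intro hemp
    unfold deg at h
    rw [hemp] at h
    simp at h
  obtain ⟨t, ht⟩ := this
  exact ⟨t, (Finset.mem_filter.mp ht).1, (Finset.mem_filter.mp ht).2⟩

lemma filling_edge_deg (hn : 3 ≤ n) {y : Finset (Finset (Fin n))}
    (hy : IsFilling y (tri0 n)) {i j : ℕ} (hi : i < 3) (hj : j < 3) (hij : i ≠ j) :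
    deg y ({bv hn i hi, bv hn j hj}) % 2 = 1 := by
  have hc : ({bv hn i hi, bv hn j hj} : Finset (Fin n)).card = 2 := pair_card2 (bv_ne hn hi hj hij)
  have hsub : ({bv hn i hi, bv hn j hj} : Finset (Fin n)) ⊆ tri0 n := by
    intro x hx
    rcases Finset.mem_insert.mp hx with h | h
    · rw [h]; exact bv_mem_tri0 hn i hi
    · rw [Finset.mem_singleton.mp h]; exact bv_mem_tri0 hn j hj
  have := hy.2 _ hc
  rw [if_pos hsub] at this
  exact this

lemma tri0_cases (hn : 3 ≤ n) {a : Fin n} (ha : a ∈ tri0 n) :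
    a = bv hn 0 (by omega) ∨ a = bv hn 1 (by omega) ∨ a = bv hn 2 (by omega) := by
  rw [tri0_mem_iff] at ha
  have h3 : (a : ℕ) = 0 ∨ (a : ℕ) = 1 ∨ (a : ℕ) = 2 := by omega
  rcases h3 with h | h | h
  · left; apply Fin.ext; exact h
  · right; left; apply Fin.ext; exact h
  · right; right; apply Fin.ext; exact h

/-- the "not stuck" lemma: given a proper subfamily `s` of a minimal filling `y`,
some triangle outside `s` attaches along an edge of `tri0` or of `s`. -/
lemma exists_attach (hn : 3 ≤ n) {y : Finset (Finset (Fin n))} (hy : MinFill y)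
    {s : Finset (Finset (Fin n))} (hs : s ⊆ y) (hne : s ≠ y) :
    ∃ t ∈ y, t ∉ s ∧ ∃ e : Finset (Fin n), e.card = 2 ∧ e ⊆ t ∧
      (e ⊆ tri0 n ∨ ∃ t' ∈ s, e ⊆ t') := by
  classical
  by_contra hstuck
  push_neg at hstuck
  set z := y \ s with hzdef
  have hzy : z ⊆ y := Finset.sdiff_subset
  have hzne : z ≠ ∅ := by
    intro h
    apply hne
    apply Finset.Subset.antisymm hs
    intro t ht
    by_contra hts
    have : t ∈ z := Finset.mem_sdiff.mpr ⟨ht, hts⟩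
    rw [h] at this
    exact absurd this (Finset.notMem_empty t)
  apply hzne
  apply closed_empty hy hzy
  intro e he
  by_cases hcase : ∃ t ∈ z, e ⊆ t
  · obtain ⟨t, htz, het⟩ := hcase
    have ht := Finset.mem_sdiff.mp htz
    have hnot := hstuck t ht.1 ht.2 e he het
    have hfeq : z.filter (fun f => e ⊆ f) = y.filter (fun f => e ⊆ f) := by
      apply Finset.Subset.antisymm (Finset.filter_subset_filter _ hzy)
      intro t'' ht''
      rw [Finset.mem_filter] at ht'' ⊢
      refine ⟨Finset.mem_sdiff.mpr ⟨ht''.1, ?_⟩, ht''.2⟩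
      intro hts
      exact hnot.2 t'' hts ht''.2
    unfold deg
    rw [hfeq]
    have := hy.1.2 e he
    rw [if_neg hnot.1] at this
    exact this
  · unfold deg
    push_neg at hcase
    rw [Finset.filter_eq_empty_iff.mpr (fun t ht => fun hc => hcase t ht hc)]
    simp

/-- adjacency in the support of `y`. -/
def adjR (y : Finset (Finset (Fin n))) (a b : Fin n) : Prop := ∃ t ∈ y, a ∈ t ∧ b ∈ t

lemma reach_all (hn : 3 ≤ n) {y : Finset (Finset (Fin n))} (hy : MinFill y) :
    ∀ t ∈ y, ∀ v ∈ t, Relation.ReflTransGen (adjR y) (bv hn 0 (by omega)) v := by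
  classical
  set v0 : Fin n := bv hn 0 (by omega) with hv0
  set Reach : Fin n → Prop := Relation.ReflTransGen (adjR y) v0 with hR
  have hr0 : Reach v0 := Relation.ReflTransGen.refl
  have hstep : ∀ a b : Fin n, Reach a → adjR y a b → Reach b := by
    intro a b ha hab
    exact Relation.ReflTransGen.tail ha hab
  have hr1 : Reach (bv hn 1 (by omega)) := by
    obtain ⟨t, ht, hsub⟩ := deg_odd_nonempty (filling_edge_deg hn hy.1
      (show (0:ℕ) < 3 by omega) (show (1:ℕ) < 3 by omega) (by omega))
    exact hstep _ _ hr0 ⟨t, ht, hsub (Finset.mem_insert_self _ _),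
      hsub (Finset.mem_insert_of_mem (Finset.mem_singleton_self _))⟩
  have hr2 : Reach (bv hn 2 (by omega)) := by
    obtain ⟨t, ht, hsub⟩ := deg_odd_nonempty (filling_edge_deg hn hy.1
      (show (0:ℕ) < 3 by omega) (show (2:ℕ) < 3 by omega) (by omega))
    exact hstep _ _ hr0 ⟨t, ht, hsub (Finset.mem_insert_self _ _),
      hsub (Finset.mem_insert_of_mem (Finset.mem_singleton_self _))⟩
  have hrtri : ∀ a ∈ tri0 n, Reach a := by
    intro a ha
    rcases tri0_cases hn ha with h | h | h <;> rw [h] <;>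
      first | exact hr0 | exact hr1 | exact hr2
  set z := y.filter (fun t => ¬ ∃ x ∈ t, Reach x) with hzdef
  have hz : z = ∅ := by
    apply closed_empty hy (Finset.filter_subset _ _)
    intro e he
    by_cases hcase : ∃ t ∈ z, e ⊆ t
    · obtain ⟨t', ht'z, het'⟩ := hcase
      have ht' := Finset.mem_filter.mp ht'z
      -- e has an endpoint; if any triangle containing e had a reachable vertex, t' would too
      obtain ⟨a, hae⟩ : ∃ a, a ∈ e := by
        have : e.Nonempty := Finset.card_pos.mp (by omega)
        exact this
      have hkey : ∀ t ∈ y, e ⊆ t → t ∈ z := by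
        intro t ht het
        rw [hzdef, Finset.mem_filter]
        refine ⟨ht, ?_⟩
        rintro ⟨x, hxt, hx⟩
        apply ht'.2
        exact ⟨a, het' hae, hstep x a hx ⟨t, ht, hxt, het hae⟩⟩
      have hfeq : z.filter (fun f => e ⊆ f) = y.filter (fun f => e ⊆ f) := by
        apply Finset.Subset.antisymm (Finset.filter_subset_filter _ (Finset.filter_subset _ _))
        intro t'' ht''
        rw [Finset.mem_filter] at ht'' ⊢
        exact ⟨hkey t'' ht''.1 ht''.2, ht''.2⟩
      have hnottri : ¬ e ⊆ tri0 n := by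
        intro hetri
        exact ht'.2 ⟨a, het' hae, hrtri a (hetri hae)⟩
      unfold deg
      rw [hfeq]
      have := hy.1.2 e he
      rw [if_neg hnottri] at this
      exact this
    · unfold deg
      push_neg at hcase
      rw [Finset.filter_eq_empty_iff.mpr (fun t ht => fun hc => hcase t ht hc)]
      simp
  intro t ht v hv
  have : ∃ x ∈ t, Reach x := by
    by_contra hnot
    have : t ∈ z := Finset.mem_filter.mpr ⟨ht, hnot⟩
    rw [hz] at this
    exact absurd this (Finset.notMem_empty t)
  obtain ⟨x, hxt, hx⟩ := this
  exact hstep x v hx ⟨t, ht, hxt, hv⟩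

lemma mem_edgesF {y : Finset (Finset (Fin n))} {e : Finset (Fin n)} :
    e ∈ edgesF y ↔ ∃ t ∈ y, e ⊆ t ∧ e.card = 2 := by
  simp [edgesF, Finset.mem_biUnion, Finset.mem_powersetCard]

lemma mem_vertsF {y : Finset (Finset (Fin n))} {v : Fin n} :
    v ∈ vertsF y ↔ ∃ t ∈ y, v ∈ t := by
  simp [vertsF, Finset.mem_biUnion]

/-- the simplicial boundary map from edge-chains to vertex-chains over `ℤ/2`. -/
noncomputable def bdMap (y : Finset (Finset (Fin n))) :
    ({e // e ∈ edgesF y} → ZMod 2) →ₗ[ZMod 2] ({v // v ∈ vertsF y} → ZMod 2) where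
  toFun f := fun v => ∑ e : {e // e ∈ edgesF y},
    if (v : Fin n) ∈ (e : Finset (Fin n)) then f e else 0
  map_add' f g := by
    funext v
    simp only [Pi.add_apply]
    rw [← Finset.sum_add_distrib]
    apply Finset.sum_congr rfl
    intro e _
    by_cases h : (v : Fin n) ∈ (e : Finset (Fin n)) <;> simp [h]
  map_smul' r f := by
    funext v
    simp only [RingHom.id_apply, Pi.smul_apply, smul_eq_mul, Finset.mul_sum]
    apply Finset.sum_congr rfl
    intro e _
    by_cases h : (v : Fin n) ∈ (e : Finset (Fin n)) <;> simp [h]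

/-- the edge-chain of a triangle. -/
def tchain (y : Finset (Finset (Fin n))) (t : Finset (Fin n)) :
    {e // e ∈ edgesF y} → ZMod 2 :=
  fun e => if (e : Finset (Fin n)) ⊆ t then 1 else 0

lemma bdMap_tchain (y : Finset (Finset (Fin n))) {t : Finset (Fin n)}
    (ht : t ∈ y) (h3 : t.card = 3) : bdMap y (tchain y t) = 0 := by
  classical
  funext v
  show (∑ e : {e // e ∈ edgesF y},
    if (v : Fin n) ∈ (e : Finset (Fin n)) then tchain y t e else 0) = 0
  have hsplit : ∀ e : {e // e ∈ edgesF y},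
      (if (v : Fin n) ∈ (e : Finset (Fin n)) then tchain y t e else 0)
      = if ((v : Fin n) ∈ (e : Finset (Fin n)) ∧ (e : Finset (Fin n)) ⊆ t) then (1 : ZMod 2) else 0 := by
    intro e
    unfold tchain
    by_cases h1 : (v : Fin n) ∈ (e : Finset (Fin n)) <;>
      by_cases h2 : (e : Finset (Fin n)) ⊆ t <;> simp [h1, h2]
  rw [Finset.sum_congr rfl (fun e _ => hsplit e), Finset.univ_eq_attach,
    Finset.sum_attach (edgesF y) (fun e => if ((v : Fin n) ∈ e ∧ e ⊆ t) then (1 : ZMod 2) else 0),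
    Finset.sum_boole, ZMod.natCast_eq_zero_iff]
  by_cases hvt : (v : Fin n) ∈ t
  · have himg : (edgesF y).filter (fun e => (v : Fin n) ∈ e ∧ e ⊆ t)
        = (t.erase (v : Fin n)).image (fun w => {(v : Fin n), w}) := by
      ext e
      simp only [Finset.mem_filter, Finset.mem_image, Finset.mem_erase]
      constructor
      · rintro ⟨hE, hve, het⟩
        obtain ⟨t'', ht'', het'', hc⟩ := mem_edgesF.mp hE
        obtain ⟨x, z, hxz, rfl⟩ := Finset.card_eq_two.mp hc
        rcases Finset.mem_insert.mp hve with h | h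
        · refine ⟨z, ⟨fun hzv => hxz (hzv.trans h).symm,
            het (Finset.mem_insert_of_mem (Finset.mem_singleton_self _))⟩, by rw [h]⟩
        · rw [Finset.mem_singleton] at h
          refine ⟨x, ⟨fun hxv => hxz (hxv.trans h),
            het (Finset.mem_insert_self _ _)⟩, by rw [h]; exact Finset.pair_comm z x⟩
      · rintro ⟨w, ⟨hwv, hwt⟩, rfl⟩
        have hvw : (v : Fin n) ≠ w := fun h => hwv h.symm
        refine ⟨mem_edgesF.mpr ⟨t, ht, ?_, Finset.card_pair hvw⟩, Finset.mem_insert_self _ _, ?_⟩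
        · intro x hx
          rcases Finset.mem_insert.mp hx with h | h
          · rw [h]; exact hvt
          · rw [Finset.mem_singleton.mp h]; exact hwt
        · intro x hx
          rcases Finset.mem_insert.mp hx with h | h
          · rw [h]; exact hvt
          · rw [Finset.mem_singleton.mp h]; exact hwt
    rw [himg, Finset.card_image_of_injOn, Finset.card_erase_of_mem hvt, h3]
    intro w1 h1 w2 h2 heq
    have heq' : ({(v : Fin n), w1} : Finset (Fin n)) = {(v : Fin n), w2} := heq
    have : w1 ∈ ({(v : Fin n), w2} : Finset (Fin n)) := by
      rw [← heq']; exact Finset.mem_insert_of_mem (Finset.mem_singleton_self _)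
    rcases Finset.mem_insert.mp this with h | h
    · exact absurd h.symm (Finset.mem_erase.mp h1).1.symm
    · exact Finset.mem_singleton.mp h
  · have hempty : (edgesF y).filter (fun e => (v : Fin n) ∈ e ∧ e ⊆ t) = ∅ := by
      apply Finset.filter_eq_empty_iff.mpr
      rintro e _ ⟨hve, het⟩
      exact hvt (het hve)
    rw [hempty]
    simp

lemma zmod2_cases (a : ZMod 2) : a = 0 ∨ a = 1 := by revert a; decide

lemma tchain_indep {y : Finset (Finset (Fin n))} (hy : MinFill y) :
    LinearIndependent (ZMod 2) (fun t : {t // t ∈ y} => tchain y (t : Finset (Fin n))) := by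
  classical
  rw [Fintype.linearIndependent_iff]
  intro g hg t0
  set z : Finset (Finset (Fin n)) :=
    (y.attach.filter (fun t => g t ≠ 0)).image Subtype.val with hz
  have hzy : z ⊆ y := by
    intro t ht
    obtain ⟨t', _, rfl⟩ := Finset.mem_image.mp ht
    exact t'.2
  have hdeg : ∀ e : Finset (Fin n), e.card = 2 → deg z e % 2 = 0 := by
    intro e he
    by_cases hE : e ∈ edgesF y
    · have heval := congrFun hg ⟨e, hE⟩
      rw [Finset.sum_apply] at heval
      simp only [Pi.zero_apply] at heval
      have hterm : ∀ t : {t // t ∈ y},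
          (g t • tchain y (t : Finset (Fin n))) ⟨e, hE⟩
          = if (g t ≠ 0 ∧ e ⊆ (t : Finset (Fin n))) then (1 : ZMod 2) else 0 := by
        intro t
        show g t * tchain y (t : Finset (Fin n)) ⟨e, hE⟩ = _
        unfold tchain
        rcases zmod2_cases (g t) with h | h <;>
          by_cases h2 : e ⊆ (t : Finset (Fin n)) <;> simp [h, h2]
      rw [Finset.sum_congr rfl (fun t _ => hterm t), Finset.sum_boole] at heval
      have hdvd : (2 : ℕ) ∣ (Finset.univ.filter
          (fun t : {t // t ∈ y} => g t ≠ 0 ∧ e ⊆ (t : Finset (Fin n)))).card :=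
        (ZMod.natCast_eq_zero_iff _ 2).mp heval
      have hcardeq : deg z e = (Finset.univ.filter
          (fun t : {t // t ∈ y} => g t ≠ 0 ∧ e ⊆ (t : Finset (Fin n)))).card := by
        unfold deg
        rw [hz]
        rw [Finset.univ_eq_attach]
        rw [Finset.filter_image]
        rw [Finset.card_image_of_injOn Subtype.coe_injective.injOn]
        rw [Finset.filter_filter]
      rw [hcardeq]
      omega
    · have hempty : z.filter (fun f => e ⊆ f) = ∅ :=
        Finset.filter_eq_empty_iff.mpr
          (fun t ht hc => hE (mem_edgesF.mpr ⟨t, hzy ht, hc, he⟩))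
      unfold deg
      rw [hempty]
      simp
  have hzempty := closed_empty hy hzy hdeg
  by_contra hg0
  have : (t0 : Finset (Fin n)) ∈ z :=
    Finset.mem_image.mpr ⟨t0, Finset.mem_filter.mpr ⟨Finset.mem_attach _ _, hg0⟩, rfl⟩
  rw [hzempty] at this
  exact absurd this (Finset.notMem_empty _)

lemma chi_edge_mem_range (y : Finset (Finset (Fin n))) {a b : Fin n} (hab : a ≠ b)
    (hedge : ({a, b} : Finset (Fin n)) ∈ edgesF y) :
    (fun x : {v // v ∈ vertsF y} =>
      ((if (x : Fin n) = a then 1 else 0) + (if (x : Fin n) = b then 1 else 0) : ZMod 2))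
      ∈ LinearMap.range (bdMap y) := by
  classical
  refine ⟨(fun e' => if e' = ⟨{a, b}, hedge⟩ then 1 else 0), ?_⟩
  funext v
  show (∑ e' : {e // e ∈ edgesF y},
      if (v : Fin n) ∈ (e' : Finset (Fin n))
        then (if e' = ⟨{a, b}, hedge⟩ then (1 : ZMod 2) else 0) else 0) = _
  rw [Finset.sum_eq_single (⟨({a, b} : Finset (Fin n)), hedge⟩ : {e // e ∈ edgesF y})]
  · simp only [if_pos rfl]
    by_cases hva : (v : Fin n) = a <;> by_cases hvb : (v : Fin n) = b <;>
        simp [hva, hvb, Finset.mem_insert] <;>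
      first
        | exact absurd (hva.symm.trans hvb) hab
        | exact hab
        | exact fun h => hab h.symm
  · intro e' _ hne
    rw [if_neg hne]
    split <;> rfl
  · intro h
    exact absurd (Finset.mem_univ _) h

lemma chi_mem_range (hn : 3 ≤ n) {y : Finset (Finset (Fin n))} (hy : MinFill y)
    {v : Fin n} (hv : v ∈ vertsF y) :
    (fun x : {w // w ∈ vertsF y} =>
      ((if (x : Fin n) = v then 1 else 0) + (if (x : Fin n) = bv hn 0 (by omega) then 1 else 0)
        : ZMod 2)) ∈ LinearMap.range (bdMap y) := by
  classical
  obtain ⟨t, ht, hvt⟩ := mem_vertsF.mp hv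
  have hreach := reach_all hn hy t ht v hvt
  set v0 : Fin n := bv hn 0 (by omega) with hv0
  clear hv hvt ht
  induction hreach with
  | refl =>
      have : (fun x : {w // w ∈ vertsF y} =>
          ((if (x : Fin n) = v0 then 1 else 0) + (if (x : Fin n) = v0 then 1 else 0) : ZMod 2))
          = 0 := by
        funext x
        show _ + _ = (0 : ZMod 2)
        exact CharTwo.add_self_eq_zero _
      rw [this]
      exact Submodule.zero_mem _
  | @tail b c hab hbc ih =>
      by_cases hbceq : b = c
      · rw [← hbceq]; exact ih
      · obtain ⟨t', ht', hbt', hct'⟩ := hbc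
        have hedge : ({b, c} : Finset (Fin n)) ∈ edgesF y := by
          apply mem_edgesF.mpr
          refine ⟨t', ht', ?_, Finset.card_pair hbceq⟩
          intro x hx
          rcases Finset.mem_insert.mp hx with h | h
          · rw [h]; exact hbt'
          · rw [Finset.mem_singleton.mp h]; exact hct'
        have hsum := Submodule.add_mem _ ih (chi_edge_mem_range y hbceq hedge)
        have heq : (fun x : {w // w ∈ vertsF y} =>
            ((if (x : Fin n) = b then 1 else 0) + (if (x : Fin n) = v0 then 1 else 0) : ZMod 2))
            + (fun x : {w // w ∈ vertsF y} =>
            ((if (x : Fin n) = b then 1 else 0) + (if (x : Fin n) = c then 1 else 0) : ZMod 2))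
            = (fun x : {w // w ∈ vertsF y} =>
            ((if (x : Fin n) = c then 1 else 0) + (if (x : Fin n) = v0 then 1 else 0) : ZMod 2)) := by
          funext x
          simp only [Pi.add_apply]
          set A := (if (x : Fin n) = b then (1 : ZMod 2) else 0) with hA
          set B := (if (x : Fin n) = v0 then (1 : ZMod 2) else 0) with hB
          set C := (if (x : Fin n) = c then (1 : ZMod 2) else 0) with hC
          have hAA : A + A = 0 := CharTwo.add_self_eq_zero A
          linear_combination hAA
        rw [heq] at hsum
        exact hsum

/-- the main dimension bound: `|W| + |y| ≤ |E| + 1` for a minimal filling. -/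
lemma dim_bound (hn : 3 ≤ n) {y : Finset (Finset (Fin n))} (hy : MinFill y) :
    (vertsF y).card + y.card ≤ (edgesF y).card + 1 := by
  classical
  set v0 : Fin n := bv hn 0 (by omega) with hv0
  have hv0W : v0 ∈ vertsF y := by
    obtain ⟨t, ht, hsub⟩ := deg_odd_nonempty (filling_edge_deg hn hy.1
      (show (0:ℕ) < 3 by omega) (show (1:ℕ) < 3 by omega) (by omega))
    exact mem_vertsF.mpr ⟨t, ht, hsub (Finset.mem_insert_self _ _)⟩
  -- kernel part
  have hker : y.card ≤ Module.finrank (ZMod 2) (LinearMap.ker (bdMap y)) := by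
    have hind := tchain_indep hy
    have hmem : ∀ t : {t // t ∈ y}, tchain y (t : Finset (Fin n)) ∈ LinearMap.ker (bdMap y) :=
      fun t => LinearMap.mem_ker.mpr (bdMap_tchain y t.2 (hy.1.1 _ t.2))
    have hind' : LinearIndependent (ZMod 2)
        (fun t : {t // t ∈ y} => (⟨tchain y (t : Finset (Fin n)), hmem t⟩ :
          LinearMap.ker (bdMap y))) := by
      apply LinearIndependent.of_comp (LinearMap.ker (bdMap y)).subtype
      exact hind
    have := hind'.fintype_card_le_finrank
    rwa [Fintype.card_coe] at this
  -- range part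
  have hrange : ((vertsF y).erase v0).card ≤
      Module.finrank (ZMod 2) (LinearMap.range (bdMap y)) := by
    set fam := fun w : {w // w ∈ (vertsF y).erase v0} =>
      (fun x : {w // w ∈ vertsF y} =>
        ((if (x : Fin n) = (w : Fin n) then 1 else 0) + (if (x : Fin n) = v0 then 1 else 0)
          : ZMod 2)) with hfam
    have hmem : ∀ w, fam w ∈ LinearMap.range (bdMap y) :=
      fun w => chi_mem_range hn hy (Finset.mem_of_mem_erase w.2)
    have hindep : LinearIndependent (ZMod 2) fam := by
      rw [Fintype.linearIndependent_iff]
      intro g hg w0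
      have hW0 : (w0 : Fin n) ∈ vertsF y := Finset.mem_of_mem_erase w0.2
      have heval := congrFun hg ⟨(w0 : Fin n), hW0⟩
      rw [Finset.sum_apply] at heval
      simp only [Pi.zero_apply] at heval
      have hne0 : (w0 : Fin n) ≠ v0 := Finset.ne_of_mem_erase w0.2
      have hterm : ∀ w : {w // w ∈ (vertsF y).erase v0},
          (g w • fam w) ⟨(w0 : Fin n), hW0⟩ = if w = w0 then g w0 else 0 := by
        intro w
        show g w * ((if ((w0 : Fin n) : Fin n) = (w : Fin n) then 1 else 0)
          + (if ((w0 : Fin n) : Fin n) = v0 then 1 else 0)) = _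
        rw [if_neg hne0, add_zero]
        by_cases h : w = w0
        · rw [h, if_pos rfl, if_pos rfl, mul_one]
        · rw [if_neg, if_neg h, mul_zero]
          intro hcoe
          exact h (Subtype.ext hcoe.symm)
      rw [Finset.sum_congr rfl (fun w _ => hterm w), Finset.sum_ite_eq' Finset.univ w0
        (fun _ => g w0)] at heval
      rw [if_pos (Finset.mem_univ _)] at heval
      exact heval
    have hindep' : LinearIndependent (ZMod 2)
        (fun w => (⟨fam w, hmem w⟩ : LinearMap.range (bdMap y))) := by
      apply LinearIndependent.of_comp (LinearMap.range (bdMap y)).subtype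
      exact hindep
    have := hindep'.fintype_card_le_finrank
    rwa [Fintype.card_coe] at this
  have hrn := LinearMap.finrank_range_add_finrank_ker (bdMap y)
  rw [Module.finrank_fintype_fun_eq_card, Fintype.card_coe] at hrn
  have herase := Finset.card_erase_of_mem hv0W
  have hpos : 1 ≤ (vertsF y).card := Finset.card_pos.mpr ⟨v0, hv0W⟩
  omega

lemma sum_deg (y : Finset (Finset (Fin n))) (h3 : ∀ t ∈ y, t.card = 3) :
    ∑ e ∈ edgesF y, deg y e = 3 * y.card := by
  classical
  unfold deg
  rw [Finset.sum_congr rfl (fun e (_ : e ∈ edgesF y) => Finset.card_filter _ _)]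
  rw [Finset.sum_comm]
  have hrow : ∀ t ∈ y, (∑ e ∈ edgesF y, if e ⊆ t then (1:ℕ) else 0) = 3 := by
    intro t ht
    rw [← Finset.card_filter]
    have hfe : (edgesF y).filter (fun e => e ⊆ t) = t.powersetCard 2 := by
      ext e
      simp only [Finset.mem_filter, Finset.mem_powersetCard]
      constructor
      · rintro ⟨hE, het⟩
        obtain ⟨t', _, _, hc⟩ := mem_edgesF.mp hE
        exact ⟨het, hc⟩
      · rintro ⟨het, hc⟩
        exact ⟨mem_edgesF.mpr ⟨t, ht, het, hc⟩, het⟩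
    rw [hfe, Finset.card_powersetCard, h3 t ht]
    decide
  rw [Finset.sum_congr rfl hrow, Finset.sum_const, smul_eq_mul, mul_comm]

lemma edge_count (hn : 3 ≤ n) {y : Finset (Finset (Fin n))} (hy : IsFilling y (tri0 n)) :
    2 * (edgesF y).card ≤ 3 * y.card + 3 := by
  classical
  have hsum := sum_deg y hy.1
  have hlow : ∀ e ∈ edgesF y, (if e ⊆ tri0 n then 1 else 2) ≤ deg y e := by
    intro e he
    obtain ⟨t, ht, het, hc⟩ := mem_edgesF.mp he
    have hpos : 1 ≤ deg y e := by
      apply Finset.card_pos.mpr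
      exact ⟨t, Finset.mem_filter.mpr ⟨ht, het⟩⟩
    by_cases htri : e ⊆ tri0 n
    · rw [if_pos htri]; exact hpos
    · rw [if_neg htri]
      have hpar := hy.2 e hc
      rw [if_neg htri] at hpar
      show 2 ≤ (y.filter fun f => e ⊆ f).card
      have hpos' : 1 ≤ (y.filter fun f => e ⊆ f).card := hpos
      omega
  have h1 := Finset.sum_le_sum hlow
  rw [hsum] at h1
  have h2 : (∑ e ∈ edgesF y, if e ⊆ tri0 n then (1:ℕ) else 2)
      + ((edgesF y).filter (fun e => e ⊆ tri0 n)).card = 2 * (edgesF y).card := by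
    rw [Finset.card_filter, ← Finset.sum_add_distrib]
    have : ∀ e ∈ edgesF y,
        ((if e ⊆ tri0 n then (1:ℕ) else 2) + if e ⊆ tri0 n then (1:ℕ) else 0) = 2 := by
      intro e _; split <;> rfl
    rw [Finset.sum_congr rfl this, Finset.sum_const, smul_eq_mul, mul_comm]
  have h3 : ((edgesF y).filter (fun e => e ⊆ tri0 n)).card ≤ 3 := by
    have hsub : (edgesF y).filter (fun e => e ⊆ tri0 n) ⊆ (tri0 n).powersetCard 2 := by
      intro e he
      rw [Finset.mem_filter] at he
      obtain ⟨t', _, _, hc⟩ := mem_edgesF.mp he.1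
      exact Finset.mem_powersetCard.mpr ⟨he.2, hc⟩
    have := Finset.card_le_card hsub
    rwa [Finset.card_powersetCard, tri0_card hn] at this
  omega

lemma tri0_subset_verts (hn : 3 ≤ n) {y : Finset (Finset (Fin n))}
    (hy : IsFilling y (tri0 n)) : tri0 n ⊆ vertsF y := by
  intro a ha
  rcases tri0_cases hn ha with h | h | h
  · obtain ⟨t, ht, hsub⟩ := deg_odd_nonempty (filling_edge_deg hn hy
      (show (0:ℕ) < 3 by omega) (show (1:ℕ) < 3 by omega) (by omega))
    exact mem_vertsF.mpr ⟨t, ht, h ▸ hsub (Finset.mem_insert_self _ _)⟩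
  · obtain ⟨t, ht, hsub⟩ := deg_odd_nonempty (filling_edge_deg hn hy
      (show (0:ℕ) < 3 by omega) (show (1:ℕ) < 3 by omega) (by omega))
    exact mem_vertsF.mpr ⟨t, ht, h ▸ hsub (Finset.mem_insert_of_mem (Finset.mem_singleton_self _))⟩
  · obtain ⟨t, ht, hsub⟩ := deg_odd_nonempty (filling_edge_deg hn hy
      (show (0:ℕ) < 3 by omega) (show (2:ℕ) < 3 by omega) (by omega))
    exact mem_vertsF.mpr ⟨t, ht, h ▸ hsub (Finset.mem_insert_of_mem (Finset.mem_singleton_self _))⟩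

lemma new_vertex_bound (hn : 3 ≤ n) {y : Finset (Finset (Fin n))} (hy : MinFill y) :
    2 * ((vertsF y) \ tri0 n).card + 1 ≤ y.card := by
  have h1 := dim_bound hn hy
  have h2 := edge_count hn hy.1
  have h3 := tri0_subset_verts hn hy.1
  have h4 : ((vertsF y) \ tri0 n).card = (vertsF y).card - 3 := by
    rw [Finset.card_sdiff_of_subset h3, tri0_card hn]
  have h5 : 3 ≤ (vertsF y).card := by
    have := Finset.card_le_card h3
    rwa [tri0_card hn] at this
  omega

section Seqs

variable {I : Type*} [DecidableEq I]

def seqs (A : List I → Finset I) : ℕ → Finset (List I)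
  | 0 => {[]}
  | k + 1 => (seqs A k).biUnion fun l => (A l).image fun a => l ++ [a]

lemma seqs_card (A : List I → Finset I) (c : ℕ) (k : ℕ)
    (h : ∀ m, m < k → ∀ l ∈ seqs A m, (A l).card ≤ c) :
    (seqs A k).card ≤ c ^ k := by
  induction k with
  | zero => simp [seqs]
  | succ m ih =>
    calc (seqs A (m+1)).card ≤ ∑ l ∈ seqs A m, ((A l).image fun a => l ++ [a]).card :=
          Finset.card_biUnion_le
      _ ≤ ∑ _l ∈ seqs A m, c := by
          apply Finset.sum_le_sum
          intro l hl
          exact le_trans Finset.card_image_le (h m (by omega) l hl)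
      _ = (seqs A m).card * c := by rw [Finset.sum_const, smul_eq_mul]
      _ ≤ c ^ m * c := by
          exact Nat.mul_le_mul_right c (ih (fun m' hm' => h m' (by omega)))
      _ = c ^ (m + 1) := by ring

lemma seqs_length (A : List I → Finset I) (k : ℕ) :
    ∀ l ∈ seqs A k, l.length = k := by
  induction k with
  | zero => intro l hl; simp [seqs] at hl; simp [hl]
  | succ m ih =>
    intro l hl
    simp only [seqs, Finset.mem_biUnion, Finset.mem_image] at hl
    obtain ⟨l', hl', a, _, rfl⟩ := hl
    rw [List.length_append, ih l' hl']
    rfl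

lemma seqs_entries (A : List I → Finset I) (k : ℕ) :
    ∀ l ∈ seqs A k, ∀ a ∈ l, ∃ p, a ∈ A p := by
  induction k with
  | zero => intro l hl; simp [seqs] at hl; simp [hl]
  | succ m ih =>
    intro l hl a ha
    simp only [seqs, Finset.mem_biUnion, Finset.mem_image] at hl
    obtain ⟨l', hl', a', ha', rfl⟩ := hl
    rcases List.mem_append.mp ha with h | h
    · exact ih l' hl' a h
    · rw [List.mem_singleton.mp h]
      exact ⟨l', ha'⟩

end Seqs

def decodeF (l : List (Finset (Fin n) × Fin n)) : Finset (Finset (Fin n)) :=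
  (l.map fun iv => insert iv.2 iv.1).toFinset

def edgesOfList (n : ℕ) (l : List (Finset (Fin n) × Fin n)) : Finset (Finset (Fin n)) :=
  (tri0 n).powersetCard 2 ∪ (decodeF l).biUnion (fun t => t.powersetCard 2)

def stepSet (n : ℕ) (W : Finset (Fin n)) (l : List (Finset (Fin n) × Fin n)) :
    Finset (Finset (Fin n) × Fin n) :=
  (edgesOfList n l) ×ˢ (tri0 n ∪ W)

lemma edgesOfList_entry_card {l : List (Finset (Fin n) × Fin n)} {e : Finset (Fin n)}
    (he : e ∈ edgesOfList n l) : e.card = 2 := by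
  unfold edgesOfList at he
  rcases Finset.mem_union.mp he with h | h
  · exact (Finset.mem_powersetCard.mp h).2
  · obtain ⟨t, _, ht⟩ := Finset.mem_biUnion.mp h
    exact (Finset.mem_powersetCard.mp ht).2

lemma stepSet_card_le (hn : 3 ≤ n) (W : Finset (Fin n)) (k : ℕ)
    {m : ℕ} (hm : m < k) {l : List (Finset (Fin n) × Fin n)}
    (hl : l ∈ seqs (stepSet n W) m) :
    (stepSet n W l).card ≤ (3 * k) * (3 + W.card) := by
  unfold stepSet
  rw [Finset.card_product]
  apply Nat.mul_le_mul
  · -- edges bound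
    unfold edgesOfList
    calc ((tri0 n).powersetCard 2 ∪ (decodeF l).biUnion (fun t => t.powersetCard 2)).card
        ≤ ((tri0 n).powersetCard 2).card + ((decodeF l).biUnion (fun t => t.powersetCard 2)).card :=
          Finset.card_union_le _ _
      _ ≤ 3 + 3 * m := by
          apply Nat.add_le_add
          · rw [Finset.card_powersetCard, tri0_card hn]
            decide
          · calc ((decodeF l).biUnion (fun t => t.powersetCard 2)).card
                ≤ ∑ t ∈ decodeF l, (t.powersetCard 2).card := Finset.card_biUnion_le
              _ ≤ ∑ _t ∈ decodeF l, 3 := by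
                  apply Finset.sum_le_sum
                  intro t ht
                  rw [Finset.card_powersetCard]
                  -- t = insert v e with e of card 2, so t.card ≤ 3
                  unfold decodeF at ht
                  rw [List.mem_toFinset, List.mem_map] at ht
                  obtain ⟨⟨e, v⟩, hev, rfl⟩ := ht
                  obtain ⟨p, hp⟩ := seqs_entries _ m l hl _ hev
                  have he2 : e.card = 2 :=
                    edgesOfList_entry_card (Finset.mem_product.mp hp).1
                  have hle3 : (insert v e).card ≤ 3 := by
                    apply le_trans (Finset.card_insert_le _ _)
                    omega
                  exact le_trans (Nat.choose_mono 2 hle3) (by decide)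
              _ = (decodeF l).card * 3 := by rw [Finset.sum_const, smul_eq_mul]
              _ ≤ m * 3 := by
                  apply Nat.mul_le_mul_right
                  calc (decodeF l).card ≤ (l.map fun iv => insert iv.2 iv.1).length :=
                        List.toFinset_card_le _
                    _ = m := by rw [List.length_map, seqs_length _ m l hl]
              _ = 3 * m := by ring
      _ ≤ 3 * k := by omega
  · calc (tri0 n ∪ W).card ≤ (tri0 n).card + W.card := Finset.card_union_le _ _
      _ = 3 + W.card := by rw [tri0_card hn]

lemma minfill_encodable (hn : 3 ≤ n) {y : Finset (Finset (Fin n))} (hy : MinFill y) :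
    ∃ l ∈ seqs (stepSet n ((vertsF y) \ tri0 n)) y.card, decodeF l = y := by
  classical
  suffices h : ∀ m, m ≤ y.card → ∃ l ∈ seqs (stepSet n ((vertsF y) \ tri0 n)) m,
      decodeF l ⊆ y ∧ (decodeF l).card = m by
    obtain ⟨l, hl, hsub, hcard⟩ := h y.card le_rfl
    exact ⟨l, hl, Finset.eq_of_subset_of_card_le hsub (by omega)⟩
  intro m
  induction m with
  | zero =>
      intro _
      refine ⟨[], ?_, ?_, ?_⟩
      · simp [seqs]
      · intro t ht; simp [decodeF] at ht
      · simp [decodeF]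
  | succ m ih =>
      intro hm1
      obtain ⟨l, hl, hsub, hcard⟩ := ih (by omega)
      have hne : decodeF l ≠ y := fun h => by rw [h] at hcard; omega
      obtain ⟨t, hty, hts, e, hecard, het, hattach⟩ := exists_attach hn hy hsub hne
      have htcard : t.card = 3 := hy.1.1 t hty
      have hsd : (t \ e).card = 1 := by
        rw [Finset.card_sdiff_of_subset het]; omega
      obtain ⟨v, hv⟩ := Finset.card_eq_one.mp hsd
      have hvmem : v ∈ t \ e := by rw [hv]; exact Finset.mem_singleton_self v
      have hvt : v ∈ t := (Finset.mem_sdiff.mp hvmem).1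
      have hve : v ∉ e := (Finset.mem_sdiff.mp hvmem).2
      have htev : insert v e = t := by
        apply Finset.eq_of_subset_of_card_le
        · intro x hx
          rcases Finset.mem_insert.mp hx with h | h
          · rw [h]; exact hvt
          · exact het h
        · rw [Finset.card_insert_of_notMem hve]; omega
      have hdec : decodeF (l ++ [(e, v)]) = insert t (decodeF l) := by
        unfold decodeF
        rw [List.map_append, List.toFinset_append]
        ext x
        simp only [Finset.mem_union, List.mem_toFinset, List.map_cons, List.map_nil,
          List.toFinset_cons, List.toFinset_nil, Finset.mem_insert, insert_empty_eq,
          Finset.mem_singleton]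
        rw [htev]
        tauto
      refine ⟨l ++ [(e, v)], ?_, ?_, ?_⟩
      · show _ ∈ seqs _ (m + 1)
        apply Finset.mem_biUnion.mpr
        refine ⟨l, hl, Finset.mem_image.mpr ⟨(e, v), ?_, rfl⟩⟩
        apply Finset.mem_product.mpr
        constructor
        · unfold edgesOfList
          rcases hattach with htri | ⟨t', ht's, het'⟩
          · exact Finset.mem_union_left _ (Finset.mem_powersetCard.mpr ⟨htri, hecard⟩)
          · exact Finset.mem_union_right _ (Finset.mem_biUnion.mpr
              ⟨t', ht's, Finset.mem_powersetCard.mpr ⟨het', hecard⟩⟩)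
        · have hvW : v ∈ vertsF y := mem_vertsF.mpr ⟨t, hty, hvt⟩
          by_cases h : v ∈ tri0 n
          · exact Finset.mem_union_left _ h
          · exact Finset.mem_union_right _ (Finset.mem_sdiff.mpr ⟨hvW, h⟩)
      · rw [hdec]
        intro x hx
        rcases Finset.mem_insert.mp hx with h | h
        · rw [h]; exact hty
        · exact hsub h
      · rw [hdec, Finset.card_insert_of_notMem hts, hcard]

/-- the candidate set: all decodings of short valid instruction sequences. -/
noncomputable def cand (n k : ℕ) : Finset (Finset (Finset (Fin n))) :=
  ((Finset.univ : Finset (Fin n)).powerset.filter (fun W => 2 * W.card + 1 ≤ k)).biUnion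
    (fun W => (seqs (stepSet n W) k).image decodeF)

lemma minfill_mem_cand (hn : 3 ≤ n) {y : Finset (Finset (Fin n))} (hy : MinFill y) :
    y ∈ cand n y.card := by
  classical
  obtain ⟨l, hl, hdec⟩ := minfill_encodable hn hy
  apply Finset.mem_biUnion.mpr
  refine ⟨(vertsF y) \ tri0 n, ?_, Finset.mem_image.mpr ⟨l, hl, hdec⟩⟩
  rw [Finset.mem_filter]
  exact ⟨Finset.mem_powerset.mpr (Finset.subset_univ _), new_vertex_bound hn hy⟩

lemma cand_card_le (hn : 3 ≤ n) (k : ℕ) :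
    (cand n k).card ≤ ((k - 1) / 2 + 1) * n ^ ((k - 1) / 2) * ((3 * k) * (3 + k)) ^ k := by
  classical
  calc (cand n k).card
      ≤ ∑ W ∈ ((Finset.univ : Finset (Fin n)).powerset.filter (fun W => 2 * W.card + 1 ≤ k)),
        ((seqs (stepSet n W) k).image decodeF).card := Finset.card_biUnion_le
    _ ≤ ∑ W ∈ ((Finset.univ : Finset (Fin n)).powerset.filter (fun W => 2 * W.card + 1 ≤ k)),
        ((3 * k) * (3 + k)) ^ k := by
        apply Finset.sum_le_sum
        intro W hW
        rw [Finset.mem_filter] at hW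
        have hWk : W.card ≤ (k - 1) / 2 := by omega
        apply le_trans Finset.card_image_le
        apply le_trans (seqs_card (stepSet n W) ((3 * k) * (3 + W.card)) k
          (fun m hm l hl => stepSet_card_le hn W k hm hl))
        apply Nat.pow_le_pow_left
        apply Nat.mul_le_mul_left
        omega
    _ = ((Finset.univ : Finset (Fin n)).powerset.filter
          (fun W => 2 * W.card + 1 ≤ k)).card * ((3 * k) * (3 + k)) ^ k := by
        rw [Finset.sum_const, smul_eq_mul]
    _ ≤ (((k - 1) / 2 + 1) * n ^ ((k - 1) / 2)) * ((3 * k) * (3 + k)) ^ k := by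
        apply Nat.mul_le_mul_right
        -- count subsets of size ≤ (k-1)/2
        set J := (k - 1) / 2 with hJ
        calc ((Finset.univ : Finset (Fin n)).powerset.filter
              (fun W => 2 * W.card + 1 ≤ k)).card
            ≤ ((Finset.range (J + 1)).biUnion
              (fun j => (Finset.univ : Finset (Fin n)).powersetCard j)).card := by
              apply Finset.card_le_card
              intro W hW
              rw [Finset.mem_filter] at hW
              apply Finset.mem_biUnion.mpr
              refine ⟨W.card, Finset.mem_range.mpr (by omega), ?_⟩
              exact Finset.mem_powersetCard.mpr ⟨Finset.subset_univ _, rfl⟩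
          _ ≤ ∑ j ∈ Finset.range (J + 1),
                ((Finset.univ : Finset (Fin n)).powersetCard j).card := Finset.card_biUnion_le
          _ ≤ ∑ _j ∈ Finset.range (J + 1), n ^ J := by
              apply Finset.sum_le_sum
              intro j hj
              rw [Finset.card_powersetCard, Finset.card_univ, Fintype.card_fin]
              apply le_trans (Nat.choose_le_pow n j)
              apply Nat.pow_le_pow_right (by omega)
              exact Nat.lt_succ_iff.mp (Finset.mem_range.mp hj)
          _ = (J + 1) * n ^ J := by rw [Finset.sum_const, Finset.card_range, smul_eq_mul]
    _ = ((k - 1) / 2 + 1) * n ^ ((k - 1) / 2) * ((3 * k) * (3 + k)) ^ k := by ring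

lemma LMprob_nonneg (n : ℕ) (p : ℝ) (hp0 : 0 ≤ p) (hp1 : p ≤ 1)
    (A : Set (Finset (Finset (Fin n)))) : 0 ≤ LMprob n p A := by
  unfold LMprob
  apply Finset.sum_nonneg
  intro Y _
  split
  · exact weight_nonneg (triangles n) p hp0 hp1 Y
  · exact le_refl 0

lemma filling_nonempty (hn : 3 ≤ n) {y : Finset (Finset (Fin n))}
    (hy : IsFilling y (tri0 n)) : y.Nonempty := by
  obtain ⟨t, ht, _⟩ := deg_odd_nonempty (filling_edge_deg hn hy
    (show (0:ℕ) < 3 by omega) (show (1:ℕ) < 3 by omega) (by omega))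
  exact ⟨t, ht⟩

/-- the main inequality, for each sufficiently large `n`. -/
lemma main_bound (ε α : ℝ) (hε : 0 < ε) (hα : 0 < α) (hsmall : 2 * α + ε < 1 / 2)
    (n : ℕ) (hn : 3 ≤ n)
    (hsm : (12 : ℝ) * (n : ℝ) ^ (-(1 / 2 - 2 * α - ε)) ≤ 1 / 2) :
    LMprob n ((n : ℝ) ^ (ε - 1))
        {Y | ∃ y ⊆ Y, (y.card : ℝ) < (n : ℝ) ^ α ∧ IsFilling y (tri0 n)}
      ≤ 2 * (n : ℝ) ^ (α - 1 / 2) := by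
  classical
  have hn0 : (0 : ℝ) < n := by positivity
  have hn1 : (1 : ℝ) ≤ n := by
    have : (3 : ℝ) ≤ n := by exact_mod_cast hn
    linarith
  set p : ℝ := (n : ℝ) ^ (ε - 1) with hp
  have hp0 : 0 ≤ p := Real.rpow_nonneg (le_of_lt hn0) _
  have hp1 : p ≤ 1 := Real.rpow_le_one_of_one_le_of_nonpos hn1 (by linarith)
  set Kn : ℕ := ⌊(n : ℝ) ^ α⌋₊ with hKn
  set S : Finset ((_ : ℕ) × Finset (Finset (Fin n))) :=
    (Finset.Icc 1 Kn).sigma (fun k => (cand n k).filter (fun y => y.card = k)) with hS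
  -- event inclusion
  have hincl : ∀ Y, Y ∈ {Y | ∃ y ⊆ Y, (y.card : ℝ) < (n : ℝ) ^ α ∧ IsFilling y (tri0 n)} →
      ∃ s ∈ S, Y ∈ {Y' | s.2 ⊆ Y'} := by
    intro Y hY
    obtain ⟨y0, hy0Y, hy0c, hy0f⟩ := hY
    obtain ⟨y, hyY, hyf, hyc, hymin⟩ := exists_min_filling Y y0 hy0Y hy0f
    have hMF : MinFill y := ⟨hyf, fun z hz hzf => hymin z (hz.trans hyY) hzf⟩
    have hk1 : 1 ≤ y.card := Finset.card_pos.mpr (filling_nonempty hn hyf)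
    have hkK : y.card ≤ Kn := by
      rw [hKn, Nat.le_floor_iff (Real.rpow_nonneg (le_of_lt hn0) _)]
      calc (y.card : ℝ) ≤ (y0.card : ℝ) := by exact_mod_cast hyc
        _ ≤ (n : ℝ) ^ α := le_of_lt hy0c
    refine ⟨⟨y.card, y⟩, ?_, hyY⟩
    rw [hS, Finset.mem_sigma]
    exact ⟨Finset.mem_Icc.mpr ⟨hk1, hkK⟩,
      Finset.mem_filter.mpr ⟨minfill_mem_cand hn hMF, rfl⟩⟩
  -- union bound
  have hub := LMprob_union_bound n p hp0 hp1 S (fun s => {Y' | s.2 ⊆ Y'}) _ hincl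
  apply le_trans hub
  -- bound each probability
  have hterm : ∀ s ∈ S, LMprob n p {Y' | s.2 ⊆ Y'} ≤ p ^ s.2.card :=
    fun s _ => LMprob_superset_le n p hp0 hp1 s.2
  apply le_trans (Finset.sum_le_sum hterm)
  -- rewrite as a double sum
  rw [hS, Finset.sum_sigma]
  have hin : ∀ k ∈ Finset.Icc 1 Kn,
      (∑ y ∈ (cand n k).filter (fun y => y.card = k), p ^ y.card)
      ≤ (((k - 1) / 2 + 1) * n ^ ((k - 1) / 2) * ((3 * k) * (3 + k)) ^ k : ℕ) * p ^ k := by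
    intro k _
    have h1 : ∀ y ∈ (cand n k).filter (fun y => y.card = k), p ^ y.card = p ^ k := by
      intro y hy
      rw [(Finset.mem_filter.mp hy).2]
    rw [Finset.sum_congr rfl h1, Finset.sum_const, nsmul_eq_mul]
    apply mul_le_mul_of_nonneg_right _ (pow_nonneg hp0 k)
    have hle : ((cand n k).filter (fun y => y.card = k)).card ≤ (cand n k).card :=
      Finset.card_le_card (Finset.filter_subset _ _)
    exact_mod_cast le_trans hle (cand_card_le hn k)
  apply le_trans (Finset.sum_le_sum hin)
  -- now the analytic estimate
  have hkey : ∀ k ∈ Finset.Icc 1 Kn,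
      ((((k - 1) / 2 + 1) * n ^ ((k - 1) / 2) * ((3 * k) * (3 + k)) ^ k : ℕ) : ℝ) * p ^ k
      ≤ (n : ℝ) ^ (α - 1 / 2) * (1 / 2) ^ k := by
    intro k hk
    rw [Finset.mem_Icc] at hk
    obtain ⟨hk1, hkK⟩ := hk
    set J : ℕ := (k - 1) / 2 with hJdef
    have hkr : (k : ℝ) ≤ (n : ℝ) ^ α := by
      rw [hKn] at hkK
      exact (Nat.le_floor_iff (Real.rpow_nonneg (le_of_lt hn0) _)).mp hkK
    have hk1r : (1 : ℝ) ≤ (k : ℝ) := by exact_mod_cast hk1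
    have hcast : ((((k - 1) / 2 + 1) * n ^ ((k - 1) / 2) * ((3 * k) * (3 + k)) ^ k : ℕ) : ℝ)
        = ((J : ℝ) + 1) * (n : ℝ) ^ (J : ℕ) * (((3 * k : ℕ) : ℝ) * ((3 + k : ℕ) : ℝ)) ^ k := by
      push_cast
      ring
    rw [hcast]
    -- individual bounds
    have hb1 : (J : ℝ) + 1 ≤ (n : ℝ) ^ α := by
      have : J + 1 ≤ k := by omega
      calc (J : ℝ) + 1 ≤ (k : ℝ) := by exact_mod_cast this
        _ ≤ _ := hkr
    have hb2 : (n : ℝ) ^ (J : ℕ) ≤ (n : ℝ) ^ (((k : ℝ) - 1) / 2) := by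
      rw [← Real.rpow_natCast (n : ℝ) J]
      apply Real.rpow_le_rpow_of_exponent_le hn1
      have h2J : (2 * J : ℕ) ≤ k - 1 := by omega
      have h2Jr : (2 * (J : ℝ)) ≤ (k : ℝ) - 1 := by
        have hc : ((2 * J : ℕ) : ℝ) ≤ ((k - 1 : ℕ) : ℝ) := by exact_mod_cast h2J
        push_cast at hc
        have : ((k - 1 : ℕ) : ℝ) = (k : ℝ) - 1 := by
          have : 1 ≤ k := hk1
          push_cast [this]
          ring
        linarith [this ▸ hc]
      linarith
    have hb3 : (((3 * k : ℕ) : ℝ) * ((3 + k : ℕ) : ℝ)) ≤ 12 * (n : ℝ) ^ (2 * α) := by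
      have h3k : ((3 * k : ℕ) : ℝ) = 3 * (k : ℝ) := by push_cast; ring
      have h3pk : ((3 + k : ℕ) : ℝ) = 3 + (k : ℝ) := by push_cast; ring
      rw [h3k, h3pk]
      have hkk : 3 * (k : ℝ) * (3 + (k : ℝ)) ≤ 12 * (k : ℝ) ^ 2 := by nlinarith
      apply le_trans hkk
      have : (k : ℝ) ^ 2 ≤ ((n : ℝ) ^ α) ^ 2 := by
        apply pow_le_pow_left₀ (by positivity) hkr
      calc 12 * (k : ℝ) ^ 2 ≤ 12 * ((n : ℝ) ^ α) ^ 2 := by linarith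
        _ = 12 * (n : ℝ) ^ (2 * α) := by
            rw [← Real.rpow_natCast ((n : ℝ) ^ α) 2, ← Real.rpow_mul (le_of_lt hn0)]
            norm_num
            rw [mul_comm]
    -- assemble
    have hstep : ((J : ℝ) + 1) * (n : ℝ) ^ (J : ℕ) * (((3 * k : ℕ) : ℝ) * ((3 + k : ℕ) : ℝ)) ^ k * p ^ k
        ≤ (n : ℝ) ^ α * (n : ℝ) ^ (((k : ℝ) - 1) / 2) * (12 * (n : ℝ) ^ (2 * α)) ^ k * p ^ k := by
      apply mul_le_mul_of_nonneg_right _ (pow_nonneg hp0 k)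
      apply mul_le_mul
      · apply mul_le_mul hb1 hb2 (by positivity) (by positivity)
      · apply pow_le_pow_left₀ (by positivity) hb3
      · positivity
      · positivity
    apply le_trans hstep
    -- now pure rpow algebra
    have hA : ∀ c : ℝ, ((n : ℝ) ^ c) ^ k = (n : ℝ) ^ (c * k) := by
      intro c
      rw [← Real.rpow_natCast ((n : ℝ) ^ c) k, ← Real.rpow_mul (le_of_lt hn0)]
    have heq : (n : ℝ) ^ α * (n : ℝ) ^ (((k : ℝ) - 1) / 2) * (12 * (n : ℝ) ^ (2 * α)) ^ k * p ^ k
        = (n : ℝ) ^ (α - 1 / 2) * (12 * (n : ℝ) ^ (-(1 / 2 - 2 * α - ε))) ^ k := by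
      rw [hp, mul_pow, mul_pow, hA, hA, hA]
      rw [show (n:ℝ)^α * (n:ℝ)^(((k:ℝ)-1)/2) * ((12:ℝ)^k * (n:ℝ)^(2*α*(k:ℝ))) * (n:ℝ)^((ε-1)*(k:ℝ))
          = (12:ℝ)^k * ((n:ℝ)^α * ((n:ℝ)^(((k:ℝ)-1)/2) * ((n:ℝ)^(2*α*(k:ℝ)) * (n:ℝ)^((ε-1)*(k:ℝ)))))
          from by ring]
      rw [← Real.rpow_add hn0, ← Real.rpow_add hn0, ← Real.rpow_add hn0]
      rw [show α + (((k:ℝ)-1)/2 + (2*α*(k:ℝ) + (ε-1)*(k:ℝ)))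
          = (α - 1/2) + (-(1/2 - 2*α - ε)*(k:ℝ)) from by ring]
      rw [Real.rpow_add hn0]
      ring
    rw [heq]
    apply mul_le_mul_of_nonneg_left _ (Real.rpow_nonneg (le_of_lt hn0) _)
    apply pow_le_pow_left₀ (by positivity) hsm
  apply le_trans (Finset.sum_le_sum hkey)
  rw [← Finset.mul_sum]
  rw [mul_comm (2 : ℝ) _]
  apply mul_le_mul_of_nonneg_left _ (Real.rpow_nonneg (le_of_lt hn0) _)
  calc ∑ k ∈ Finset.Icc 1 Kn, (1 / 2 : ℝ) ^ k
      ≤ ∑ k ∈ Finset.range (Kn + 1), (1 / 2 : ℝ) ^ k := by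
        apply Finset.sum_le_sum_of_subset_of_nonneg
        · intro k hk
          rw [Finset.mem_Icc] at hk
          rw [Finset.mem_range]
          omega
        · intro k _ _
          positivity
    _ ≤ 2 := sum_geometric_two_le _

end LMaux

theorem stmt6 (ε α : ℝ) (hε : 0 < ε) (hα : 0 < α) (hsmall : 2 * α + ε < 1 / 2) :
    Filter.Tendsto
      (fun n : ℕ => LMprob n ((n : ℝ) ^ (ε - 1))
        {Y | ∃ y ⊆ Y, (y.card : ℝ) < (n : ℝ) ^ α ∧ IsFilling y (tri0 n)})
      Filter.atTop (nhds 0) := by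
  have hδ0 : 0 < 1 / 2 - 2 * α - ε := by linarith
  have htend0 : Filter.Tendsto (fun n : ℕ => (n : ℝ) ^ (-(1 / 2 - 2 * α - ε)))
      Filter.atTop (nhds 0) :=
    (tendsto_rpow_neg_atTop hδ0).comp tendsto_natCast_atTop_atTop
  have hev2 : ∀ᶠ n : ℕ in Filter.atTop, 12 * (n : ℝ) ^ (-(1 / 2 - 2 * α - ε)) ≤ 1 / 2 := by
    have h24 : ∀ᶠ n : ℕ in Filter.atTop, (n : ℝ) ^ (-(1 / 2 - 2 * α - ε)) < 1 / 24 :=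
      htend0.eventually (gt_mem_nhds (by norm_num))
    filter_upwards [h24] with n h
    linarith
  have hupper : ∀ᶠ n : ℕ in Filter.atTop,
      LMprob n ((n : ℝ) ^ (ε - 1))
          {Y | ∃ y ⊆ Y, (y.card : ℝ) < (n : ℝ) ^ α ∧ IsFilling y (tri0 n)}
        ≤ 2 * (n : ℝ) ^ (α - 1 / 2) := by
    filter_upwards [Filter.eventually_ge_atTop 3, hev2] with n h1 h2
    exact LMaux.main_bound ε α hε hα hsmall n h1 h2
  have hlower : ∀ᶠ n : ℕ in Filter.atTop,
      0 ≤ LMprob n ((n : ℝ) ^ (ε - 1))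
          {Y | ∃ y ⊆ Y, (y.card : ℝ) < (n : ℝ) ^ α ∧ IsFilling y (tri0 n)} := by
    filter_upwards [Filter.eventually_ge_atTop 1] with n h1
    have hn1 : (1 : ℝ) ≤ (n : ℝ) := by exact_mod_cast h1
    apply LMaux.LMprob_nonneg
    · exact Real.rpow_nonneg (by linarith) _
    · exact Real.rpow_le_one_of_one_le_of_nonpos hn1 (by linarith)
  have hg : Filter.Tendsto (fun n : ℕ => 2 * (n : ℝ) ^ (α - 1 / 2))
      Filter.atTop (nhds 0) := by
    have h1 : Filter.Tendsto (fun n : ℕ => (n : ℝ) ^ (α - 1 / 2))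
        Filter.atTop (nhds 0) := by
      have h2 := (tendsto_rpow_neg_atTop (show 0 < 1 / 2 - α by linarith)).comp
        (tendsto_natCast_atTop_atTop (R := ℝ))
      have h3 : α - 1 / 2 = -(1 / 2 - α) := by ring
      rw [h3]
      exact h2
    have := h1.const_mul (2 : ℝ)
    simpa using this
  exact tendsto_of_tendsto_of_tendsto_of_le_of_le' tendsto_const_nhds hg hlower hupper
end

section
/- Let ε > 0 and α > 0 satisfy 2α + ε < 1/2, and set p(n) = n^{ε−1}. For a subset Y of T_n and a triangle τ, let T_Y(τ) denote the minimum of n^α and the minimal cardinality of a ℤ/2-filling y ⊆ Y of τ (taken to be n^α if no such filling exists). Then there is a constant c > 0 such that the probability under the Linial–Meshulam distribution Y_{n,p(n)} of the event that Σ_τ T_Y(τ)² ≥ c·n^{3+2α}, the sum running over all triangles τ of Fin n, tends to 1 as n → ∞. -/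
open Finset

-- `T_Y(τ)`: the minimum of `n^α` and the minimal cardinality of a ℤ/2-filling `y ⊆ Y` of `τ`
-- (taken to be `n^α` if no such filling exists).
open Classical in
noncomputable def TY (n : ℕ) (α : ℝ) (Y : Finset (Finset (Fin n))) (τ : Finset (Fin n)) : ℝ :=
  if ∃ y ⊆ Y, IsFilling y τ then
    min ((n : ℝ) ^ α) ((sInf {m : ℕ | ∃ y ⊆ Y, IsFilling y τ ∧ y.card = m} : ℕ) : ℝ)
  else (n : ℝ) ^ α


namespace S9


noncomputable def w (n : ℕ) (p : ℝ) (Y : Finset (Finset (Fin n))) : ℝ :=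
  p ^ Y.card * (1 - p) ^ ((triangles n).card - Y.card)

open Classical in
lemma LMprob_eq (n : ℕ) (p : ℝ) (A : Set (Finset (Finset (Fin n)))) :
    LMprob n p A = ∑ Y ∈ (triangles n).powerset, if Y ∈ A then w n p Y else 0 := rfl

lemma w_nonneg {n : ℕ} {p : ℝ} (hp0 : 0 ≤ p) (hp1 : p ≤ 1) (Y : Finset (Finset (Fin n))) :
    0 ≤ w n p Y :=
  mul_nonneg (pow_nonneg hp0 _) (pow_nonneg (by linarith) _)

lemma sum_w_powerset {β : Type*} [DecidableEq β] (S : Finset β) (p : ℝ) :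
    ∑ Y ∈ S.powerset, p ^ Y.card * (1 - p) ^ (S.card - Y.card) = 1 := by
  have h := Finset.prod_add (fun _ : β => p) (fun _ => 1 - p) S
  simp only [Finset.prod_const] at h
  have h1 : p + (1 - p) = 1 := by ring
  rw [h1, one_pow] at h
  refine Eq.trans (Finset.sum_congr rfl fun t ht => ?_) h.symm
  rw [Finset.card_sdiff_of_subset (Finset.mem_powerset.mp ht)]

lemma sum_w (n : ℕ) (p : ℝ) : ∑ Y ∈ (triangles n).powerset, w n p Y = 1 :=
  sum_w_powerset _ p

lemma LMprob_nonneg {n : ℕ} {p : ℝ} (hp0 : 0 ≤ p) (hp1 : p ≤ 1)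
    (A : Set (Finset (Finset (Fin n)))) : 0 ≤ LMprob n p A := by
  rw [LMprob_eq]
  refine Finset.sum_nonneg fun Y _ => ?_
  split
  · exact w_nonneg hp0 hp1 Y
  · exact le_refl 0

lemma LMprob_le_one {n : ℕ} {p : ℝ} (hp0 : 0 ≤ p) (hp1 : p ≤ 1)
    (A : Set (Finset (Finset (Fin n)))) : LMprob n p A ≤ 1 := by
  rw [LMprob_eq, ← sum_w n p]
  refine Finset.sum_le_sum fun Y _ => ?_
  split
  · exact le_refl _
  · exact w_nonneg hp0 hp1 Y

lemma LMprob_compl {n : ℕ} {p : ℝ} (hp0 : 0 ≤ p) (hp1 : p ≤ 1)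
    (A : Set (Finset (Finset (Fin n)))) :
    LMprob n p A = 1 - LMprob n p {Y | Y ∉ A} := by
  rw [LMprob_eq, LMprob_eq, ← sum_w n p, eq_sub_iff_add_eq, ← Finset.sum_add_distrib]
  refine Finset.sum_congr rfl fun Y _ => ?_
  by_cases h : Y ∈ A
  · rw [if_pos h, if_neg (by simpa using h)]; ring
  · rw [if_neg h, if_pos (by simpa using h)]; ring

lemma LMprob_mono {n : ℕ} {p : ℝ} (hp0 : 0 ≤ p) (hp1 : p ≤ 1)
    {A B : Set (Finset (Finset (Fin n)))}
    (h : ∀ Y ∈ (triangles n).powerset, Y ∈ A → Y ∈ B) :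
    LMprob n p A ≤ LMprob n p B := by
  rw [LMprob_eq, LMprob_eq]
  refine Finset.sum_le_sum fun Y hY => ?_
  by_cases hA : Y ∈ A
  · rw [if_pos hA, if_pos (h Y hY hA)]
  · rw [if_neg hA]
    split
    · exact w_nonneg hp0 hp1 Y
    · exact le_refl _

lemma LMprob_le_add {n : ℕ} {p : ℝ} (hp0 : 0 ≤ p) (hp1 : p ≤ 1)
    {A B C : Set (Finset (Finset (Fin n)))}
    (h : ∀ Y ∈ (triangles n).powerset, Y ∈ A → Y ∈ B ∨ Y ∈ C) :
    LMprob n p A ≤ LMprob n p B + LMprob n p C := by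
  classical
  rw [LMprob_eq, LMprob_eq, LMprob_eq, ← Finset.sum_add_distrib]
  refine Finset.sum_le_sum fun Y hY => ?_
  by_cases hA : Y ∈ A
  · rw [if_pos hA]
    rcases h Y hY hA with hB | hC
    · rw [if_pos hB]
      have : (0:ℝ) ≤ if Y ∈ C then w n p Y else 0 := by
        split
        · exact w_nonneg hp0 hp1 Y
        · exact le_refl _
      linarith
    · rw [if_pos hC]
      have : (0:ℝ) ≤ if Y ∈ B then w n p Y else 0 := by
        split
        · exact w_nonneg hp0 hp1 Y
        · exact le_refl _
      linarith
  · rw [if_neg hA]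
    have h1 : (0:ℝ) ≤ if Y ∈ B then w n p Y else 0 := by
      split
      · exact w_nonneg hp0 hp1 Y
      · exact le_refl _
    have h2 : (0:ℝ) ≤ if Y ∈ C then w n p Y else 0 := by
      split
      · exact w_nonneg hp0 hp1 Y
      · exact le_refl _
    linarith

lemma LMprob_le_sum {n : ℕ} {p : ℝ} (hp0 : 0 ≤ p) (hp1 : p ≤ 1)
    {ι : Type*} {A : Set (Finset (Finset (Fin n)))} {I : Finset ι}
    {E : ι → Set (Finset (Finset (Fin n)))}
    (h : ∀ Y ∈ (triangles n).powerset, Y ∈ A → ∃ i ∈ I, Y ∈ E i) :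
    LMprob n p A ≤ ∑ i ∈ I, LMprob n p (E i) := by
  classical
  simp only [LMprob_eq]
  rw [Finset.sum_comm]
  refine Finset.sum_le_sum fun Y hY => ?_
  by_cases hA : Y ∈ A
  · rw [if_pos hA]
    obtain ⟨i, hi, hEi⟩ := h Y hY hA
    refine le_trans (le_of_eq (if_pos hEi).symm)
      (Finset.single_le_sum (f := fun j => if Y ∈ E j then w n p Y else 0) (fun j _ => ?_) hi)
    show 0 ≤ if Y ∈ E j then w n p Y else 0
    split
    · exact w_nonneg hp0 hp1 Y
    · exact le_refl _
  · rw [if_neg hA]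
    refine Finset.sum_nonneg fun j _ => ?_
    split
    · exact w_nonneg hp0 hp1 Y
    · exact le_refl _

lemma LMprob_superset {n : ℕ} {p : ℝ} (hp0 : 0 ≤ p) (hp1 : p ≤ 1)
    {S : Finset (Finset (Fin n))} (hS : S ⊆ triangles n) :
    LMprob n p {Y | S ⊆ Y} = p ^ S.card := by
  classical
  rw [LMprob_eq]
  simp only [Set.mem_setOf_eq]
  refine Eq.trans (Finset.sum_congr rfl fun x _ => ?_)
    (Eq.trans (Finset.sum_filter (fun Y => S ⊆ Y) (w n p)).symm ?_)
  · by_cases h : S ⊆ x <;> simp [h]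
  have hbij : ∑ Y ∈ (triangles n).powerset.filter (fun Y => S ⊆ Y), w n p Y
      = ∑ W ∈ (triangles n \ S).powerset,
          p ^ S.card * (p ^ W.card * (1 - p) ^ ((triangles n \ S).card - W.card)) := by
    refine Finset.sum_nbij' (fun Y => Y \ S) (fun W => S ∪ W) ?_ ?_ ?_ ?_ ?_
    · intro Y hY
      simp only [Finset.mem_filter, Finset.mem_powerset] at hY ⊢
      exact Finset.sdiff_subset_sdiff hY.1 (le_refl _)
    · intro W hW
      simp only [Finset.mem_filter, Finset.mem_powerset] at hW ⊢
      constructor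
      · exact Finset.union_subset hS (hW.trans (Finset.sdiff_subset))
      · exact Finset.subset_union_left
    · intro Y hY
      simp only [Finset.mem_filter, Finset.mem_powerset] at hY
      exact Finset.union_sdiff_of_subset hY.2
    · intro W hW
      simp only [Finset.mem_powerset] at hW
      have hd : Disjoint S W := Finset.disjoint_sdiff.mono_right hW
      show (S ∪ W) \ S = W
      exact Finset.union_sdiff_cancel_left hd
    · intro Y hY
      simp only [Finset.mem_filter, Finset.mem_powerset] at hY
      obtain ⟨hYT, hSY⟩ := hY
      unfold w
      have hle : S.card ≤ Y.card := Finset.card_le_card hSY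
      have h2 : Y.card ≤ (triangles n).card := Finset.card_le_card hYT
      have hcard : Y.card = S.card + (Y \ S).card := by
        rw [Finset.card_sdiff_of_subset hSY]; omega
      have hc2 : (triangles n).card - Y.card
          = (triangles n \ S).card - (Y \ S).card := by
        rw [Finset.card_sdiff_of_subset hSY, Finset.card_sdiff_of_subset hS]; omega
      rw [hc2, hcard, pow_add]; ring
  rw [hbij, ← Finset.mul_sum, sum_w_powerset, mul_one]

open Classical in
lemma LMprob_markov {n : ℕ} {p : ℝ} (hp0 : 0 ≤ p) (hp1 : p ≤ 1)
    (g : Finset (Finset (Fin n)) → ℝ) (hg : ∀ Y, 0 ≤ g Y) {a : ℝ} (ha : 0 < a) :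
    LMprob n p {Y | a ≤ g Y} ≤ (∑ Y ∈ (triangles n).powerset, w n p Y * g Y) / a := by
  rw [le_div_iff₀ ha, LMprob_eq, Finset.sum_mul]
  refine Finset.sum_le_sum fun Y _ => ?_
  by_cases h : a ≤ g Y
  · rw [if_pos (by exact h)]
    exact mul_le_mul_of_nonneg_left h (w_nonneg hp0 hp1 Y)
  · rw [if_neg (by exact h), zero_mul]
    exact mul_nonneg (w_nonneg hp0 hp1 Y) (hg Y)

variable {n : ℕ}

/-- Parity condition: every edge is contained in an even number of faces. -/
def CycP (z : Finset (Finset (Fin n))) : Prop :=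
  ∀ e : Finset (Fin n), e.card = 2 → (z.filter (fun f => e ⊆ f)).card % 2 = 0

def Shares (f g : Finset (Fin n)) : Prop := ∃ e : Finset (Fin n), e.card = 2 ∧ e ⊆ f ∧ e ⊆ g

def ReachZ (z : Finset (Finset (Fin n))) (f g : Finset (Fin n)) : Prop :=
  Relation.ReflTransGen (fun a b => b ∈ z ∧ Shares a b) f g

def Vz (z : Finset (Finset (Fin n))) : Finset (Fin n) := z.biUnion id

def Ez (z : Finset (Finset (Fin n))) : Finset (Finset (Fin n)) :=
  z.biUnion (fun f => Finset.powersetCard 2 f)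

lemma mem_Vz {z : Finset (Finset (Fin n))} {f : Finset (Fin n)} (hf : f ∈ z) {x : Fin n}
    (hx : x ∈ f) : x ∈ Vz z := Finset.mem_biUnion.mpr ⟨f, hf, hx⟩

lemma mem_Ez {z : Finset (Finset (Fin n))} {f : Finset (Fin n)} (hf : f ∈ z)
    {e : Finset (Fin n)} (he : e ⊆ f) (hc : e.card = 2) : e ∈ Ez z :=
  Finset.mem_biUnion.mpr ⟨f, hf, Finset.mem_powersetCard.mpr ⟨he, hc⟩⟩

lemma Ez_card {z : Finset (Finset (Fin n))} {e : Finset (Fin n)} (he : e ∈ Ez z) : e.card = 2 := by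
  obtain ⟨f, _, hef⟩ := Finset.mem_biUnion.mp he
  exact (Finset.mem_powersetCard.mp hef).2

/-- Connectivity from minimality. -/
lemma conn_of_min {z : Finset (Finset (Fin n))} {τ : Finset (Fin n)} (hτ : τ ∈ z)
    (hcyc : CycP z) (hmin : ∀ z' ⊆ z, CycP z' → z' = ∅ ∨ z' = z) :
    ∀ f ∈ z, ReachZ z τ f := by
  classical
  set C := z.filter (fun f => ReachZ z τ f) with hC
  have hCz : C ⊆ z := Finset.filter_subset _ _
  have hCcyc : CycP C := by
    intro e he2
    by_cases hex : ∃ f ∈ C, e ⊆ f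
    · have : C.filter (fun f => e ⊆ f) = z.filter (fun f => e ⊆ f) := by
        apply Finset.Subset.antisymm
        · exact Finset.filter_subset_filter _ (by exact hCz)
        · intro g hg
          simp only [Finset.mem_filter] at hg ⊢
          obtain ⟨f, hfC, hef⟩ := hex
          simp only [hC, Finset.mem_filter] at hfC
          refine ⟨Finset.mem_filter.mpr ⟨hg.1, ?_⟩, hg.2⟩
          exact Relation.ReflTransGen.tail hfC.2 ⟨hg.1, ⟨e, he2, hef, hg.2⟩⟩
      rw [this]
      exact hcyc e he2
    · have : C.filter (fun f => e ⊆ f) = ∅ := by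
        rw [Finset.filter_eq_empty_iff]
        intro f hf hef
        exact hex ⟨f, hf, hef⟩
      rw [this]; rfl
  rcases hmin C hCz hCcyc with h0 | hz
  · exfalso
    have : τ ∈ C := Finset.mem_filter.mpr ⟨hτ, Relation.ReflTransGen.refl⟩
    rw [h0] at this
    exact absurd this (Finset.notMem_empty τ)
  · intro f hf
    rw [← hz] at hf
    exact (Finset.mem_filter.mp hf).2

/-- Double counting: every edge lies in at least two faces, so `2|E| ≤ 3|z|`. -/
lemma edge_count {z : Finset (Finset (Fin n))} (hz3 : ∀ f ∈ z, f.card = 3) (hcyc : CycP z) :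
    2 * (Ez z).card ≤ 3 * z.card := by
  classical
  have key : ∀ f ∈ z, (Finset.powersetCard 2 f).card = ((Ez z).filter (fun e => e ⊆ f)).card := by
    intro f hf
    congr 1
    apply Finset.Subset.antisymm
    · intro e hef
      obtain ⟨hsub, hc⟩ := Finset.mem_powersetCard.mp hef
      exact Finset.mem_filter.mpr ⟨mem_Ez hf hsub hc, hsub⟩
    · intro e hef
      obtain ⟨heE, hsub⟩ := Finset.mem_filter.mp hef
      exact Finset.mem_powersetCard.mpr ⟨hsub, Ez_card heE⟩
  have h3 : 3 * z.card = ∑ f ∈ z, ((Ez z).filter (fun e => e ⊆ f)).card := by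
    rw [Finset.sum_congr rfl (fun f hf => (key f hf).symm)]
    have : ∀ f ∈ z, (Finset.powersetCard 2 f).card = 3 := by
      intro f hf
      rw [Finset.card_powersetCard, hz3 f hf]; rfl
    rw [Finset.sum_congr rfl this, Finset.sum_const, smul_eq_mul, mul_comm]
  have hswap : ∑ f ∈ z, ((Ez z).filter (fun e => e ⊆ f)).card
      = ∑ e ∈ Ez z, (z.filter (fun f => e ⊆ f)).card := by
    simp only [Finset.card_filter]
    exact Finset.sum_comm
  have hlb : ∀ e ∈ Ez z, 2 ≤ (z.filter (fun f => e ⊆ f)).card := by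
    intro e he
    have hpar := hcyc e (Ez_card he)
    obtain ⟨f, hf, hef⟩ := Finset.mem_biUnion.mp he
    have hne : 0 < (z.filter (fun f => e ⊆ f)).card := by
      refine Finset.card_pos.mpr ⟨f, Finset.mem_filter.mpr ⟨hf, (Finset.mem_powersetCard.mp hef).1⟩⟩
    omega
  calc 2 * (Ez z).card = ∑ _e ∈ Ez z, 2 := by rw [Finset.sum_const, smul_eq_mul, mul_comm]
    _ ≤ ∑ e ∈ Ez z, (z.filter (fun f => e ⊆ f)).card := Finset.sum_le_sum hlb
    _ = 3 * z.card := by rw [← hswap, ← h3]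

open Classical in
/-- Number of edges within f through a vertex v. -/
lemma count_edges_through {z : Finset (Finset (Fin n))} (hz3 : ∀ f ∈ z, f.card = 3)
    {f : Finset (Fin n)} (hf : f ∈ z) (v : Fin n) :
    ((Ez z).filter (fun e => v ∈ e ∧ e ⊆ f)).card = if v ∈ f then 2 else 0 := by
  by_cases hv : v ∈ f
  · rw [if_pos hv]
    have himg : (Ez z).filter (fun e => v ∈ e ∧ e ⊆ f)
        = (f.erase v).image (fun u => ({v, u} : Finset (Fin n))) := by
      apply Finset.Subset.antisymm
      · intro e he
        obtain ⟨heE, hve, hef⟩ := Finset.mem_filter.mp he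
        have hc2 : e.card = 2 := Ez_card heE
        have hc1 : (e.erase v).card = 1 := by rw [Finset.card_erase_of_mem hve, hc2]
        obtain ⟨u, hu⟩ := Finset.card_eq_one.mp hc1
        have hue : u ∈ e.erase v := by rw [hu]; exact Finset.mem_singleton_self u
        refine Finset.mem_image.mpr ⟨u, ?_, ?_⟩
        · exact Finset.mem_erase.mpr ⟨(Finset.mem_erase.mp hue).1, hef (Finset.erase_subset _ _ hue)⟩
        · show ({v, u} : Finset (Fin n)) = e
          rw [← Finset.insert_erase hve, hu]
      · intro e he
        obtain ⟨u, hu, rfl⟩ := Finset.mem_image.mp he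
        obtain ⟨huv, huf⟩ := Finset.mem_erase.mp hu
        have hsub : ({v, u} : Finset (Fin n)) ⊆ f := by
          intro x hx
          rcases Finset.mem_insert.mp hx with rfl | hx
          · exact hv
          · rw [Finset.mem_singleton.mp hx]; exact huf
        refine Finset.mem_filter.mpr ⟨mem_Ez hf hsub (Finset.card_pair (Ne.symm huv)), ?_, hsub⟩
        exact Finset.mem_insert_self v _
    rw [himg, Finset.card_image_of_injOn, Finset.card_erase_of_mem hv, hz3 f hf]
    intro a ha b hb hab
    simp only at hab
    have : a ∈ ({v, b} : Finset (Fin n)) := by rw [← hab]; simp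
    rcases Finset.mem_insert.mp this with h | h
    · exact absurd h (Finset.mem_erase.mp ha).1
    · exact Finset.mem_singleton.mp h
  · rw [if_neg hv]
    rw [Finset.card_eq_zero, Finset.filter_eq_empty_iff]
    intro e _ he
    rcases he with ⟨hve, hef⟩
    exact hv (hef hve)


lemma zmod2_cases (a : ZMod 2) : a = 0 ∨ a = 1 := by revert a; decide

lemma zmod2_two : ((2 : ℕ) : ZMod 2) = 0 := by decide

lemma zmod2_sub (a b : ZMod 2) : a - b = a + b := by revert a b; decide

lemma sum_ite_card {β : Type*} (s : Finset β) (P : β → Prop) [DecidablePred P] :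
    (∑ i : ↥s, if P ↑i then (1 : ZMod 2) else 0) = ((s.filter P).card : ZMod 2) := by
  rw [Finset.sum_coe_sort s (fun i => if P i then (1 : ZMod 2) else 0),
    Finset.card_filter, Nat.cast_sum]
  exact Finset.sum_congr rfl fun f _ => by split <;> simp

set_option maxHeartbeats 1000000 in
open Classical in
lemma vertex_bound {z : Finset (Finset (Fin n))} {τ : Finset (Fin n)} (hτ : τ ∈ z)
    (hz3 : ∀ f ∈ z, f.card = 3) (hcyc : CycP z)
    (hmin : ∀ z' ⊆ z, CycP z' → z' = ∅ ∨ z' = z) :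
    2 * (Vz z).card ≤ z.card + 4 := by
  classical
  haveI : Fact (Nat.Prime 2) := ⟨Nat.prime_two⟩
  have hconn := conn_of_min hτ hcyc hmin
  -- boundary maps
  let d2 : (↥z → ZMod 2) →ₗ[ZMod 2] (↥(Ez z) → ZMod 2) :=
    { toFun := fun x e => ∑ f : ↥z, if (e : Finset (Fin n)) ⊆ (f : Finset (Fin n)) then x f else 0
      map_add' := by
        intro x y; funext e
        simp only [Pi.add_apply]
        rw [← Finset.sum_add_distrib]
        exact Finset.sum_congr rfl fun f _ => by split <;> simp
      map_smul' := by
        intro c x; funext e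
        simp only [Pi.smul_apply, RingHom.id_apply, smul_eq_mul]
        rw [Finset.mul_sum]
        exact Finset.sum_congr rfl fun f _ => by split <;> simp }
  let d1 : (↥(Ez z) → ZMod 2) →ₗ[ZMod 2] (↥(Vz z) → ZMod 2) :=
    { toFun := fun x v => ∑ e : ↥(Ez z), if (v : Fin n) ∈ (e : Finset (Fin n)) then x e else 0
      map_add' := by
        intro x y; funext v
        simp only [Pi.add_apply]
        rw [← Finset.sum_add_distrib]
        exact Finset.sum_congr rfl fun e _ => by split <;> simp
      map_smul' := by
        intro c x; funext v
        simp only [Pi.smul_apply, RingHom.id_apply, smul_eq_mul]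
        rw [Finset.mul_sum]
        exact Finset.sum_congr rfl fun e _ => by split <;> simp }
  -- kernel of d2 is the span of the all-ones vector
  have hker2 : LinearMap.ker d2 = Submodule.span (ZMod 2) {(fun _ => 1 : ↥z → ZMod 2)} := by
    apply le_antisymm
    · intro x hx
      rw [LinearMap.mem_ker] at hx
      -- the support of x
      set z' := z.filter (fun f => ∀ h : f ∈ z, x ⟨f, h⟩ = 1) with hz'
      have hz'z : z' ⊆ z := Finset.filter_subset _ _
      have hmem : ∀ (f : ↥z), (↑f ∈ z') ↔ x f = 1 := by
        intro f
        simp only [hz', Finset.mem_filter]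
        constructor
        · intro h; exact h.2 f.2
        · intro h; exact ⟨f.2, fun _ => h⟩
      have hval : ∀ a : ZMod 2, a = 0 ∨ a = 1 := zmod2_cases
      have hcount : ∀ e : Finset (Fin n),
          ((z'.filter (fun f => e ⊆ f)).card : ZMod 2)
            = ∑ f : ↥z, if e ⊆ (f : Finset (Fin n)) then x f else 0 := by
        intro e
        have h1 : ∀ f : ↥z, (if e ⊆ (f : Finset (Fin n)) then x f else 0)
            = if e ⊆ (f : Finset (Fin n)) ∧ ↑f ∈ z' then 1 else 0 := by
          intro f
          rcases hval (x f) with h | h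
          · have : ↑f ∉ z' := fun hc => by
              rw [(hmem f).mp hc] at h; exact one_ne_zero h
            rw [h]
            split <;> simp_all
          · have : ↑f ∈ z' := (hmem f).mpr h
            rw [h]
            split <;> simp_all
        rw [Finset.sum_congr rfl (fun f _ => h1 f)]
        have h2 : (∑ f : ↥z, if e ⊆ (f : Finset (Fin n)) ∧ ↑f ∈ z' then (1 : ZMod 2) else 0)
            = ∑ f ∈ z, if e ⊆ f ∧ f ∈ z' then (1 : ZMod 2) else 0 :=
          Finset.sum_coe_sort z (fun f => if e ⊆ f ∧ f ∈ z' then (1:ZMod 2) else 0)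
        rw [h2]
        have h3 : z'.filter (fun f => e ⊆ f) = z.filter (fun f => e ⊆ f ∧ f ∈ z') := by
          ext f
          simp only [Finset.mem_filter]
          constructor
          · intro ⟨hf, he⟩; exact ⟨hz'z hf, he, hf⟩
          · intro ⟨_, he, hf⟩; exact ⟨hf, he⟩
        rw [h3, Finset.card_filter, Nat.cast_sum]
        exact Finset.sum_congr rfl fun f _ => by split <;> simp
      have hz'cyc : CycP z' := by
        intro e he2
        by_cases heE : e ∈ Ez z
        · have := congrFun hx ⟨e, heE⟩
          simp only [d2, LinearMap.coe_mk, AddHom.coe_mk, Pi.zero_apply] at this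
          have hcast : ((z'.filter (fun f => e ⊆ f)).card : ZMod 2) = 0 := by
            rw [hcount e]; exact this
          have := (ZMod.natCast_eq_zero_iff _ 2).mp hcast
          omega
        · have : z'.filter (fun f => e ⊆ f) = ∅ := by
            rw [Finset.filter_eq_empty_iff]
            intro f hf hef
            exact heE (mem_Ez (hz'z hf) hef he2)
          rw [this]; rfl
      rcases hmin z' hz'z hz'cyc with h0 | hzz
      · have : x = 0 := by
          funext f
          rcases hval (x f) with h | h
          · exact h
          · exfalso
            have : ↑f ∈ z' := (hmem f).mpr h
            rw [h0] at this
            exact absurd this (Finset.notMem_empty _)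
        rw [this]
        exact Submodule.zero_mem _
      · have : x = (fun _ => 1) := by
          funext f
          exact (hmem f).mp (by rw [hzz]; exact f.2)
        rw [this]
        exact Submodule.mem_span_singleton_self _
    · rw [Submodule.span_le]
      intro x hx
      rw [Set.mem_singleton_iff] at hx
      subst hx
      rw [SetLike.mem_coe, LinearMap.mem_ker]
      funext e
      simp only [d2, LinearMap.coe_mk, AddHom.coe_mk, Pi.zero_apply]
      have h2 : (∑ f : ↥z, if (e:Finset (Fin n)) ⊆ (f : Finset (Fin n)) then (1 : ZMod 2) else 0)
          = ∑ f ∈ z, if (e:Finset (Fin n)) ⊆ f then (1 : ZMod 2) else 0 :=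
        Finset.sum_coe_sort z (fun f => if (e:Finset (Fin n)) ⊆ f then (1:ZMod 2) else 0)
      rw [h2]
      have h3 : (∑ f ∈ z, if (e:Finset (Fin n)) ⊆ f then (1 : ZMod 2) else 0)
          = ((z.filter (fun f => (e:Finset (Fin n)) ⊆ f)).card : ZMod 2) := by
        rw [Finset.card_filter, Nat.cast_sum]
        exact Finset.sum_congr rfl fun f _ => by split <;> simp
      rw [h3]
      have hpar := hcyc e (Ez_card e.2)
      rw [ZMod.natCast_eq_zero_iff]
      omega
  -- range d2 ≤ ker d1
  have hrange : LinearMap.range d2 ≤ LinearMap.ker d1 := by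
    rintro y ⟨x, rfl⟩
    rw [LinearMap.mem_ker]
    funext v
    simp only [d1, d2, LinearMap.coe_mk, AddHom.coe_mk, Pi.zero_apply]
    calc (∑ e : ↥(Ez z), if (v:Fin n) ∈ (e:Finset (Fin n)) then
            (∑ f : ↥z, if (e : Finset (Fin n)) ⊆ (f:Finset (Fin n)) then x f else 0) else 0)
        = ∑ e : ↥(Ez z), ∑ f : ↥z,
            if (v:Fin n) ∈ (e:Finset (Fin n)) ∧ (e : Finset (Fin n)) ⊆ (f:Finset (Fin n)) then x f else 0 := by
          refine Finset.sum_congr rfl fun e _ => ?_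
          by_cases hv : (v:Fin n) ∈ (e:Finset (Fin n))
          · rw [if_pos hv]
            exact Finset.sum_congr rfl fun f _ => by
              by_cases hs : (e : Finset (Fin n)) ⊆ (f:Finset (Fin n)) <;> simp [hv, hs]
          · rw [if_neg hv]
            symm
            refine Finset.sum_eq_zero fun f _ => by simp [hv]
      _ = ∑ f : ↥z, ∑ e : ↥(Ez z), (if (v:Fin n) ∈ (e:Finset (Fin n)) ∧ (e : Finset (Fin n)) ⊆ ↑f then x f else 0) :=
          Finset.sum_comm
      _ = ∑ f : ↥z, (((Ez z).filter (fun e => (v:Fin n) ∈ e ∧ e ⊆ ↑f)).card : ZMod 2) * x f := by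
          refine Finset.sum_congr rfl fun f _ => ?_
          calc (∑ e : ↥(Ez z), if (v:Fin n) ∈ (e:Finset (Fin n)) ∧ (e : Finset (Fin n)) ⊆ ↑f then x f else 0)
              = ∑ e : ↥(Ez z), (if (v:Fin n) ∈ (e:Finset (Fin n)) ∧ (e : Finset (Fin n)) ⊆ ↑f then (1:ZMod 2) else 0) * x f :=
                Finset.sum_congr rfl fun e _ => by split <;> simp
            _ = (∑ e : ↥(Ez z), if (v:Fin n) ∈ (e:Finset (Fin n)) ∧ (e : Finset (Fin n)) ⊆ ↑f then (1:ZMod 2) else 0) * x f :=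
                (Finset.sum_mul _ _ _).symm
            _ = (((Ez z).filter (fun e => (v:Fin n) ∈ e ∧ e ⊆ ↑f)).card : ZMod 2) * x f :=
                congrArg (· * x f) (sum_ite_card (Ez z) (fun e => (v:Fin n) ∈ e ∧ e ⊆ (f:Finset (Fin n))))
      _ = 0 := by
          refine Finset.sum_eq_zero fun f _ => ?_
          rw [count_edges_through hz3 f.2]
          split
          · rw [zmod2_two, zero_mul]
          · rw [Nat.cast_zero, zero_mul]
  -- the quotient by the range of d1 has dimension at most 1
  have hτ3 : τ.card = 3 := hz3 τ hτ
  obtain ⟨t₀, ht₀⟩ := Finset.card_pos.mp (by rw [hτ3]; norm_num : 0 < τ.card)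
  set Q := (↥(Vz z) → ZMod 2) ⧸ LinearMap.range d1 with hQdef
  let dlt : ↥(Vz z) → (↥(Vz z) → ZMod 2) := fun u => fun j => if u = j then 1 else 0
  let v₀ : ↥(Vz z) := ⟨t₀, mem_Vz hτ ht₀⟩
  have hS1 : ∀ f ∈ z, ∀ u u' : ↥(Vz z), (u:Fin n) ∈ f → (u':Fin n) ∈ f →
      (Submodule.Quotient.mk (dlt u) : Q) = Submodule.Quotient.mk (dlt u') := by
    intro f hf u u' hu hu'
    by_cases huu : u = u'
    · rw [huu]
    have hne : (u : Fin n) ≠ (u' : Fin n) := fun hc => huu (Subtype.ext hc)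
    rw [Submodule.Quotient.eq]
    have hE : ({(u:Fin n), (u':Fin n)} : Finset (Fin n)) ∈ Ez z := by
      refine mem_Ez hf ?_ (Finset.card_pair hne)
      intro x hx
      rcases Finset.mem_insert.mp hx with rfl | hx
      · exact hu
      · rw [Finset.mem_singleton.mp hx]; exact hu'
    refine ⟨fun e => if (e : Finset (Fin n)) = {(u:Fin n), (u':Fin n)} then 1 else 0, ?_⟩
    simp only [d1, LinearMap.coe_mk, AddHom.coe_mk]
    funext j
    have hsingle : (∑ e : ↥(Ez z), if (j:Fin n) ∈ (e:Finset (Fin n)) then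
        (if (e : Finset (Fin n)) = {(u:Fin n), (u':Fin n)} then (1:ZMod 2) else 0) else 0)
        = if (j:Fin n) ∈ ({(u:Fin n), (u':Fin n)} : Finset (Fin n)) then 1 else 0 := by
      rw [Fintype.sum_eq_single (⟨{(u:Fin n), (u':Fin n)}, hE⟩ : ↥(Ez z))]
      · simp
      · intro e he
        have : (e : Finset (Fin n)) ≠ {(u:Fin n), (u':Fin n)} := fun hc => he (Subtype.ext hc)
        simp [this]
    rw [hsingle]
    show _ = (dlt u - dlt u') j
    simp only [dlt, Pi.sub_apply, zmod2_sub]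
    by_cases h1 : u = j <;> by_cases h2 : u' = j
    · exact absurd (h1.trans h2.symm) huu
    · have hj : (j:Fin n) ∈ ({(u:Fin n), (u':Fin n)} : Finset (Fin n)) := by rw [← h1]; simp
      rw [if_pos hj, if_pos h1, if_neg h2, add_zero]
    · have hj : (j:Fin n) ∈ ({(u:Fin n), (u':Fin n)} : Finset (Fin n)) := by rw [← h2]; simp
      rw [if_pos hj, if_neg h1, if_pos h2, zero_add]
    · have hj : (j:Fin n) ∉ ({(u:Fin n), (u':Fin n)} : Finset (Fin n)) := by
        intro hc
        rcases Finset.mem_insert.mp hc with hc | hc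
        · exact h1 (Subtype.ext hc.symm)
        · exact h2 (Subtype.ext (Finset.mem_singleton.mp hc).symm)
      rw [if_neg hj, if_neg h1, if_neg h2, add_zero]
  have hS2 : ∀ f, ReachZ z τ f → ∀ u : ↥(Vz z), (u:Fin n) ∈ f →
      (Submodule.Quotient.mk (dlt u) : Q) = Submodule.Quotient.mk (dlt v₀) := by
    intro f hreach
    induction hreach with
    | refl => exact fun u hu => hS1 τ hτ u v₀ hu ht₀
    | @tail b c hab hbc ih =>
      intro u hu
      obtain ⟨hcz, e, he2, heb, hec⟩ := hbc
      have hepos : 0 < e.card := by omega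
      obtain ⟨m, hm⟩ := Finset.card_pos.mp hepos
      have hmV : m ∈ Vz z := mem_Vz hcz (hec hm)
      calc (Submodule.Quotient.mk (dlt u) : Q) = Submodule.Quotient.mk (dlt ⟨m, hmV⟩) :=
            hS1 c hcz u ⟨m, hmV⟩ hu (hec hm)
        _ = Submodule.Quotient.mk (dlt v₀) := ih ⟨m, hmV⟩ (heb hm)
  have hspan : ∀ q : Q, q ∈ Submodule.span (ZMod 2) {(Submodule.Quotient.mk (dlt v₀) : Q)} := by
    intro q
    obtain ⟨x, rfl⟩ := Submodule.Quotient.mk_surjective _ q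
    have hx : x = ∑ u : ↥(Vz z), x u • dlt u := pi_eq_sum_univ x
    have hmkx : (Submodule.Quotient.mk x : Q) = (∑ u : ↥(Vz z), x u) • (Submodule.Quotient.mk (dlt v₀) : Q) := by
      calc (Submodule.Quotient.mk x : Q)
          = Submodule.mkQ (LinearMap.range d1) x := rfl
        _ = Submodule.mkQ (LinearMap.range d1) (∑ u : ↥(Vz z), x u • dlt u) :=
            congrArg _ hx
        _ = ∑ u : ↥(Vz z), x u • Submodule.mkQ (LinearMap.range d1) (dlt u) := by
            rw [map_sum]
            exact Finset.sum_congr rfl fun u _ => by rw [map_smul]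
        _ = ∑ u : ↥(Vz z), x u • (Submodule.Quotient.mk (dlt v₀) : Q) := by
            refine Finset.sum_congr rfl fun u _ => ?_
            obtain ⟨f, hf, huf⟩ := Finset.mem_biUnion.mp u.2
            have := hS2 f (hconn f hf) u huf
            rw [Submodule.mkQ_apply, this]
        _ = (∑ u : ↥(Vz z), x u) • (Submodule.Quotient.mk (dlt v₀) : Q) := Finset.sum_smul.symm
    rw [hmkx]
    exact Submodule.smul_mem _ _ (Submodule.mem_span_singleton_self _)
  have hQ1 : Module.finrank (ZMod 2) Q ≤ 1 := by
    have htop : (⊤ : Submodule (ZMod 2) Q)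
        ≤ Submodule.span (ZMod 2) {(Submodule.Quotient.mk (dlt v₀) : Q)} :=
      fun q _ => hspan q
    calc Module.finrank (ZMod 2) Q = Module.finrank (ZMod 2) (⊤ : Submodule (ZMod 2) Q) :=
          (finrank_top _ _).symm
      _ ≤ Module.finrank (ZMod 2)
            (Submodule.span (ZMod 2) {(Submodule.Quotient.mk (dlt v₀) : Q)}) :=
          Submodule.finrank_mono htop
      _ ≤ ({(Submodule.Quotient.mk (dlt v₀) : Q)} : Set Q).toFinset.card := finrank_span_le_card _
      _ ≤ 1 := by simp
  -- assemble
  have hones : (fun _ => (1:ZMod 2) : ↥z → ZMod 2) ≠ 0 := by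
    intro hc
    have := congrFun hc ⟨τ, hτ⟩
    exact one_ne_zero this
  have hk1 : Module.finrank (ZMod 2) (LinearMap.ker d2) = 1 := by
    rw [hker2]
    exact finrank_span_singleton hones
  have hrn2 := LinearMap.finrank_range_add_finrank_ker d2
  have hrn1 := LinearMap.finrank_range_add_finrank_ker d1
  rw [Module.finrank_fintype_fun_eq_card, Fintype.card_coe] at hrn2
  rw [Module.finrank_fintype_fun_eq_card, Fintype.card_coe] at hrn1
  have hq := Submodule.finrank_quotient_add_finrank (LinearMap.range d1)
  rw [Module.finrank_fintype_fun_eq_card, Fintype.card_coe] at hq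
  have hmono : Module.finrank (ZMod 2) (LinearMap.range d2)
      ≤ Module.finrank (ZMod 2) (LinearMap.ker d1) := Submodule.finrank_mono hrange
  have hedge := edge_count hz3 hcyc
  have hq2 : Module.finrank (ZMod 2) Q + Module.finrank (ZMod 2) ↥(LinearMap.range d1) = (Vz z).card := hq
  omega

open Classical in
lemma exists_order {z : Finset (Finset (Fin n))} {τ : Finset (Fin n)} (hτ : τ ∈ z)
    (hconn : ∀ f ∈ z, ReachZ z τ f) :
    ∃ g : ℕ → Finset (Fin n), g 0 = τ ∧
      (∀ i j, i < z.card → j < z.card → i ≠ j → g i ≠ g j) ∧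
      (Finset.range z.card).image g = z ∧
      (∀ i, i + 1 < z.card → ∃ j ≤ i, Shares (g j) (g (i + 1))) := by
  classical
  have main : ∀ m, 1 ≤ m → m ≤ z.card → ∃ g : ℕ → Finset (Fin n), g 0 = τ ∧
      (∀ i j, i < m → j < m → i ≠ j → g i ≠ g j) ∧
      (Finset.range m).image g ⊆ z ∧
      (∀ i, i + 1 < m → ∃ j ≤ i, Shares (g j) (g (i + 1))) := by
    intro m
    induction m with
    | zero => omega
    | succ m ih =>
      intro _ hm1
      by_cases hm : m = 0
      · subst hm
        refine ⟨fun _ => τ, rfl, ?_, ?_, ?_⟩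
        · intro i j hi hj hij; omega
        · intro f hf
          simp only [Finset.mem_image, Finset.mem_range] at hf
          obtain ⟨i, _, rfl⟩ := hf
          exact hτ
        · intro i hi; omega
      · obtain ⟨g, hg0, hinj, hsub, hsh⟩ := ih (by omega) (by omega)
        set S := (Finset.range m).image g with hS
        have hScard : S.card = m := by
          rw [hS, Finset.card_image_of_injOn, Finset.card_range]
          intro i hi j hj hij
          by_contra hne
          exact hinj i j (Finset.mem_range.mp hi) (Finset.mem_range.mp hj) hne hij
        have hτS : τ ∈ S := by
          rw [hS]
          exact Finset.mem_image.mpr ⟨0, Finset.mem_range.mpr (by omega), hg0⟩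
        have hSz : S ⊆ z := hsub
        have hex : ∃ f₀ ∈ z, f₀ ∉ S := by
          by_contra hc
          push_neg at hc
          have : z ⊆ S := hc
          have := Finset.card_le_card this
          omega
        obtain ⟨f₀, hf₀z, hf₀S⟩ := hex
        have cross : ∀ f, ReachZ z τ f → f ∉ S →
            ∃ a ∈ S, ∃ b, b ∈ z ∧ b ∉ S ∧ Shares a b := by
          intro f hreach
          induction hreach with
          | refl => intro h; exact absurd hτS h
          | @tail b c hab hbc ih2 =>
            intro hc
            by_cases hbS : b ∈ S
            · exact ⟨b, hbS, c, hbc.1, hc, hbc.2⟩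
            · exact ih2 hbS
        obtain ⟨a, haS, b, hbz, hbS, hab⟩ := cross f₀ (hconn f₀ hf₀z) hf₀S
        refine ⟨fun i => if i = m then b else g i, ?_, ?_, ?_, ?_⟩
        · show (if 0 = m then b else g 0) = τ
          rw [if_neg (by omega)]; exact hg0
        · intro i j hi hj hij
          show (if i = m then b else g i) ≠ (if j = m then b else g j)
          by_cases hi' : i = m <;> by_cases hj' : j = m
          · omega
          · subst hi'
            rw [if_pos rfl, if_neg hj']
            intro hc
            exact hbS (Finset.mem_image.mpr ⟨j, Finset.mem_range.mpr (by omega), hc.symm⟩)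
          · subst hj'
            rw [if_pos rfl, if_neg hi']
            intro hc
            exact hbS (Finset.mem_image.mpr ⟨i, Finset.mem_range.mpr (by omega), hc⟩)
          · rw [if_neg hi', if_neg hj']
            exact hinj i j (by omega) (by omega) hij
        · intro f hf
          simp only [Finset.mem_image, Finset.mem_range] at hf
          obtain ⟨i, hi, rfl⟩ := hf
          by_cases hi' : i = m
          · rw [if_pos hi']; exact hbz
          · rw [if_neg hi']
            exact hSz (Finset.mem_image.mpr ⟨i, Finset.mem_range.mpr (by omega), rfl⟩)
        · intro i hi
          by_cases hi' : i + 1 = m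
          · obtain ⟨j₀, hj₀, rfl⟩ := Finset.mem_image.mp haS
            rw [Finset.mem_range] at hj₀
            refine ⟨j₀, by omega, ?_⟩
            show Shares (if j₀ = m then b else g j₀) (if i + 1 = m then b else g (i + 1))
            rw [if_neg (by omega), if_pos hi']
            exact hab
          · obtain ⟨j, hj, hshare⟩ := hsh i (by omega)
            refine ⟨j, hj, ?_⟩
            show Shares (if j = m then b else g j) (if i + 1 = m then b else g (i + 1))
            rw [if_neg (by omega), if_neg (by omega)]
            exact hshare
  have hzpos : 1 ≤ z.card := Finset.card_pos.mpr ⟨τ, hτ⟩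
  obtain ⟨g, hg0, hinj, hsub, hsh⟩ := main z.card hzpos (le_refl _)
  refine ⟨g, hg0, hinj, ?_, hsh⟩
  apply Finset.eq_of_subset_of_card_le hsub
  have : ((Finset.range z.card).image g).card = z.card := by
    rw [Finset.card_image_of_injOn, Finset.card_range]
    intro i hi j hj hij
    by_contra hne
    exact hinj i j (Finset.mem_range.mp hi) (Finset.mem_range.mp hj) hne hij
  omega

def vcap (k : ℕ) : ℕ := (k + 4) / 2
def ncap (k : ℕ) : ℕ := vcap k - 3

abbrev Code (n k : ℕ) := (Fin (ncap k) → Fin n) × (Fin (k - 1) → Fin k × Fin 3 × Fin (vcap k))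

def edgeAt [NeZero n] (f : Finset (Fin n)) (t : ℕ) : Finset (Fin n) :=
  f.erase ((f.sort (· ≤ ·)).getD t default)

def vertAt [NeZero n] (τ : Finset (Fin n)) {k : ℕ} (L : Fin (ncap k) → Fin n) (i : ℕ) : Fin n :=
  if i < 3 then (τ.sort (· ≤ ·)).getD i default
  else if h : i - 3 < ncap k then L ⟨i - 3, h⟩ else default

def decodeFaces [NeZero n] (τ : Finset (Fin n)) (k : ℕ) (c : Code n k) : ℕ → Finset (Fin n)
  | 0 => τ
  | (i+1) =>
    if h : i < k - 1 then
      edgeAt (decodeFaces τ k c (min ((c.2 ⟨i, h⟩).1 : ℕ) i)) ((c.2 ⟨i, h⟩).2.1 : ℕ)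
        ∪ {vertAt τ c.1 ((c.2 ⟨i, h⟩).2.2 : ℕ)}
    else ∅
  decreasing_by exact Nat.lt_succ_of_le (min_le_right _ _)

def decodeSet [NeZero n] (τ : Finset (Fin n)) (k : ℕ) (c : Code n k) : Finset (Finset (Fin n)) :=
  (Finset.range k).image (decodeFaces τ k c)

lemma edgeAt_exists [NeZero n] {f e : Finset (Fin n)} (hf : f.card = 3) (he : e ⊆ f)
    (he2 : e.card = 2) : ∃ t : ℕ, t < 3 ∧ edgeAt f t = e := by
  classical
  have hsd : (f \ e).card = 1 := by rw [Finset.card_sdiff_of_subset he, hf, he2]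
  obtain ⟨x, hx⟩ := Finset.card_eq_one.mp hsd
  have hxf : x ∈ f := by
    have : x ∈ f \ e := by rw [hx]; exact Finset.mem_singleton_self x
    exact (Finset.mem_sdiff.mp this).1
  have hxe : x ∉ e := by
    have : x ∈ f \ e := by rw [hx]; exact Finset.mem_singleton_self x
    exact (Finset.mem_sdiff.mp this).2
  have herase : f.erase x = e := by
    apply Finset.Subset.antisymm
    · intro y hy
      obtain ⟨hyx, hyf⟩ := Finset.mem_erase.mp hy
      by_contra hye
      have : y ∈ f \ e := Finset.mem_sdiff.mpr ⟨hyf, hye⟩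
      rw [hx] at this
      exact hyx (Finset.mem_singleton.mp this)
    · intro y hy
      exact Finset.mem_erase.mpr ⟨fun hc => hxe (hc ▸ hy), he hy⟩
  set l := f.sort (· ≤ ·) with hl
  have hlen : l.length = 3 := by rw [hl, Finset.length_sort, hf]
  have hxl : x ∈ l := by rw [hl, Finset.mem_sort]; exact hxf
  obtain ⟨t, ht, hget⟩ := List.mem_iff_getElem.mp hxl
  refine ⟨t, by omega, ?_⟩
  unfold edgeAt
  rw [← hl, List.getD_eq_getElem l default (by omega), hget, herase]

lemma decodeFaces_zero [NeZero n] (τ : Finset (Fin n)) (k : ℕ) (c : Code n k) :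
    decodeFaces τ k c 0 = τ := by rw [decodeFaces]

lemma decodeFaces_succ [NeZero n] (τ : Finset (Fin n)) (k : ℕ) (c : Code n k) (i : ℕ)
    (h : i < k - 1) :
    decodeFaces τ k c (i + 1)
      = edgeAt (decodeFaces τ k c (min ((c.2 ⟨i, h⟩).1 : ℕ) i)) ((c.2 ⟨i, h⟩).2.1 : ℕ)
        ∪ {vertAt τ c.1 ((c.2 ⟨i, h⟩).2.2 : ℕ)} := by
  rw [decodeFaces]
  rw [dif_pos h]

lemma encode_exists [NeZero n] {z : Finset (Finset (Fin n))} {τ : Finset (Fin n)} (hτ : τ ∈ z)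
    (hz3 : ∀ f ∈ z, f.card = 3) {k : ℕ} (hk : z.card = k) (hk2 : 2 ≤ k)
    (hv : 2 * (Vz z).card ≤ k + 4)
    (hconn : ∀ f ∈ z, ReachZ z τ f) :
    ∃ c : Code n k, decodeSet τ k c = z := by
  classical
  obtain ⟨g, hg0, hinj, himg, hsh⟩ := exists_order hτ hconn
  rw [hk] at hinj himg hsh
  have hτ3 : τ.card = 3 := hz3 τ hτ
  have hτV : τ ⊆ Vz z := fun x hx => mem_Vz hτ hx
  have hVcard : (Vz z).card ≤ vcap k := by unfold vcap; omega
  have hvc3 : 3 ≤ vcap k := by unfold vcap; omega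
  have hsd : (Vz z \ τ).card ≤ ncap k := by
    rw [Finset.card_sdiff_of_subset hτV, hτ3]
    unfold ncap
    omega
  set L : Fin (ncap k) → Fin n := fun i => ((Vz z \ τ).sort (· ≤ ·)).getD i default with hL
  have hvert : ∀ u ∈ Vz z, ∃ w : ℕ, w < vcap k ∧ vertAt τ L w = u := by
    intro u hu
    by_cases huτ : u ∈ τ
    · have hmem : u ∈ τ.sort (· ≤ ·) := (Finset.mem_sort _).mpr huτ
      obtain ⟨t, ht, hget⟩ := List.mem_iff_getElem.mp hmem
      have hlen : (τ.sort (· ≤ ·)).length = 3 := by rw [Finset.length_sort, hτ3]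
      refine ⟨t, by omega, ?_⟩
      unfold vertAt
      rw [if_pos (by omega), List.getD_eq_getElem _ default (by omega), hget]
    · have hmem : u ∈ (Vz z \ τ).sort (· ≤ ·) :=
        (Finset.mem_sort _).mpr (Finset.mem_sdiff.mpr ⟨hu, huτ⟩)
      obtain ⟨j, hj, hget⟩ := List.mem_iff_getElem.mp hmem
      have hlen : ((Vz z \ τ).sort (· ≤ ·)).length = (Vz z \ τ).card := Finset.length_sort _
      have hjn : j < ncap k := by omega
      refine ⟨3 + j, by unfold ncap at hjn; omega, ?_⟩
      unfold vertAt
      rw [if_neg (by omega)]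
      rw [dif_pos (by omega : 3 + j - 3 < ncap k)]
      show ((Vz z \ τ).sort (· ≤ ·)).getD (3 + j - 3) default = u
      have h33 : 3 + j - 3 = j := by omega
      rw [h33, List.getD_eq_getElem _ default hj]
      exact hget
  have hgz : ∀ i, i < k → g i ∈ z := by
    intro i hi
    rw [← himg]
    exact Finset.mem_image.mpr ⟨i, Finset.mem_range.mpr hi, rfl⟩
  have hbuild : ∀ i : Fin (k - 1), ∃ d : Fin k × Fin 3 × Fin (vcap k),
      (d.1 : ℕ) ≤ (i : ℕ) ∧
      g ((i : ℕ) + 1) = edgeAt (g (d.1 : ℕ)) ((d.2.1 : ℕ)) ∪ {vertAt τ L ((d.2.2 : ℕ))} := by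
    intro i
    have hik : (i : ℕ) + 1 < k := by omega
    obtain ⟨j, hj, e, he2, hej, hei⟩ := hsh i hik
    have hjz : g j ∈ z := hgz j (by omega)
    have hiz : g ((i:ℕ)+1) ∈ z := hgz _ hik
    obtain ⟨t, ht3, hedge⟩ := edgeAt_exists (hz3 _ hjz) hej he2
    have hsd1 : (g ((i:ℕ)+1) \ e).card = 1 := by
      rw [Finset.card_sdiff_of_subset hei, hz3 _ hiz, he2]
    obtain ⟨u, hu⟩ := Finset.card_eq_one.mp hsd1
    have huf : u ∈ g ((i:ℕ)+1) := by
      have : u ∈ g ((i:ℕ)+1) \ e := by rw [hu]; exact Finset.mem_singleton_self u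
      exact (Finset.mem_sdiff.mp this).1
    have huV : u ∈ Vz z := mem_Vz hiz huf
    obtain ⟨wi, hwi, hwu⟩ := hvert u huV
    refine ⟨(⟨j, by omega⟩, ⟨t, ht3⟩, ⟨wi, hwi⟩), hj, ?_⟩
    show g ((i:ℕ)+1) = edgeAt (g j) t ∪ {vertAt τ L wi}
    rw [hedge, hwu]
    apply Finset.Subset.antisymm
    · intro y hy
      by_cases hye : y ∈ e
      · exact Finset.mem_union_left _ hye
      · have : y ∈ g ((i:ℕ)+1) \ e := Finset.mem_sdiff.mpr ⟨hy, hye⟩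
        rw [hu] at this
        exact Finset.mem_union_right _ this
    · intro y hy
      rcases Finset.mem_union.mp hy with hy | hy
      · exact hei hy
      · rw [Finset.mem_singleton.mp hy]; exact huf
  set c : Code n k := (L, fun i => (hbuild i).choose) with hc
  have hdec : ∀ i, i < k → decodeFaces τ k c i = g i := by
    intro i
    induction i using Nat.strong_induction_on with
    | _ i ih =>
      match i with
      | 0 => intro _; rw [decodeFaces_zero, hg0]
      | (i+1) =>
        intro hik
        have hi1 : i < k - 1 := by omega
        obtain ⟨hle, heq⟩ := (hbuild ⟨i, hi1⟩).choose_spec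
        have hc2 : c.2 ⟨i, hi1⟩ = (hbuild ⟨i, hi1⟩).choose := rfl
        rw [decodeFaces_succ τ k c i hi1]
        rw [hc2]
        have hmin : min (((hbuild ⟨i, hi1⟩).choose.1 : ℕ)) i = ((hbuild ⟨i, hi1⟩).choose.1 : ℕ) :=
          min_eq_left hle
        rw [hmin, ih _ (by omega) (by omega)]
        exact heq.symm
  refine ⟨c, ?_⟩
  unfold decodeSet
  rw [← himg]
  apply Finset.image_congr
  intro i hi
  exact hdec i (Finset.mem_range.mp (by simpa using hi))

open Classical in
lemma reduction [NeZero n] {Y : Finset (Finset (Fin n))} (hY : Y ⊆ triangles n)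
    {τ : Finset (Fin n)} (hτ3 : τ.card = 3) (hτY : τ ∉ Y) {K : ℕ}
    (hsmall : ∃ y ⊆ Y, IsFilling y τ ∧ y.card < K) :
    ∃ k ∈ Finset.Icc 2 K, ∃ c : Code n k,
      decodeSet τ k c \ {τ} ⊆ Y ∧ (decodeSet τ k c \ {τ}).card = k - 1 := by
  classical
  -- pick a filling of minimum cardinality
  set F := Y.powerset.filter (fun y => IsFilling y τ) with hF
  have hFne : F.Nonempty := by
    obtain ⟨y, hyY, hfill, _⟩ := hsmall
    exact ⟨y, Finset.mem_filter.mpr ⟨Finset.mem_powerset.mpr hyY, hfill⟩⟩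
  obtain ⟨y, hyF, hymin⟩ := Finset.exists_min_image F (fun y => y.card) hFne
  obtain ⟨hyY, hfill⟩ := Finset.mem_filter.mp hyF
  rw [Finset.mem_powerset] at hyY
  have hycard : y.card < K := by
    obtain ⟨y', hy'Y, hfill', hy'c⟩ := hsmall
    have := hymin y' (Finset.mem_filter.mpr ⟨Finset.mem_powerset.mpr hy'Y, hfill'⟩)
    omega
  -- y is nonempty
  have hyne : y.Nonempty := by
    obtain ⟨e, he, he2⟩ := Finset.exists_subset_card_eq (s := τ) (n := 2) (by omega)
    have := hfill.2 e he2
    rw [if_pos he] at this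
    have hpos : 0 < (y.filter (fun f => e ⊆ f)).card := by omega
    obtain ⟨f, hf⟩ := Finset.card_pos.mp hpos
    exact ⟨f, Finset.mem_filter.mp hf |>.1⟩
  have hτy : τ ∉ y := fun hc => hτY (hyY hc)
  set z := insert τ y with hz
  set k := y.card + 1 with hk
  have hzcard : z.card = k := by rw [hz, Finset.card_insert_of_notMem hτy]
  have hzτ : τ ∈ z := Finset.mem_insert_self τ y
  have hz3 : ∀ f ∈ z, f.card = 3 := by
    intro f hf
    rcases Finset.mem_insert.mp hf with rfl | hf
    · exact hτ3
    · exact hfill.1 f hf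
  have hfilterz : ∀ e : Finset (Fin n),
      (z.filter (fun f => e ⊆ f)).card
        = (y.filter (fun f => e ⊆ f)).card + (if e ⊆ τ then 1 else 0) := by
    intro e
    rw [hz, Finset.filter_insert]
    split
    · rw [Finset.card_insert_of_notMem (fun hc => hτy (Finset.mem_filter.mp hc).1)]
    · omega
  have hcyc : CycP z := by
    intro e he2
    rw [hfilterz e]
    have h1 := hfill.2 e he2
    by_cases hc : e ⊆ τ
    · rw [if_pos hc] at h1 ⊢; omega
    · rw [if_neg hc] at h1 ⊢; omega
  have hmin : ∀ z' ⊆ z, CycP z' → z' = ∅ ∨ z' = z := by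
    intro z' hz'z hz'cyc
    by_cases hτz' : τ ∈ z'
    · right
      set y' := z'.erase τ with hy'
      have hy'y : y' ⊆ y := by
        intro f hf
        obtain ⟨hfτ, hfz'⟩ := Finset.mem_erase.mp hf
        rcases Finset.mem_insert.mp (hz'z hfz') with rfl | h
        · exact absurd rfl hfτ
        · exact h
      have hz'eq : z' = insert τ y' := (Finset.insert_erase hτz').symm
      have hτy' : τ ∉ y' := Finset.notMem_erase τ z'
      have hfiltery' : ∀ e : Finset (Fin n),
          (z'.filter (fun f => e ⊆ f)).card
            = (y'.filter (fun f => e ⊆ f)).card + (if e ⊆ τ then 1 else 0) := by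
        intro e
        rw [hz'eq, Finset.filter_insert]
        split
        · rw [Finset.card_insert_of_notMem (fun hc => hτy' (Finset.mem_filter.mp hc).1)]
        · omega
      have hfill' : IsFilling y' τ := by
        constructor
        · intro f hf; exact hfill.1 f (hy'y hf)
        · intro e he2
          have h1 := hz'cyc e he2
          rw [hfiltery' e] at h1
          by_cases hc : e ⊆ τ
          · rw [if_pos hc] at h1 ⊢; omega
          · rw [if_neg hc] at h1 ⊢; omega
      have hminle : y.card ≤ y'.card :=
        hymin y' (Finset.mem_filter.mpr ⟨Finset.mem_powerset.mpr (hy'y.trans hyY), hfill'⟩)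
      have : y' = y := Finset.eq_of_subset_of_card_le hy'y hminle
      rw [hz'eq, this, ← hz]
    · left
      have hz'y : z' ⊆ y := by
        intro f hf
        rcases Finset.mem_insert.mp (hz'z hf) with rfl | h
        · exact absurd hf hτz'
        · exact h
      set y'' := y \ z' with hy''
      have hfill'' : IsFilling y'' τ := by
        constructor
        · intro f hf; exact hfill.1 f ((Finset.sdiff_subset) hf)
        · intro e he2
          have hsub : z'.filter (fun f => e ⊆ f) ⊆ y.filter (fun f => e ⊆ f) :=
            Finset.filter_subset_filter _ hz'y
          have hfs : (y \ z').filter (fun f => e ⊆ f)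
              = y.filter (fun f => e ⊆ f) \ z'.filter (fun f => e ⊆ f) := by
            ext f
            simp only [Finset.mem_sdiff, Finset.mem_filter]
            tauto
          have hcards : (y''.filter (fun f => e ⊆ f)).card
              = (y.filter (fun f => e ⊆ f)).card - (z'.filter (fun f => e ⊆ f)).card := by
            rw [hy'', hfs, Finset.card_sdiff_of_subset hsub]
          have h1 := hfill.2 e he2
          have h2 := hz'cyc e he2
          have h3 := Finset.card_le_card hsub
          rw [hcards]
          by_cases hc : e ⊆ τ
          · rw [if_pos hc] at h1 ⊢; omega
          · rw [if_neg hc] at h1 ⊢; omega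
      have hminle : y.card ≤ y''.card :=
        hymin y'' (Finset.mem_filter.mpr
          ⟨Finset.mem_powerset.mpr ((Finset.sdiff_subset).trans hyY), hfill''⟩)
      have hcard'' : y''.card = y.card - z'.card := by
        rw [hy'', Finset.card_sdiff_of_subset hz'y]
      have : z'.card = 0 := by
        have := Finset.card_le_card hz'y
        omega
      exact Finset.card_eq_zero.mp this
  have hconn := conn_of_min hzτ hcyc hmin
  have hvb := vertex_bound hzτ hz3 hcyc hmin
  rw [hzcard] at hvb
  have hy1 : 1 ≤ y.card := Finset.card_pos.mpr hyne
  have h2k : 2 ≤ k := by rw [hk]; omega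
  have hkK : k ≤ K := by rw [hk]; omega
  obtain ⟨c, hc⟩ := encode_exists hzτ hz3 hzcard h2k hvb hconn
  refine ⟨k, Finset.mem_Icc.mpr ⟨h2k, hkK⟩, c, ?_, ?_⟩
  · rw [hc]
    intro f hf
    obtain ⟨hfz, hfτ⟩ := Finset.mem_sdiff.mp hf
    rcases Finset.mem_insert.mp hfz with rfl | h
    · exact absurd (Finset.mem_singleton_self f) hfτ
    · exact hyY h
  · rw [hc]
    have : z \ {τ} = y := by
      rw [hz, ← Finset.erase_eq, Finset.erase_insert hτy]
    rw [this]
    omega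


-- ANALYTIС LAYER (appended into namespace S9)

open Classical in
noncomputable def Xcnt (n : ℕ) (α : ℝ) (Y : Finset (Finset (Fin n))) : ℕ :=
  ((triangles n).filter (fun τ => ∃ y ⊆ Y, IsFilling y τ ∧ (y.card : ℝ) < (n:ℝ)^α)).card

lemma TY_big {α : ℝ} {Y : Finset (Finset (Fin n))} {τ : Finset (Fin n)}
    (h : ¬ ∃ y ⊆ Y, IsFilling y τ ∧ (y.card : ℝ) < (n:ℝ)^α) :
    TY n α Y τ = (n:ℝ)^α := by
  unfold TY
  split
  case isTrue hex =>
    apply min_eq_left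
    have hMne : {m : ℕ | ∃ y ⊆ Y, IsFilling y τ ∧ y.card = m}.Nonempty := by
      obtain ⟨y, hy, hf⟩ := hex
      exact ⟨y.card, y, hy, hf, rfl⟩
    obtain ⟨y0, hy0Y, hfil0, hc0⟩ := Nat.sInf_mem hMne
    by_contra hlt
    push_neg at hlt
    exact h ⟨y0, hy0Y, hfil0, by rw [hc0]; exact hlt⟩
  case isFalse => rfl

open Classical in
lemma sum_TY_ge (α : ℝ) (Y : Finset (Finset (Fin n))) :
    ((((triangles n).filter
        (fun τ => ¬ ∃ y ⊆ Y, IsFilling y τ ∧ (y.card : ℝ) < (n:ℝ)^α)).card : ℝ))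
        * ((n:ℝ)^α)^2
      ≤ ∑ τ ∈ triangles n, TY n α Y τ ^ 2 := by
  classical
  have hsub : (triangles n).filter
      (fun τ => ¬ ∃ y ⊆ Y, IsFilling y τ ∧ (y.card : ℝ) < (n:ℝ)^α) ⊆ triangles n :=
    Finset.filter_subset _ _
  calc ((((triangles n).filter
        (fun τ => ¬ ∃ y ⊆ Y, IsFilling y τ ∧ (y.card : ℝ) < (n:ℝ)^α)).card : ℝ)) * ((n:ℝ)^α)^2
      = ∑ τ ∈ (triangles n).filter
          (fun τ => ¬ ∃ y ⊆ Y, IsFilling y τ ∧ (y.card : ℝ) < (n:ℝ)^α), ((n:ℝ)^α)^2 := by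
        rw [Finset.sum_const, nsmul_eq_mul]
    _ = ∑ τ ∈ (triangles n).filter
          (fun τ => ¬ ∃ y ⊆ Y, IsFilling y τ ∧ (y.card : ℝ) < (n:ℝ)^α), TY n α Y τ ^ 2 := by
        refine Finset.sum_congr rfl fun τ hτ => ?_
        rw [TY_big (Finset.mem_filter.mp hτ).2]
    _ ≤ ∑ τ ∈ triangles n, TY n α Y τ ^ 2 := by
        refine Finset.sum_le_sum_of_subset_of_nonneg hsub fun τ _ _ => sq_nonneg _

open Classical in
lemma Xcnt_le (α : ℝ) (Y : Finset (Finset (Fin n))) :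
    Xcnt n α Y ≤ (triangles n).card := Finset.card_filter_le _ _

open Classical in
lemma Xcnt_add (α : ℝ) (Y : Finset (Finset (Fin n))) :
    Xcnt n α Y + ((triangles n).filter
        (fun τ => ¬ ∃ y ⊆ Y, IsFilling y τ ∧ (y.card : ℝ) < (n:ℝ)^α)).card
      = (triangles n).card := by
  unfold Xcnt
  exact Finset.card_filter_add_card_filter_not _

lemma triangles_card : (triangles n).card = n.choose 3 := by
  have : triangles n = Finset.powersetCard 3 (Finset.univ : Finset (Fin n)) := by
    rw [Finset.powersetCard_eq_filter, Finset.powerset_univ]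
    rfl
  rw [this, Finset.card_powersetCard, Finset.card_univ, Fintype.card_fin]

lemma choose3_ge (hn : 4 ≤ n) : n^3 ≤ 24 * n.choose 3 := by
  have hd : Nat.descFactorial n 3 = 6 * n.choose 3 := by
    rw [Nat.descFactorial_eq_factorial_mul_choose]
    norm_num [Nat.factorial]
  have hdv : Nat.descFactorial n 3 = (n - 2) * ((n - 1) * n) := by
    rw [Nat.descFactorial_succ, Nat.descFactorial_succ, Nat.descFactorial_one]
  obtain ⟨a, rfl⟩ : ∃ a, n = a + 4 := ⟨n - 4, by omega⟩
  have h2 : a + 4 - 2 = a + 2 := by omega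
  have h1 : a + 4 - 1 = a + 3 := by omega
  rw [hdv, h1, h2] at hd
  nlinarith [hd]

open Classical in
lemma prob_small_le [NeZero n] {p : ℝ} (hp0 : 0 ≤ p) (hp1 : p ≤ 1)
    {τ : Finset (Fin n)} (hτ : τ ∈ triangles n) (K : ℕ) :
    LMprob n p {Y | ∃ y ⊆ Y, IsFilling y τ ∧ y.card < K}
      ≤ p + ∑ k ∈ Finset.Icc 2 K, (Fintype.card (Code n k) : ℝ) * p ^ (k - 1) := by
  classical
  have hτ3 : τ.card = 3 := by
    have := Finset.mem_filter.mp hτ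
    exact this.2
  have hstep1 : LMprob n p {Y | ∃ y ⊆ Y, IsFilling y τ ∧ y.card < K}
      ≤ LMprob n p {Y | τ ∈ Y}
        + LMprob n p {Y | (∃ y ⊆ Y, IsFilling y τ ∧ y.card < K) ∧ τ ∉ Y} := by
    refine LMprob_le_add hp0 hp1 fun Y _ hY => ?_
    by_cases h : τ ∈ Y
    · exact Or.inl h
    · exact Or.inr ⟨hY, h⟩
  have hstep2 : LMprob n p {Y | τ ∈ Y} = p := by
    have : {Y : Finset (Finset (Fin n)) | τ ∈ Y} = {Y | {τ} ⊆ Y} := by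
      ext Y; simp
    rw [this, LMprob_superset hp0 hp1 (by simpa using hτ), Finset.card_singleton, pow_one]
  have hstep3 : LMprob n p {Y | (∃ y ⊆ Y, IsFilling y τ ∧ y.card < K) ∧ τ ∉ Y}
      ≤ ∑ k ∈ Finset.Icc 2 K, (Fintype.card (Code n k) : ℝ) * p ^ (k - 1) := by
    have hub : LMprob n p {Y | (∃ y ⊆ Y, IsFilling y τ ∧ y.card < K) ∧ τ ∉ Y}
        ≤ ∑ s ∈ (Finset.Icc 2 K).sigma (fun k => (Finset.univ : Finset (Code n k)).filter
            (fun c => (decodeSet τ k c \ {τ}).card = k - 1 ∧ decodeSet τ k c \ {τ} ⊆ triangles n)),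
            LMprob n p {Y | decodeSet τ s.1 s.2 \ {τ} ⊆ Y} := by
      refine LMprob_le_sum hp0 hp1 fun Y hYpw hY => ?_
      obtain ⟨hsm, hτY⟩ := hY
      have hYt : Y ⊆ triangles n := Finset.mem_powerset.mp hYpw
      obtain ⟨k, hkIcc, c, hcY, hccard⟩ := reduction hYt hτ3 hτY hsm
      refine ⟨⟨k, c⟩, Finset.mem_sigma.mpr ⟨hkIcc, Finset.mem_filter.mpr ⟨Finset.mem_univ _,
        hccard, hcY.trans hYt⟩⟩, hcY⟩
    refine le_trans hub ?_
    rw [Finset.sum_sigma]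
    refine Finset.sum_le_sum fun k _ => ?_
    have hinner : ∀ c ∈ (Finset.univ : Finset (Code n k)).filter
        (fun c => (decodeSet τ k c \ {τ}).card = k - 1 ∧ decodeSet τ k c \ {τ} ⊆ triangles n),
        LMprob n p {Y | decodeSet τ k c \ {τ} ⊆ Y} = p ^ (k - 1) := by
      intro c hc
      obtain ⟨_, hcard, hsubtr⟩ := Finset.mem_filter.mp hc
      rw [LMprob_superset hp0 hp1 hsubtr, hcard]
    rw [Finset.sum_congr rfl hinner, Finset.sum_const, nsmul_eq_mul]
    refine mul_le_mul_of_nonneg_right ?_ (pow_nonneg hp0 _)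
    exact_mod_cast Nat.cast_le.mpr (le_trans (Finset.card_filter_le _ _) (le_of_eq (Finset.card_univ)))
  calc LMprob n p {Y | ∃ y ⊆ Y, IsFilling y τ ∧ y.card < K}
      ≤ LMprob n p {Y | τ ∈ Y}
        + LMprob n p {Y | (∃ y ⊆ Y, IsFilling y τ ∧ y.card < K) ∧ τ ∉ Y} := hstep1
    _ ≤ p + ∑ k ∈ Finset.Icc 2 K, (Fintype.card (Code n k) : ℝ) * p ^ (k - 1) := by
        rw [hstep2]
        exact add_le_add_right hstep3 _

lemma card_code (k : ℕ) :
    Fintype.card (Code n k) = n ^ (ncap k) * (k * (3 * vcap k)) ^ (k - 1) := by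
  simp [Fintype.card_fun]

lemma term_le {ε α : ℝ} (hα : 0 < α) {n : ℕ} (hn1 : 1 ≤ n) {k K : ℕ}
    (hk2 : 2 ≤ k) (hkK : k ≤ K) (hK : (K:ℝ) ≤ 2 * (n:ℝ)^α) :
    (Fintype.card (Code n k) : ℝ) * ((n:ℝ)^(ε-1)) ^ (k - 1)
      ≤ (n:ℝ)^(-(1/2):ℝ) * (24 * (n:ℝ)^(2*α+ε-1/2)) ^ (k - 1) := by
  have hn0 : (0:ℝ) < n := by exact_mod_cast Nat.lt_of_lt_of_le Nat.zero_lt_one hn1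
  have h1n : (1:ℝ) ≤ n := by exact_mod_cast hn1
  have hcast : (Fintype.card (Code n k) : ℝ)
      = (n:ℝ)^(((ncap k : ℕ)):ℝ) * (((k * (3 * vcap k) : ℕ)):ℝ)^(k-1) := by
    rw [card_code, Real.rpow_natCast]
    push_cast
    ring
  -- exponent bound for the vertex part
  have hncap : ((ncap k : ℕ):ℝ) ≤ ((k:ℝ) - 2)/2 := by
    have hnat : 2 * ncap k ≤ k - 2 := by
      unfold ncap vcap
      omega
    have h2 : (2:ℝ) ≤ (k:ℝ) := by exact_mod_cast hk2
    have := (Nat.cast_le (α := ℝ)).mpr hnat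
    push_cast at this
    have hsub : ((k - 2 : ℕ) : ℝ) = (k:ℝ) - 2 := by
      have : (2:ℕ) ≤ k := hk2
      push_cast [Nat.cast_sub this]
      ring
    rw [hsub] at this
    linarith
  have hA : (n:ℝ)^(((ncap k : ℕ)):ℝ) ≤ (n:ℝ)^(((k:ℝ) - 2)/2) :=
    Real.rpow_le_rpow_of_exponent_le h1n hncap
  -- base bound for the face part
  have hvcap : vcap k ≤ 2 * k := by unfold vcap; omega
  have hB : (((k * (3 * vcap k) : ℕ)):ℝ) ≤ 24 * (n:ℝ)^(2*α) := by
    have hnat : k * (3 * vcap k) ≤ 6 * k^2 := by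
      calc k * (3 * vcap k) ≤ k * (3 * (2 * k)) := by
            exact Nat.mul_le_mul_left k (Nat.mul_le_mul_left 3 hvcap)
        _ = 6 * k^2 := by ring
    have h1 : (((k * (3 * vcap k) : ℕ)):ℝ) ≤ 6 * (k:ℝ)^2 := by exact_mod_cast hnat
    have hkR : (k:ℝ) ≤ 2 * (n:ℝ)^α := le_trans (by exact_mod_cast hkK) hK
    have hk0 : (0:ℝ) ≤ (k:ℝ) := by positivity
    have hsq : (k:ℝ)^2 ≤ (2 * (n:ℝ)^α)^2 := by
      apply pow_le_pow_left₀ hk0 hkR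
    have hexp : (2 * (n:ℝ)^α)^2 = 4 * (n:ℝ)^(2*α) := by
      have h2 : (n:ℝ)^(2*α) = (n:ℝ)^α * (n:ℝ)^α := by
        rw [two_mul, Real.rpow_add hn0]
      rw [h2]; ring
    nlinarith [hsq, hexp]
  have hp0 : (0:ℝ) ≤ (n:ℝ)^(ε-1) := Real.rpow_nonneg hn0.le _
  have hBn : (0:ℝ) ≤ (((k * (3 * vcap k) : ℕ)):ℝ) := by positivity
  calc (Fintype.card (Code n k) : ℝ) * ((n:ℝ)^(ε-1)) ^ (k - 1)
      = (n:ℝ)^(((ncap k : ℕ)):ℝ) * ((((k * (3 * vcap k) : ℕ)):ℝ)^(k-1) * ((n:ℝ)^(ε-1)) ^ (k - 1)) := by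
        rw [hcast]; ring
    _ ≤ (n:ℝ)^(((k:ℝ) - 2)/2) * ((24 * (n:ℝ)^(2*α))^(k-1) * ((n:ℝ)^(ε-1)) ^ (k - 1)) := by
        refine mul_le_mul hA ?_ ?_ (Real.rpow_nonneg hn0.le _)
        · refine mul_le_mul_of_nonneg_right (pow_le_pow_left₀ hBn hB _) (pow_nonneg hp0 _)
        · positivity
    _ = (n:ℝ)^(((k:ℝ) - 2)/2) * (24 * (n:ℝ)^(2*α+ε-1))^(k-1) := by
        rw [← mul_pow]
        congr 2
        rw [mul_assoc, ← Real.rpow_add hn0]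
        ring_nf
    _ = (n:ℝ)^(-(1/2):ℝ) * (24 * (n:ℝ)^(2*α+ε-1/2)) ^ (k - 1) := by
        have hm : ((k - 1 : ℕ):ℝ) = (k:ℝ) - 1 := by
          have : (1:ℕ) ≤ k := by omega
          push_cast [Nat.cast_sub this]
          ring
        rw [mul_pow, mul_pow,
          ← Real.rpow_natCast ((n:ℝ)^(2*α+ε-1)) (k-1),
          ← Real.rpow_natCast ((n:ℝ)^(2*α+ε-1/2)) (k-1),
          ← Real.rpow_mul hn0.le, ← Real.rpow_mul hn0.le, hm,
          ← mul_assoc, ← mul_assoc, mul_comm ((n:ℝ)^(((k:ℝ)-2)/2)) ((24:ℝ)^(k-1)),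
          mul_comm ((n:ℝ)^(-(1/2):ℝ)) ((24:ℝ)^(k-1)), mul_assoc, mul_assoc,
          ← Real.rpow_add hn0, ← Real.rpow_add hn0]
        congr 1
        ring
lemma geom_bound {K : ℕ} {r : ℝ} (hr0 : 0 ≤ r) (hr : r ≤ 1/2) :
    ∑ k ∈ Finset.Icc 2 K, r ^ (k - 1) ≤ 2 * r := by
  have key : ∀ M : ℕ, ∑ j ∈ Finset.range M, r ^ j ≤ 2 := by
    intro M
    calc ∑ j ∈ Finset.range M, r ^ j ≤ ∑ j ∈ Finset.range M, (1/2:ℝ) ^ j :=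
          Finset.sum_le_sum fun j _ => pow_le_pow_left₀ hr0 hr j
      _ = ((1/2:ℝ)^M - 1)/((1/2) - 1) := geom_sum_eq (by norm_num) M
      _ ≤ 2 := by
          have h0 : (0:ℝ) ≤ (1/2:ℝ)^M := by positivity
          have h1 : ((1/2:ℝ)^M - 1)/((1/2) - 1) = 2 - 2 * (1/2:ℝ)^M := by ring
          rw [h1]
          linarith
  have hre : ∑ k ∈ Finset.Icc 2 K, r ^ (k - 1) = ∑ j ∈ Finset.range (K - 1), r ^ (j + 1) := by
    refine Finset.sum_nbij' (fun k => k - 2) (fun j => j + 2) ?_ ?_ ?_ ?_ ?_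
    · intro k hk
      rw [Finset.mem_Icc] at hk
      show k - 2 ∈ Finset.range (K - 1)
      rw [Finset.mem_range]
      omega
    · intro j hj
      rw [Finset.mem_range] at hj
      show j + 2 ∈ Finset.Icc 2 K
      rw [Finset.mem_Icc]
      omega
    · intro k hk
      rw [Finset.mem_Icc] at hk
      show k - 2 + 2 = k
      omega
    · intro j _
      show j + 2 - 2 = j
      omega
    · intro k hk
      rw [Finset.mem_Icc] at hk
      show r ^ (k - 1) = r ^ (k - 2 + 1)
      congr 1
      omega
  rw [hre]
  calc ∑ j ∈ Finset.range (K - 1), r ^ (j + 1)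
      = r * ∑ j ∈ Finset.range (K - 1), r ^ j := by
        rw [Finset.mul_sum]
        exact Finset.sum_congr rfl fun j _ => by rw [pow_succ]; ring
    _ ≤ r * 2 := mul_le_mul_of_nonneg_left (key _) hr0
    _ = 2 * r := by ring

open Classical in
lemma exp_X (p α : ℝ) :
    ∑ Y ∈ (triangles n).powerset, w n p Y * (Xcnt n α Y : ℝ)
      = ∑ τ ∈ triangles n, LMprob n p
          {Y | ∃ y ⊆ Y, IsFilling y τ ∧ (y.card:ℝ) < (n:ℝ)^α} := by
  have h1 : ∀ Y : Finset (Finset (Fin n)), (Xcnt n α Y : ℝ)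
      = ∑ τ ∈ triangles n, if (∃ y ⊆ Y, IsFilling y τ ∧ (y.card:ℝ) < (n:ℝ)^α) then (1:ℝ) else 0 := by
    intro Y
    unfold Xcnt
    rw [Finset.card_filter, Nat.cast_sum]
    exact Finset.sum_congr rfl fun τ _ => by split <;> simp
  calc ∑ Y ∈ (triangles n).powerset, w n p Y * (Xcnt n α Y : ℝ)
      = ∑ Y ∈ (triangles n).powerset, ∑ τ ∈ triangles n,
          (if (∃ y ⊆ Y, IsFilling y τ ∧ (y.card:ℝ) < (n:ℝ)^α) then w n p Y else 0) := by
        refine Finset.sum_congr rfl fun Y _ => ?_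
        rw [h1, Finset.mul_sum]
        exact Finset.sum_congr rfl fun τ _ => by split <;> simp
    _ = ∑ τ ∈ triangles n, ∑ Y ∈ (triangles n).powerset,
          (if (∃ y ⊆ Y, IsFilling y τ ∧ (y.card:ℝ) < (n:ℝ)^α) then w n p Y else 0) :=
        Finset.sum_comm
    _ = ∑ τ ∈ triangles n, LMprob n p
          {Y | ∃ y ⊆ Y, IsFilling y τ ∧ (y.card:ℝ) < (n:ℝ)^α} := by
        refine Finset.sum_congr rfl fun τ _ => ?_
        rw [LMprob_eq]
        refine Finset.sum_congr rfl fun Y _ => ?_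
        by_cases h : ∃ y ⊆ Y, IsFilling y τ ∧ ((y.card:ℝ)) < (n:ℝ)^α
        · rw [if_pos h, if_pos (by exact h)]
        · rw [if_neg h, if_neg (by exact h)]

set_option maxHeartbeats 2000000 in
open Classical in
lemma main_bound {ε α : ℝ} (hε : 0 < ε) (hα : 0 < α) (hsm : 2*α + ε < 1/2) {n : ℕ}
    (hn4 : 4 ≤ n) (hhalf : 24 * (n:ℝ)^(2*α+ε-1/2) ≤ 1/2) :
    1 - 2*((n:ℝ)^(ε-1) + 2 * (n:ℝ)^(-(1/2):ℝ) * (24 * (n:ℝ)^(2*α+ε-1/2)))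
      ≤ LMprob n ((n:ℝ)^(ε-1))
          {Y | (1/48:ℝ) * (n:ℝ)^((3:ℝ)+2*α) ≤ ∑ τ ∈ triangles n, TY n α Y τ ^ 2} := by
  classical
  haveI : NeZero n := ⟨by omega⟩
  have hn1 : 1 ≤ n := by omega
  have hn0 : (0:ℝ) < n := by exact_mod_cast (by omega : 0 < n)
  have h1n : (1:ℝ) ≤ n := by exact_mod_cast hn1
  set p := (n:ℝ)^(ε-1) with hp
  have hp0 : 0 ≤ p := Real.rpow_nonneg hn0.le _
  have hp1 : p ≤ 1 := Real.rpow_le_one_of_one_le_of_nonpos h1n (by linarith)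
  set K := ⌊(n:ℝ)^α⌋₊ + 1 with hK
  have hKle : (K:ℝ) ≤ 2 * (n:ℝ)^α := by
    have hna1 : (1:ℝ) ≤ (n:ℝ)^α := by
      calc (1:ℝ) = (n:ℝ)^(0:ℝ) := (Real.rpow_zero _).symm
        _ ≤ (n:ℝ)^α := Real.rpow_le_rpow_of_exponent_le h1n hα.le
    have hfl := Nat.floor_le (Real.rpow_nonneg hn0.le α)
    push_cast [hK]
    linarith
  set Tc := (triangles n).card with hTc
  have hTc3 : n^3 ≤ 24 * Tc := by rw [hTc, triangles_card]; exact choose3_ge hn4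
  have hTcpos : 0 < Tc := by
    have h64 : 4^3 ≤ n^3 := Nat.pow_le_pow_left hn4 3
    omega
  have hTcR : (0:ℝ) < (Tc:ℝ) := by exact_mod_cast hTcpos
  have hperτ : ∀ τ ∈ triangles n,
      LMprob n p {Y | ∃ y ⊆ Y, IsFilling y τ ∧ (y.card:ℝ) < (n:ℝ)^α}
        ≤ p + 2 * (n:ℝ)^(-(1/2):ℝ) * (24 * (n:ℝ)^(2*α+ε-1/2)) := by
    intro τ hτ
    have hmono : LMprob n p {Y | ∃ y ⊆ Y, IsFilling y τ ∧ (y.card:ℝ) < (n:ℝ)^α}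
        ≤ LMprob n p {Y | ∃ y ⊆ Y, IsFilling y τ ∧ y.card < K} := by
      refine LMprob_mono hp0 hp1 fun Y _ hY => ?_
      obtain ⟨y, hyY, hfil, hyc⟩ := hY
      exact ⟨y, hyY, hfil, by
        rw [hK]
        exact Nat.lt_succ_of_le (Nat.le_floor hyc.le)⟩
    refine le_trans hmono (le_trans (prob_small_le hp0 hp1 hτ K) ?_)
    refine add_le_add_right ?_ p
    have hterm : ∀ k ∈ Finset.Icc 2 K, (Fintype.card (Code n k) : ℝ) * p ^ (k-1)
        ≤ (n:ℝ)^(-(1/2):ℝ) * (24 * (n:ℝ)^(2*α+ε-1/2)) ^ (k - 1) := by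
      intro k hk
      rw [Finset.mem_Icc] at hk
      exact term_le hα hn1 hk.1 hk.2 hKle
    calc ∑ k ∈ Finset.Icc 2 K, (Fintype.card (Code n k) : ℝ) * p ^ (k-1)
        ≤ ∑ k ∈ Finset.Icc 2 K, (n:ℝ)^(-(1/2):ℝ) * (24 * (n:ℝ)^(2*α+ε-1/2)) ^ (k - 1) :=
          Finset.sum_le_sum hterm
      _ = (n:ℝ)^(-(1/2):ℝ) * ∑ k ∈ Finset.Icc 2 K, (24 * (n:ℝ)^(2*α+ε-1/2)) ^ (k - 1) := by
          rw [Finset.mul_sum]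
      _ ≤ (n:ℝ)^(-(1/2):ℝ) * (2 * (24 * (n:ℝ)^(2*α+ε-1/2))) :=
          mul_le_mul_of_nonneg_left (geom_bound (by positivity) hhalf)
            (Real.rpow_nonneg hn0.le _)
      _ = 2 * (n:ℝ)^(-(1/2):ℝ) * (24 * (n:ℝ)^(2*α+ε-1/2)) := by ring
  set q := p + 2 * (n:ℝ)^(-(1/2):ℝ) * (24 * (n:ℝ)^(2*α+ε-1/2)) with hq
  have hq0 : 0 ≤ q := by rw [hq]; positivity
  have hmarkov : LMprob n p {Y | (Tc:ℝ)/2 ≤ (Xcnt n α Y : ℝ)} ≤ 2 * q := by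
    have h1 := LMprob_markov hp0 hp1 (fun Y => (Xcnt n α Y : ℝ)) (fun Y => by positivity)
      (show (0:ℝ) < (Tc:ℝ)/2 by linarith)
    refine le_trans h1 ?_
    rw [div_le_iff₀ (by linarith), exp_X]
    calc ∑ τ ∈ triangles n, LMprob n p {Y | ∃ y ⊆ Y, IsFilling y τ ∧ (y.card:ℝ) < (n:ℝ)^α}
        ≤ ∑ _τ ∈ triangles n, q := Finset.sum_le_sum hperτ
      _ = (Tc:ℝ) * q := by rw [Finset.sum_const, nsmul_eq_mul, hTc]
      _ ≤ 2 * q * ((Tc:ℝ)/2) := by nlinarith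
  have hincl : ∀ Y ∈ (triangles n).powerset,
      Y ∈ {Y : Finset (Finset (Fin n)) | ¬ ((Tc:ℝ)/2 ≤ (Xcnt n α Y : ℝ))} →
      Y ∈ {Y : Finset (Finset (Fin n)) |
        (1/48:ℝ) * (n:ℝ)^((3:ℝ)+2*α) ≤ ∑ τ ∈ triangles n, TY n α Y τ ^ 2} := by
    intro Y _ hY
    simp only [Set.mem_setOf_eq, not_le] at hY ⊢
    have hsum := sum_TY_ge (n := n) α Y
    have hadd := Xcnt_add (n := n) α Y
    set m := ((triangles n).filter
        (fun τ => ¬ ∃ y ⊆ Y, IsFilling y τ ∧ (y.card : ℝ) < (n:ℝ)^α)).card with hm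
    have hmR : (Tc:ℝ)/2 ≤ (m:ℝ) := by
      have hcast : (m:ℝ) = (Tc:ℝ) - (Xcnt n α Y : ℝ) := by
        rw [hTc, ← hadd]
        push_cast
        ring
      rw [hcast]
      linarith
    have hpow : ((n:ℝ)^α)^2 = (n:ℝ)^(2*α) := by
      have h2 : (n:ℝ)^(2*α) = (n:ℝ)^α * (n:ℝ)^α := by rw [two_mul, Real.rpow_add hn0]
      rw [h2]; ring
    have h3 : (n:ℝ)^((3:ℝ)+2*α) = (n:ℝ)^(3:ℕ) * (n:ℝ)^(2*α) := by
      rw [Real.rpow_add hn0]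
      congr 1
      rw [← Real.rpow_natCast (n:ℝ) 3]
      norm_num
    have hTc48 : (n:ℝ)^(3:ℕ) ≤ 24 * (Tc:ℝ) := by exact_mod_cast hTc3
    have h2a0 : (0:ℝ) ≤ (n:ℝ)^(2*α) := Real.rpow_nonneg hn0.le _
    calc (1/48:ℝ) * (n:ℝ)^((3:ℝ)+2*α) = (1/48:ℝ) * ((n:ℝ)^(3:ℕ) * (n:ℝ)^(2*α)) := by rw [h3]
      _ ≤ (1/48) * (24 * (Tc:ℝ) * (n:ℝ)^(2*α)) := by
          nlinarith [mul_le_mul_of_nonneg_right hTc48 h2a0]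
      _ = ((Tc:ℝ)/2) * (n:ℝ)^(2*α) := by ring
      _ ≤ (m:ℝ) * (n:ℝ)^(2*α) := mul_le_mul_of_nonneg_right hmR h2a0
      _ = (m:ℝ) * ((n:ℝ)^α)^2 := by rw [hpow]
      _ ≤ ∑ τ ∈ triangles n, TY n α Y τ ^ 2 := hsum
  have hseteq : {Y : Finset (Finset (Fin n)) |
        Y ∉ {Y : Finset (Finset (Fin n)) | ¬ ((Tc:ℝ)/2 ≤ (Xcnt n α Y : ℝ))}}
      = {Y : Finset (Finset (Fin n)) | (Tc:ℝ)/2 ≤ (Xcnt n α Y : ℝ)} := by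
    ext Y
    simp [Set.mem_setOf_eq]
  have hcompl := LMprob_compl hp0 hp1
    {Y : Finset (Finset (Fin n)) | ¬ ((Tc:ℝ)/2 ≤ (Xcnt n α Y : ℝ))}
  rw [hseteq] at hcompl
  calc 1 - 2*q ≤ 1 - LMprob n p {Y | (Tc:ℝ)/2 ≤ (Xcnt n α Y : ℝ)} := by linarith
    _ = LMprob n p {Y : Finset (Finset (Fin n)) | ¬ ((Tc:ℝ)/2 ≤ (Xcnt n α Y : ℝ))} :=
        hcompl.symm
    _ ≤ LMprob n p {Y | (1/48:ℝ) * (n:ℝ)^((3:ℝ)+2*α) ≤ ∑ τ ∈ triangles n, TY n α Y τ ^ 2} :=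
        LMprob_mono hp0 hp1 hincl

end S9

open S9 in
theorem stmt9 (ε α : ℝ) (hε : 0 < ε) (hα : 0 < α) (hsmall : 2 * α + ε < 1 / 2) :
    ∃ c : ℝ, 0 < c ∧
      Filter.Tendsto
        (fun n : ℕ => LMprob n ((n : ℝ) ^ (ε - 1))
          {Y | c * (n : ℝ) ^ ((3 : ℝ) + 2 * α) ≤ ∑ τ ∈ triangles n, TY n α Y τ ^ 2})
        Filter.atTop (nhds 1) := by
  refine ⟨1/48, by norm_num, ?_⟩
  have hε1 : ε < 1 := by linarith
  have hrp : ∀ c : ℝ, c < 0 →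
      Filter.Tendsto (fun n : ℕ => (n:ℝ)^c) Filter.atTop (nhds 0) := by
    intro c hc
    have h := (tendsto_rpow_neg_atTop (show (0:ℝ) < -c by linarith)).comp
      (tendsto_natCast_atTop_atTop (R := ℝ))
    simpa [Function.comp_def] using h
  have ht1 := hrp (ε-1) (by linarith)
  have ht2 := hrp (-(1/2)) (by norm_num)
  have ht3 := hrp (2*α+ε-1/2) (by linarith)
  have hL : Filter.Tendsto (fun n : ℕ =>
      1 - 2*((n:ℝ)^(ε-1) + 2*(n:ℝ)^(-(1/2):ℝ)*(24*(n:ℝ)^(2*α+ε-1/2))))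
      Filter.atTop (nhds 1) := by
    have hz : Filter.Tendsto (fun n : ℕ =>
        ((n:ℝ)^(ε-1) + 2*(n:ℝ)^(-(1/2):ℝ)*(24*(n:ℝ)^(2*α+ε-1/2))))
        Filter.atTop (nhds 0) := by
      have h2 := ((tendsto_const_nhds (x := (2:ℝ)) (f := Filter.atTop (α := ℕ))).mul ht2).mul
        ((tendsto_const_nhds (x := (24:ℝ)) (f := Filter.atTop (α := ℕ))).mul ht3)
      have h3 := ht1.add h2
      simpa using h3
    have h4 := (tendsto_const_nhds (x := (1:ℝ)) (f := Filter.atTop (α := ℕ))).sub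
      ((tendsto_const_nhds (x := (2:ℝ)) (f := Filter.atTop (α := ℕ))).mul hz)
    simpa using h4
  have hev : ∀ᶠ n : ℕ in Filter.atTop,
      1 - 2*((n:ℝ)^(ε-1) + 2*(n:ℝ)^(-(1/2):ℝ)*(24*(n:ℝ)^(2*α+ε-1/2)))
        ≤ LMprob n ((n : ℝ) ^ (ε - 1))
            {Y | (1/48 : ℝ) * (n : ℝ) ^ ((3 : ℝ) + 2 * α) ≤ ∑ τ ∈ triangles n, TY n α Y τ ^ 2} := by
    have hevh : ∀ᶠ n : ℕ in Filter.atTop, 24 * (n:ℝ)^(2*α+ε-1/2) ≤ 1/2 := by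
      have h := ht3.eventually_lt_const (show (0:ℝ) < 1/48 by norm_num)
      exact h.mono fun n hn => by linarith
    filter_upwards [Filter.eventually_ge_atTop 4, hevh] with n h4 hh
    exact main_bound hε hα hsmall h4 hh
  have hub : ∀ᶠ n : ℕ in Filter.atTop,
      LMprob n ((n : ℝ) ^ (ε - 1))
          {Y | (1/48 : ℝ) * (n : ℝ) ^ ((3 : ℝ) + 2 * α) ≤ ∑ τ ∈ triangles n, TY n α Y τ ^ 2}
        ≤ 1 := by
    filter_upwards [Filter.eventually_ge_atTop 1] with n h1
    have h1n : (1:ℝ) ≤ (n:ℝ) := by exact_mod_cast h1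
    exact LMprob_le_one (Real.rpow_nonneg (by linarith) _)
      (Real.rpow_le_one_of_one_le_of_nonpos h1n (by linarith)) _
  exact tendsto_of_tendsto_of_tendsto_of_le_of_le' hL tendsto_const_nhds hev hub
end

section
/- Let Ω be a finite set equipped with a probability mass function P (nonnegative weights summing to 1), let T be a nonempty finite set with N = |T|, let M > 0, and let F : Ω × T → ℝ be nonnegative. If Σ_{ω∈Ω} P(ω) · Σ_{τ∈T} min(F(ω,τ), M) ≥ (99/100)·N·M, then the P-probability of the set of ω ∈ Ω such that #{τ ∈ T : F(ω,τ) ≥ M/99} ≥ N/100 is at least 96/100. -/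
open Finset
open scoped Classical

theorem stmt10 {Ω T : Type*} [Fintype Ω] [Fintype T] [Nonempty T]
    (P : Ω → ℝ) (hP : ∀ ω, 0 ≤ P ω) (hPsum : ∑ ω, P ω = 1)
    (M : ℝ) (hM : 0 < M) (F : Ω × T → ℝ) (hF : ∀ ω τ, 0 ≤ F (ω, τ))
    (h : ∑ ω, P ω * ∑ τ, min (F (ω, τ)) M ≥ (99 / 100) * (Fintype.card T : ℝ) * M) :
    ∑ ω ∈ Finset.univ.filter (fun ω : Ω =>
        ((Fintype.card T : ℝ) / 100 ≤
          ((Finset.univ.filter (fun τ : T => M / 99 ≤ F (ω, τ))).card : ℝ))),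
      P ω ≥ 96 / 100 := by
  set N : ℝ := (Fintype.card T : ℝ) with hNdef
  have hN : (1 : ℝ) ≤ N := by
    rw [hNdef]
    exact_mod_cast Fintype.card_pos (α := T)
  set g : Ω → ℝ := fun ω => ∑ τ, min (F (ω, τ)) M with hg
  set pred : Ω → Prop := fun ω : Ω =>
      (N / 100 ≤ ((Finset.univ.filter (fun τ : T => M / 99 ≤ F (ω, τ))).card : ℝ)) with hpred
  have hgub : ∀ ω, g ω ≤ N * M := by
    intro ω
    calc g ω ≤ ∑ _τ : T, M := Finset.sum_le_sum (fun τ _ => min_le_right _ _)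
    _ = N * M := by simp [hNdef, mul_comm]
  have hg0 : ∀ ω, 0 ≤ g ω :=
    fun ω => Finset.sum_nonneg fun τ _ => le_min (hF ω τ) hM.le
  have hbad : ∀ ω, ¬ pred ω → g ω ≤ (199 / 9900) * (N * M) := by
    intro ω hω
    have hsplit := Finset.sum_filter_add_sum_filter_not Finset.univ
      (fun τ : T => M / 99 ≤ F (ω, τ)) (fun τ => min (F (ω, τ)) M)
    have hcard : ((Finset.univ.filter (fun τ : T => M / 99 ≤ F (ω, τ))).card : ℝ) < N / 100 := by
      simpa [hpred] using hω
    have h1 : ∑ τ ∈ Finset.univ.filter (fun τ : T => M / 99 ≤ F (ω, τ)),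
        min (F (ω, τ)) M ≤ (N / 100) * M := by
      calc _ ≤ ∑ _τ ∈ Finset.univ.filter (fun τ : T => M / 99 ≤ F (ω, τ)), M :=
            Finset.sum_le_sum (fun τ _ => min_le_right _ _)
        _ = ((Finset.univ.filter (fun τ : T => M / 99 ≤ F (ω, τ))).card : ℝ) * M := by
            simp [mul_comm]
        _ ≤ (N / 100) * M := by nlinarith
    have h2 : ∑ τ ∈ Finset.univ.filter (fun τ : T => ¬ (M / 99 ≤ F (ω, τ))),
        min (F (ω, τ)) M ≤ N * (M / 99) := by
      calc _ ≤ ∑ _τ ∈ Finset.univ.filter (fun τ : T => ¬ (M / 99 ≤ F (ω, τ))), M / 99 := by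
            refine Finset.sum_le_sum fun τ hτ => ?_
            have : F (ω, τ) < M / 99 := by
              simpa using (Finset.mem_filter.mp hτ).2
            exact le_trans (min_le_left _ _) this.le
        _ = ((Finset.univ.filter (fun τ : T => ¬ (M / 99 ≤ F (ω, τ)))).card : ℝ) * (M / 99) := by
            simp [mul_comm]
        _ ≤ N * (M / 99) := by
            have hc : ((Finset.univ.filter (fun τ : T => ¬ (M / 99 ≤ F (ω, τ)))).card : ℝ) ≤ N := by
              have := Finset.card_filter_le Finset.univ (fun τ : T => ¬ (M / 99 ≤ F (ω, τ)))
              simp only [Finset.card_univ] at this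
              rw [hNdef]
              exact_mod_cast this
            nlinarith
    calc g ω = _ := hsplit.symm
      _ ≤ (N / 100) * M + N * (M / 99) := add_le_add h1 h2
      _ = (199 / 9900) * (N * M) := by ring
  set p : ℝ := ∑ ω ∈ Finset.univ.filter pred, P ω with hp
  have hsplitΩ := Finset.sum_filter_add_sum_filter_not Finset.univ pred P
  rw [hPsum] at hsplitΩ
  have hA : ∑ ω ∈ Finset.univ.filter pred, P ω * g ω ≤ p * (N * M) := by
    rw [hp, Finset.sum_mul]
    refine Finset.sum_le_sum fun ω _ => ?_
    exact mul_le_mul_of_nonneg_left (hgub ω) (hP ω)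
  have hB : ∑ ω ∈ Finset.univ.filter (fun ω => ¬ pred ω), P ω * g ω
      ≤ (1 - p) * ((199 / 9900) * (N * M)) := by
    have : (1 - p) = ∑ ω ∈ Finset.univ.filter (fun ω => ¬ pred ω), P ω := by
      rw [hp]; linarith
    rw [this, Finset.sum_mul]
    refine Finset.sum_le_sum fun ω hω => ?_
    exact mul_le_mul_of_nonneg_left (hbad ω (Finset.mem_filter.mp hω).2) (hP ω)
  have hsum : ∑ ω, P ω * g ω ≤ p * (N * M) + (1 - p) * ((199 / 9900) * (N * M)) := by
    rw [← Finset.sum_filter_add_sum_filter_not Finset.univ pred (fun ω => P ω * g ω)]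
    exact add_le_add hA hB
  have hh : (99 / 100) * N * M ≤ ∑ ω, P ω * g ω := h
  have hNM : 0 < N * M := by positivity
  show p ≥ 96 / 100
  nlinarith [hsum, hh, hNM]
end
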